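/- arXiv:1210.1078 — 6 statements merged into one kernel-verified Lean document; each statement's English description precedes it below -/
import Mathlib

section
/- If m = 2^v d and n = 2d' where d and d' are odd and v ≥ 2, then there is no 1-factorization of the complete multipartite graph K_{m×n} admitting a cyclic group of automorphisms acting sharply transitively on the vertex set. -/
open SimpleGraph

/-- The complete multipartite graph `K_{m×n}` with `m` parts each of size `n`:
two vertices are adjacent iff they lie in different parts. -/
def completeMultipartite (m n : ℕ) : SimpleGraph (Fin m × Fin n) where
  Adj u v := u.1 ≠ v.1
  symm := ⟨fun _ _ h => Ne.symm h⟩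
  loopless := ⟨fun _ h => h rfl⟩

/-- `M` is a 1-factor (perfect matching) of `Γ`: a set of edges of `Γ` such that
every vertex lies in exactly one edge of `M`. -/
def IsOneFactor {V : Type*} (Γ : SimpleGraph V) (M : Set (Sym2 V)) : Prop :=
  M ⊆ Γ.edgeSet ∧ ∀ v : V, ∃! e : Sym2 V, e ∈ M ∧ v ∈ e

/-- `F` is a 1-factorization of `Γ`: a collection of 1-factors such that every
edge of `Γ` lies in exactly one member of `F`. -/
def IsOneFactorization {V : Type*} (Γ : SimpleGraph V) (F : Set (Set (Sym2 V))) : Prop :=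
  (∀ M ∈ F, IsOneFactor Γ M) ∧ ∀ e ∈ Γ.edgeSet, ∃! M : Set (Sym2 V), M ∈ F ∧ e ∈ M

/-- The 1-factorization `F` of `Γ` admits the group `A`, acting on the vertices via `φ`,
as a group of automorphisms mapping factors to factors and acting sharply transitively
on the vertices. -/
def IsSharplyTransitiveOneFactorization {V : Type*} (Γ : SimpleGraph V)
    (A : Type*) [Group A] (φ : A →* Equiv.Perm V) (F : Set (Set (Sym2 V))) : Prop :=
  IsOneFactorization Γ F ∧
  (∀ a : A, ∀ u v : V, Γ.Adj (φ a u) (φ a v) ↔ Γ.Adj u v) ∧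
  (∀ a : A, ∀ M ∈ F, Sym2.map (φ a) '' M ∈ F) ∧
  (∀ u v : V, ∃! a : A, φ a u = v)

/-- `Γ` admits a 1-factorization with `A` as an automorphism group acting sharply
transitively on the vertex set. -/
def HasRegularOneFactorization {V : Type*} (Γ : SimpleGraph V) (A : Type*) [Group A] : Prop :=
  ∃ (φ : A →* Equiv.Perm V) (F : Set (Set (Sym2 V))),
    IsSharplyTransitiveOneFactorization Γ A φ F

section Helpers
open Finset

/-- A fixed-point-free involution on a finset has even cardinality. -/
lemma two_dvd_card_of_fpf {α : Type*} (s : Finset α) (f : α → α)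
    (hmem : ∀ a ∈ s, f a ∈ s) (hinv : ∀ a ∈ s, f (f a) = a)
    (hne : ∀ a ∈ s, f a ≠ a) : 2 ∣ s.card := by
  classical
  have key : ∀ b ∈ s.image (fun a => s(a, f a)),
      (s.filter (fun x => s(x, f x) = b)).card = 2 := by
    intro b hb
    obtain ⟨a, ha, rfl⟩ := Finset.mem_image.mp hb
    have : s.filter (fun x => s(x, f x) = s(a, f a)) = {a, f a} := by
      ext x
      simp only [Finset.mem_filter, Finset.mem_insert, Finset.mem_singleton]
      constructor
      · rintro ⟨hx, he⟩
        rcases Sym2.eq_iff.mp he with ⟨h1, _⟩ | ⟨h1, _⟩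
        · exact Or.inl h1
        · exact Or.inr h1
      · rintro (rfl | rfl)
        · exact ⟨ha, rfl⟩
        · refine ⟨hmem a ha, ?_⟩
          rw [hinv a ha]
          exact Sym2.eq_swap
    rw [this]
    rw [Finset.card_insert_of_notMem (by simp [Ne.symm (hne a ha)]), Finset.card_singleton]
  have := Finset.card_eq_sum_card_fiberwise
    (f := fun a => s(a, f a)) (s := s) (t := s.image (fun a => s(a, f a)))
    (fun x hx => Finset.mem_image_of_mem _ hx)
  rw [this, Finset.sum_congr rfl key, Finset.sum_const, smul_eq_mul]
  exact ⟨_, mul_comm _ _⟩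

/-- Counting through a map with constant fibre size. -/
lemma card_filter_comp {α β : Type*} [Fintype α] [Fintype β] [DecidableEq β] (π : α → β) (k : ℕ)
    (hfib : ∀ b : β, (univ.filter (fun a => π a = b)).card = k) (p : β → Prop) [DecidablePred p] :
    (univ.filter (fun a => p (π a))).card = k * (univ.filter p).card := by
  classical
  have hmaps : ∀ a ∈ univ.filter (fun a => p (π a)), π a ∈ univ.filter p := by
    intro a ha; simp only [mem_filter, mem_univ, true_and] at *; exact ha
  rw [Finset.card_eq_sum_card_fiberwise hmaps]
  have : ∀ b ∈ univ.filter p,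
      ((univ.filter (fun a => p (π a))).filter (fun a => π a = b)).card = k := by
    intro b hb
    simp only [mem_filter, mem_univ, true_and] at hb
    rw [← hfib b]
    congr 1
    ext a
    simp only [mem_filter, mem_univ, true_and]
    constructor
    · rintro ⟨_, h⟩; exact h
    · rintro rfl; exact ⟨hb, rfl⟩
  rw [Finset.sum_congr rfl this, Finset.sum_const, smul_eq_mul, mul_comm]

lemma zmod_invol {N : ℕ} [NeZero N] (x : ZMod N) (hx : x + x = 0) :
    x = 0 ∨ x = ((N / 2 : ℕ) : ZMod N) := by
  have hval : ((x.val + x.val : ℕ) : ZMod N) = 0 := by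
    push_cast [ZMod.natCast_zmod_val]; exact hx
  have hdvd : N ∣ x.val + x.val := (ZMod.natCast_eq_zero_iff _ _).mp hval
  have hlt : x.val < N := ZMod.val_lt x
  have hN : 0 < N := Nat.pos_of_ne_zero (NeZero.ne N)
  rcases hdvd with ⟨c, hc⟩
  have hcle : c < 2 := by
    by_contra h
    push_neg at h
    have : N * 2 ≤ N * c := Nat.mul_le_mul_left N h
    omega
  interval_cases c
  · left
    have : x.val = 0 := by omega
    rw [← ZMod.natCast_zmod_val x, this, Nat.cast_zero]
  · right
    have : x.val = N / 2 := by omega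
    rw [← ZMod.natCast_zmod_val x, this]

lemma two_pow_dvd_addOrderOf {N w : ℕ} [NeZero N] (hw : 2 ^ w ∣ N) (hw0 : w ≠ 0)
    (h2 : (2:ℕ) ∣ N) (x : ZMod N)
    (hodd : ZMod.castHom h2 (ZMod 2) x = 1) :
    2 ^ w ∣ addOrderOf x := by
  have hpw : (2:ℕ) ^ w ≠ 0 := by positivity
  haveI : NeZero (2 ^ w) := ⟨hpw⟩
  set ψ := ZMod.castHom hw (ZMod (2 ^ w)) with hψ
  have h1 : addOrderOf (ψ x) ∣ addOrderOf x := addOrderOf_map_dvd ψ.toAddMonoidHom x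
  have h2w : (2:ℕ) ∣ 2 ^ w := dvd_pow_self 2 hw0
  have hcomp : ZMod.castHom h2w (ZMod 2) (ψ x) = ZMod.castHom h2 (ZMod 2) x := by
    rw [← RingHom.comp_apply, ZMod.castHom_comp]
  have hvv : ZMod.castHom h2w (ZMod 2) (ψ x) = (((ψ x).val : ℕ) : ZMod 2) := by
    rw [ZMod.castHom_apply, ZMod.cast_eq_val]
  have hval_odd : ¬ (2 ∣ (ψ x).val) := by
    intro hdd
    have h0 : (((ψ x).val : ℕ) : ZMod 2) = 0 := (ZMod.natCast_eq_zero_iff _ _).mpr hdd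
    rw [hcomp, hodd] at hvv
    rw [h0] at hvv
    exact one_ne_zero hvv
  have hord : addOrderOf (ψ x) = 2 ^ w := by
    have hh := ZMod.addOrderOf_coe (ψ x).val (n := 2 ^ w) hpw
    rw [ZMod.natCast_zmod_val] at hh
    have hcop : Nat.Coprime (2 ^ w) (ψ x).val :=
      Nat.Coprime.pow_left w (Nat.coprime_two_left.mpr (Nat.odd_iff.mpr (by omega)))
    rw [hh, hcop, Nat.div_one]
  rw [← hord]
  exact h1

theorem core {V : Type} [Fintype V] {N v d d' : ℕ} [NeZero N]
    (hN : N = 2 ^ (v + 1) * (d * d')) (hv : 2 ≤ v) (hd : Odd d) (hd' : Odd d')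
    (hcardV : Fintype.card V = N)
    (Γ : SimpleGraph V)
    (htrans : ∀ a b c : V, ¬ Γ.Adj a b → ¬ Γ.Adj b c → ¬ Γ.Adj a c)
    (T : ZMod N → V → V)
    (hT0 : ∀ u, T 0 u = u)
    (hTadd : ∀ x y u, T (x + y) u = T x (T y u))
    (hsharp : ∀ u w : V, ∃! x : ZMod N, T x u = w)
    (hinva : ∀ (g : ZMod N) (u w : V), Γ.Adj (T g u) (T g w) ↔ Γ.Adj u w)
    (F : Set (Set (Sym2 V)))
    (hfac : ∀ M ∈ F, IsOneFactor Γ M)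
    (hedge : ∀ e ∈ Γ.edgeSet, ∃! M, M ∈ F ∧ e ∈ M)
    (hmap : ∀ (g : ZMod N), ∀ M ∈ F, Sym2.map (T g) '' M ∈ F)
    (v₀ : V)
    (hHcard : Nat.card {x : ZMod N // ¬ Γ.Adj (T x v₀) v₀} = 2 * d') :
    False := by

  classical
  have hN0 : N ≠ 0 := NeZero.ne N
  have h2N : (2:ℕ) ∣ N := by
    rw [hN]; exact Dvd.dvd.mul_right (dvd_pow_self 2 (Nat.succ_ne_zero v)) _
  -- the difference function
  choose dif hdif hdifu using hsharp
  have hTcomm : ∀ (x y : ZMod N) u, T x (T y u) = T y (T x u) := by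
    intro x y u; rw [← hTadd, ← hTadd, add_comm]
  have hTcancel : ∀ (g : ZMod N) u w, T g u = T g w → u = w := by
    intro g u w h
    have h2 := congrArg (T (-g)) h
    rwa [← hTadd, ← hTadd, neg_add_cancel, hT0, hT0] at h2
  -- the subgroup H of "same part" translations
  have hH0 : ¬ Γ.Adj (T (0 : ZMod N) v₀) v₀ := by rw [hT0]; exact Γ.irrefl
  have hHadd : ∀ x y : ZMod N, ¬ Γ.Adj (T x v₀) v₀ → ¬ Γ.Adj (T y v₀) v₀ →
      ¬ Γ.Adj (T (x + y) v₀) v₀ := by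
    intro x y hx hy
    have h1 : ¬ Γ.Adj (T x (T y v₀)) (T y v₀) := by
      rw [hTcomm]
      intro hc
      exact hx ((hinva y (T x v₀) v₀).mp hc)
    have h2 : ¬ Γ.Adj (T (x + y) v₀) (T y v₀) := by rwa [hTadd]
    exact htrans _ _ _ h2 hy
  have hHneg : ∀ x : ZMod N, ¬ Γ.Adj (T x v₀) v₀ → ¬ Γ.Adj (T (-x) v₀) v₀ := by
    intro x hx hc
    apply hx
    have h1 : Γ.Adj (T (-x) v₀) (T (-x) (T x v₀)) := by
      rw [← hTadd, neg_add_cancel, hT0]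
      exact hc
    exact ((hinva (-x) v₀ (T x v₀)).mp h1).symm
  set Hs : AddSubgroup (ZMod N) :=
    { carrier := {x | ¬ Γ.Adj (T x v₀) v₀}
      zero_mem' := hH0
      add_mem' := fun {a b} ha hb => hHadd a b ha hb
      neg_mem' := fun {a} ha => hHneg a ha } with hHs
  have hHmem : ∀ x : ZMod N, x ∈ Hs ↔ ¬ Γ.Adj (T x v₀) v₀ := fun x => Iff.rfl
  -- adjacency iff difference outside H
  have hadj_iff : ∀ u w : V, Γ.Adj u w ↔ dif u w ∉ Hs := by
    intro u w
    have ha : T (dif v₀ u) v₀ = u := hdif v₀ u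
    have hx : T (dif u w) u = w := hdif u w
    have hw : T (dif v₀ u) (T (dif u w) v₀) = w := by
      rw [hTcomm, ha]; exact hx
    have key : Γ.Adj u w ↔ Γ.Adj v₀ (T (dif u w) v₀) := by
      have h3 := hinva (dif v₀ u) v₀ (T (dif u w) v₀)
      rw [hw, ha] at h3
      exact h3
    rw [key, hHmem, not_not]
    exact ⟨fun h => h.symm, fun h => h.symm⟩
  -- identification of vertices with ZMod N
  have he_inj : ∀ x y : ZMod N, T x v₀ = T y v₀ → x = y := by
    intro x y h
    exact (hdifu v₀ (T y v₀) x h).trans (hdifu v₀ (T y v₀) y rfl).symm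
  -- cardinality of H
  have hHcard' : Fintype.card {x : ZMod N // x ∈ Hs} = 2 * d' := by
    rw [← Nat.card_eq_fintype_card, ← hHcard]
    rfl
  have hHfil : (univ.filter (fun x : ZMod N => x ∈ Hs)).card = 2 * d' := by
    rw [← Fintype.card_subtype]
    exact hHcard'
  -- parity homomorphism
  set p2 : ZMod N →+* ZMod 2 := ZMod.castHom h2N (ZMod 2) with hp2def
  have hZ2 : ∀ b : ZMod 2, b = 0 ∨ b = 1 := by decide
  have hZ2' : ∀ b : ZMod 2, ¬ b = 0 ↔ b = 1 := by decide
  -- all elements of H are even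
  have hordH : ∀ x ∈ Hs, addOrderOf x ∣ 2 * d' := by
    intro x hx
    have h1 : addOrderOf (⟨x, hx⟩ : Hs) ∣ Fintype.card Hs := addOrderOf_dvd_card
    rw [hHcard'] at h1
    rwa [AddSubgroup.addOrderOf_mk] at h1
  have h2pow : (2:ℕ) ^ (v + 1) ∣ N := by rw [hN]; exact dvd_mul_right _ _
  have hodd_order : ∀ x : ZMod N, p2 x = 1 → 2 ^ (v + 1) ∣ addOrderOf x := by
    intro x hx
    exact two_pow_dvd_addOrderOf h2pow (Nat.succ_ne_zero v) h2N x hx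
  have hH_even : ∀ x ∈ Hs, p2 x = 0 := by
    intro x hx
    rcases hZ2 (p2 x) with h | h
    · exact h
    · exfalso
      have h1 := (hodd_order x h).trans (hordH x hx)
      obtain ⟨dd, hdd⟩ := hd'
      have h8 : (2:ℕ) ^ 3 ∣ 2 ^ (v + 1) := pow_dvd_pow 2 (by omega)
      have := h8.trans h1
      omega
  -- the involution is in H
  have hiota : ((N / 2 : ℕ) : ZMod N) ∈ Hs := by
    haveI : Fact (Nat.Prime 2) := ⟨Nat.prime_two⟩
    obtain ⟨a, ha⟩ := exists_prime_addOrderOf_dvd_card (G := Hs) 2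
      (by rw [hHcard']; exact dvd_mul_right 2 d')
    have hval : addOrderOf (a : ZMod N) = 2 := by
      rwa [AddSubgroup.addOrderOf_coe]
    have h2a : (a : ZMod N) + a = 0 := by
      have h := addOrderOf_nsmul_eq_zero (a : ZMod N)
      rw [hval] at h
      rwa [two_nsmul] at h
    have hane : (a : ZMod N) ≠ 0 := by
      intro h
      rw [h] at hval
      simp at hval
    rcases zmod_invol _ h2a with h | h
    · exact absurd h hane
    · rw [← h]; exact a.2

  -- partner function machinery
  have hpa_ex : ∀ M ∈ F, ∀ u : V, ∃ w, w ≠ u ∧ s(u, w) ∈ M ∧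
      ∀ w', w' ≠ u → s(u, w') ∈ M → w' = w := by
    intro M hM u
    obtain ⟨ed, ⟨hedM, hu⟩, huniq⟩ := (hfac M hM).2 u
    have hspec := Sym2.other_spec hu
    have hadj : Γ.Adj u (Sym2.Mem.other hu) := by
      rw [← SimpleGraph.mem_edgeSet, hspec]
      exact (hfac M hM).1 hedM
    refine ⟨Sym2.Mem.other hu, fun h => ?_, ?_, ?_⟩
    · rw [h] at hadj; exact Γ.irrefl hadj
    · rw [hspec]; exact hedM
    · intro w' hne hmem
      have h1 : s(u, w') = ed := huniq _ ⟨hmem, Sym2.mem_mk_left u w'⟩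
      rw [← hspec] at h1
      rcases Sym2.eq_iff.mp h1 with ⟨_, h⟩ | ⟨h1', h2'⟩
      · exact h
      · exact absurd h2' hne
  choose! pa hpa_ne hpa_mem hpa_uniq using hpa_ex
  have hpa_adj : ∀ M ∈ F, ∀ u : V, Γ.Adj u (pa M u) := by
    intro M hM u
    rw [← SimpleGraph.mem_edgeSet]
    exact (hfac M hM).1 (hpa_mem M hM u)
  have hpa_invol : ∀ M ∈ F, ∀ u : V, pa M (pa M u) = u := by
    intro M hM u
    have hmem : s(pa M u, u) ∈ M := by rw [Sym2.eq_swap]; exact hpa_mem M hM u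
    exact (hpa_uniq M hM (pa M u) u (fun h => hpa_ne M hM u h.symm) hmem).symm
  -- the translation action on edge sets
  set act : ZMod N → Set (Sym2 V) → Set (Sym2 V) := fun g M => Sym2.map (T g) '' M with hact
  have hact0 : ∀ M, act 0 M = M := by
    intro M
    have hT0' : T (0 : ZMod N) = id := funext hT0
    show Sym2.map (T 0) '' M = M
    rw [hT0', Sym2.map_id, Set.image_id]
  have hactadd : ∀ (g h : ZMod N) M, act (g + h) M = act g (act h M) := by
    intro g h M
    show Sym2.map (T (g + h)) '' M = Sym2.map (T g) '' (Sym2.map (T h) '' M)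
    rw [Set.image_image]
    apply Set.image_congr'
    intro z
    rw [Sym2.map_map]
    have : T g ∘ T h = T (g + h) := by
      funext u
      show T g (T h u) = T (g + h) u
      rw [← hTadd]
    rw [this]
  have hactF : ∀ (g : ZMod N), ∀ M ∈ F, act g M ∈ F := hmap
  have hpa_equiv : ∀ M ∈ F, ∀ (g : ZMod N) (u : V), pa (act g M) (T g u) = T g (pa M u) := by
    intro M hM g u
    have h1 : s(T g u, T g (pa M u)) ∈ act g M := by
      refine ⟨s(u, pa M u), hpa_mem M hM u, ?_⟩
      rw [Sym2.map_pair_eq]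
    have hne : T g (pa M u) ≠ T g u := fun h => hpa_ne M hM u (hTcancel g _ _ h)
    exact (hpa_uniq (act g M) (hactF g M hM) (T g u) _ hne h1).symm
  -- difference is invariant under translation
  have hdif_inv : ∀ (g : ZMod N) (u w : V), dif (T g u) (T g w) = dif u w := by
    intro g u w
    refine (hdifu (T g u) (T g w) (dif u w) ?_).symm
    show T (dif u w) (T g u) = T g w
    rw [hTcomm, hdif u w]
  -- the finite set of factors
  have hFfin : F.Finite := Set.toFinite F
  set FF : Finset (Set (Sym2 V)) := hFfin.toFinset with hFF
  have hFFmem : ∀ M, M ∈ FF ↔ M ∈ F := fun M => Set.Finite.mem_toFinset _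
  -- the counting function
  set VC : Set (Sym2 V) → ℕ :=
    fun M => (univ.filter (fun u : V => p2 (dif u (pa M u)) = 0)).card with hVC
  -- the target count
  set cs : Finset (ZMod N) := univ.filter (fun x : ZMod N => p2 x = 0 ∧ x ∉ Hs) with hcs
  -- Sum I : total count
  have hsumI : ∑ M ∈ FF, VC M = N * cs.card := by
    have hswap : ∑ M ∈ FF, VC M
        = ∑ u : V, (FF.filter (fun M => p2 (dif u (pa M u)) = 0)).card := by
      simp only [hVC, Finset.card_filter]
      exact Finset.sum_comm
    rw [hswap]
    have hu : ∀ u : V, (FF.filter (fun M => p2 (dif u (pa M u)) = 0)).card = cs.card := by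
      intro u
      apply Finset.card_bij (i := fun M _ => dif u (pa M u))
      · intro M hMf
        obtain ⟨hMFF, hMp⟩ := Finset.mem_filter.mp hMf
        have hMF : M ∈ F := (hFFmem M).mp hMFF
        refine Finset.mem_filter.mpr ⟨Finset.mem_univ _, hMp, ?_⟩
        exact (hadj_iff u (pa M u)).mp (hpa_adj M hMF u)
      · intro M hMf M' hMf' heq
        obtain ⟨hMFF, _⟩ := Finset.mem_filter.mp hMf
        obtain ⟨hMFF', _⟩ := Finset.mem_filter.mp hMf'
        have hMF : M ∈ F := (hFFmem M).mp hMFF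
        have hMF' : M' ∈ F := (hFFmem M').mp hMFF'
        have hpp : pa M u = pa M' u := by
          have h1 : T (dif u (pa M u)) u = pa M u := hdif u (pa M u)
          have h2 : T (dif u (pa M' u)) u = pa M' u := hdif u (pa M' u)
          rw [← h1, ← h2, heq]
        have hE : s(u, pa M u) ∈ Γ.edgeSet := (hfac M hMF).1 (hpa_mem M hMF u)
        obtain ⟨Mu, _, huniq⟩ := hedge _ hE
        have e1 : M = Mu := huniq M ⟨hMF, hpa_mem M hMF u⟩
        have e2 : M' = Mu := huniq M' ⟨hMF', by rw [hpp]; exact hpa_mem M' hMF' u⟩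
        rw [e1, e2]
      · intro x hx
        obtain ⟨-, hx0, hxH⟩ := Finset.mem_filter.mp hx
        have hdx : dif u (T x u) = x := (hdifu u (T x u) x rfl).symm
        have hAdj : Γ.Adj u (T x u) := by
          rw [hadj_iff, hdx]
          exact hxH
        obtain ⟨M, ⟨hMF, hMmem⟩, -⟩ := hedge _ (Γ.mem_edgeSet.mpr hAdj)
        have hne : T x u ≠ u := fun h => Γ.irrefl (h ▸ hAdj)
        have hpw : T x u = pa M u := hpa_uniq M hMF u (T x u) hne hMmem
        refine ⟨M, Finset.mem_filter.mpr ⟨(hFFmem M).mpr hMF, ?_⟩, ?_⟩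
        · rw [← hpw, hdx]; exact hx0
        · rw [← hpw, hdx]
    rw [Finset.sum_congr rfl (fun u _ => hu u), Finset.sum_const, smul_eq_mul,
      Finset.card_univ, hcardV]
  -- counting the even non-H differences
  set N2 : ℕ := 2 ^ v * (d * d') with hN2def
  have hN2 : N = 2 * N2 := by rw [hN, hN2def]; ring
  have hfib10 : (univ.filter (fun x : ZMod N => p2 x = 1)).card
      = (univ.filter (fun x : ZMod N => p2 x = 0)).card := by
    apply Finset.card_bij (i := fun x _ => x + 1)
    · intro x hx
      obtain ⟨-, hx1⟩ := Finset.mem_filter.mp hx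
      refine Finset.mem_filter.mpr ⟨Finset.mem_univ _, ?_⟩
      rw [map_add, hx1, map_one]
      decide
    · intro x _ y _ h
      exact add_right_cancel h
    · intro y hy
      obtain ⟨-, hy0⟩ := Finset.mem_filter.mp hy
      refine ⟨y - 1, Finset.mem_filter.mpr ⟨Finset.mem_univ _, ?_⟩, by ring⟩
      rw [map_sub, hy0, map_one]
      decide
  have hsplit0 : (univ.filter (fun x : ZMod N => p2 x = 0)).card
      + (univ.filter (fun x : ZMod N => p2 x = 1)).card = N := by
    have h1 := Finset.card_filter_add_card_filter_not
      (s := (univ : Finset (ZMod N))) (p := fun x => p2 x = 0)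
    have h2 : (univ : Finset (ZMod N)).filter (fun x => ¬ p2 x = 0)
        = univ.filter (fun x : ZMod N => p2 x = 1) := by
      apply Finset.filter_congr
      intro x _
      exact hZ2' (p2 x)
    rw [h2] at h1
    rw [h1, Finset.card_univ, ZMod.card]
  have hE0 : (univ.filter (fun x : ZMod N => p2 x = 0)).card = N2 := by omega
  have hcsplit := Finset.card_filter_add_card_filter_not
    (s := (univ.filter (fun x : ZMod N => p2 x = 0))) (p := fun x => x ∈ Hs)
  have hcH : (univ.filter (fun x : ZMod N => p2 x = 0)).filter (fun x => x ∈ Hs)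
      = univ.filter (fun x : ZMod N => x ∈ Hs) := by
    rw [Finset.filter_filter]
    apply Finset.filter_congr
    intro x _
    constructor
    · rintro ⟨-, h⟩; exact h
    · intro h; exact ⟨hH_even x h, h⟩
  have hcc : (univ.filter (fun x : ZMod N => p2 x = 0)).filter (fun x => ¬ x ∈ Hs) = cs := by
    rw [Finset.filter_filter]
  have hc : cs.card + 2 * d' = N2 := by
    rw [hcH, hcc, hHfil, hE0] at hcsplit
    omega
  -- the key divisibility per factor (proved later)
  have hkey : ∀ M ∈ F, ∃ k,
      (univ.image (fun g : ZMod N => act g M)).card * VC M = 4 * N * k := by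
    intro M hM
    -- the stabilizer of M
    set S : AddSubgroup (ZMod N) :=
      { carrier := {g : ZMod N | act g M = M}
        zero_mem' := hact0 M
        add_mem' := fun {a b} ha hb => by
          show act (a + b) M = M
          rw [hactadd]
          show act a (act b M) = M
          rw [show act b M = M from hb]
          exact ha
        neg_mem' := fun {a} ha => by
          show act (-a) M = M
          have h := hactadd (-a) a M
          rw [neg_add_cancel, hact0, show act a M = M from ha] at h
          exact h.symm } with hS
    haveI : Fintype (ZMod N ⧸ S) := Fintype.ofFinite _
    set sc := Fintype.card S with hsc
    set rc := Fintype.card (ZMod N ⧸ S) with hrc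
    have hrs : rc * sc = N := by
      have h := AddSubgroup.card_eq_card_quotient_mul_card_addSubgroup S
      rw [Nat.card_eq_fintype_card, Nat.card_eq_fintype_card, Nat.card_eq_fintype_card,
        ZMod.card] at h
      exact h.symm
    have hπ_eq : ∀ x y : ZMod N,
        (QuotientAddGroup.mk x : ZMod N ⧸ S) = QuotientAddGroup.mk y ↔ x - y ∈ S :=
      fun x y => QuotientAddGroup.eq_iff_sub_mem
    have hπ_out : ∀ q : ZMod N ⧸ S, QuotientAddGroup.mk q.out = q :=
      fun q => QuotientAddGroup.out_eq' q
    -- the partner map on ZMod N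
    set ρ : ZMod N → ZMod N := fun x => dif v₀ (pa M (T x v₀)) with hρ
    have hρ_spec : ∀ x, T (ρ x) v₀ = pa M (T x v₀) := fun x => hdif _ _
    have hρ_equiv : ∀ (x : ZMod N), ∀ t ∈ S, ρ (x + t) = ρ x + t := by
      intro x t ht
      apply he_inj
      rw [hρ_spec]
      have h1 : T (x + t) v₀ = T t (T x v₀) := by rw [add_comm, hTadd]
      rw [h1]
      have h2 := hpa_equiv M hM t (T x v₀)
      rw [show act t M = M from ht] at h2
      rw [h2, ← hρ_spec x, ← hTadd, add_comm t (ρ x)]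
    have hρ_invol : ∀ x, ρ (ρ x) = x := by
      intro x
      apply he_inj
      rw [hρ_spec, hρ_spec, hpa_invol M hM]
    have hρ_dif : ∀ x, dif (T x v₀) (pa M (T x v₀)) = ρ x - x := by
      intro x
      refine (hdifu _ _ _ ?_).symm
      show T (ρ x - x) (T x v₀) = pa M (T x v₀)
      rw [← hTadd, sub_add_cancel, hρ_spec]
    have hρ_notH : ∀ x, ρ x - x ∉ Hs := by
      intro x hmem
      have hA := hpa_adj M hM (T x v₀)
      rw [hadj_iff, hρ_dif] at hA
      exact hA hmem
    have hρ_ne : ∀ x, ρ x ≠ x := by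
      intro x h
      apply hρ_notH x
      rw [h, sub_self]
      exact Hs.zero_mem
    have hρ_notS : ∀ x, ρ x - x ∉ S := by
      intro x ht
      have h1 : x + (ρ x - x) = ρ x := by ring
      have h2 := hρ_equiv x (ρ x - x) ht
      rw [h1, hρ_invol] at h2
      have htt : (ρ x - x) + (ρ x - x) = 0 := by linear_combination - h2
      rcases zmod_invol _ htt with h0 | hι
      · exact hρ_ne x (sub_eq_zero.mp h0)
      · exact hρ_notH x (hι ▸ hiota)
    -- the induced involution on the quotient
    set μQ : (ZMod N ⧸ S) → (ZMod N ⧸ S) := fun q => QuotientAddGroup.mk (ρ q.out) with hμQ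
    have hμQ_mk : ∀ x : ZMod N,
        μQ (QuotientAddGroup.mk x) = QuotientAddGroup.mk (ρ x) := by
      intro x
      show QuotientAddGroup.mk (ρ ((QuotientAddGroup.mk (s := S) x).out)) = _
      have hout : ((QuotientAddGroup.mk (s := S) x).out) - x ∈ S :=
        (hπ_eq _ _).mp (hπ_out _)
      have hxx : (QuotientAddGroup.mk (s := S) x).out
          = x + (((QuotientAddGroup.mk (s := S) x).out) - x) := by ring
      rw [hxx, hρ_equiv x _ hout]
      apply (hπ_eq _ _).mpr
      have : (ρ x + (((QuotientAddGroup.mk (s := S) x).out) - x)) - ρ x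
          = ((QuotientAddGroup.mk (s := S) x).out) - x := by ring
      rw [this]
      exact hout
    have hπsurj : ∀ q : ZMod N ⧸ S, ∃ x : ZMod N, (QuotientAddGroup.mk x : ZMod N ⧸ S) = q :=
      fun q => ⟨q.out, hπ_out q⟩
    have hμQ_invol : ∀ q, μQ (μQ q) = q := by
      intro q
      obtain ⟨x, rfl⟩ := hπsurj q
      simp only [hμQ_mk, hρ_invol]
    have hμQ_ne : ∀ q, μQ q ≠ q := by
      intro q h
      obtain ⟨x, rfl⟩ := hπsurj q
      rw [hμQ_mk] at h
      exact hρ_notS x ((hπ_eq _ _).mp h)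
    -- cosets have cardinality sc
    have hcoset : ∀ z : ZMod N,
        (univ.filter (fun x : ZMod N => x - z ∈ S)).card = sc := by
      intro z
      have hbij : (univ.filter (fun x : ZMod N => x - z ∈ S)).card
          = (univ.filter (fun t : ZMod N => t ∈ S)).card := by
        apply Finset.card_bij (i := fun x _ => x - z)
        · intro x hx
          exact Finset.mem_filter.mpr ⟨Finset.mem_univ _, (Finset.mem_filter.mp hx).2⟩
        · intro a _ b _ h
          exact sub_left_inj.mp h
        · intro t ht
          refine ⟨t + z, Finset.mem_filter.mpr ⟨Finset.mem_univ _, ?_⟩, by rw [add_sub_cancel_right]⟩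
          rw [add_sub_cancel_right]
          exact (Finset.mem_filter.mp ht).2
      rw [hbij, hsc]
      exact (Fintype.card_subtype _).symm
    -- the orbit of M has cardinality N / sc
    have horbcard : (univ.image (fun g : ZMod N => act g M)).card * sc = N := by
      have hmaps : ∀ g : ZMod N, g ∈ univ →
          act g M ∈ univ.image (fun g : ZMod N => act g M) :=
        fun g hg => Finset.mem_image_of_mem _ hg
      have h1 := Finset.card_eq_sum_card_fiberwise hmaps
      have h2 : ∀ b ∈ univ.image (fun g : ZMod N => act g M),
          (univ.filter (fun g : ZMod N => act g M = b)).card = sc := by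
        intro b hb
        obtain ⟨g₀, -, rfl⟩ := Finset.mem_image.mp hb
        have hiff : ∀ g : ZMod N, act g M = act g₀ M ↔ g - g₀ ∈ S := by
          intro g
          constructor
          · intro h
            show act (g - g₀) M = M
            rw [sub_eq_neg_add, hactadd, h, ← hactadd, neg_add_cancel, hact0]
          · intro h
            have hgm : act (g - g₀) M = M := h
            have h3 : act g M = act g₀ (act (g - g₀) M) := by
              rw [← hactadd, add_sub_cancel]
            rw [h3, hgm]
        rw [Finset.filter_congr (fun g _ => hiff g)]
        exact hcoset g₀
      rw [Finset.sum_congr rfl h2, Finset.sum_const, smul_eq_mul, Finset.card_univ,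
        ZMod.card] at h1
      exact h1.symm
    -- fibres of the quotient map
    have hπfib : ∀ q : ZMod N ⧸ S,
        (univ.filter (fun x : ZMod N => (QuotientAddGroup.mk x : ZMod N ⧸ S) = q)).card = sc := by
      intro q
      have hcongr : ∀ x : ZMod N, ((QuotientAddGroup.mk x : ZMod N ⧸ S) = q) ↔ x - q.out ∈ S := by
        intro x
        have h := hπ_eq x q.out
        rw [hπ_out] at h
        exact h
      rw [Finset.filter_congr (fun x _ => hcongr x)]
      exact hcoset q.out
    -- VC M expressed on ZMod N
    have hVW : VC M = (univ.filter (fun x : ZMod N => p2 (ρ x - x) = 0)).card := by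
      show (univ.filter (fun u : V => p2 (dif u (pa M u)) = 0)).card = _
      apply Finset.card_bij (i := fun u _ => dif v₀ u)
      · intro u hu
        obtain ⟨-, hu0⟩ := Finset.mem_filter.mp hu
        refine Finset.mem_filter.mpr ⟨Finset.mem_univ _, ?_⟩
        have he : T (dif v₀ u) v₀ = u := hdif v₀ u
        have h := hρ_dif (dif v₀ u)
        rw [he] at h
        rw [← h]
        exact hu0
      · intro a _ b _ h
        have ha : T (dif v₀ a) v₀ = a := hdif v₀ a
        have hb : T (dif v₀ b) v₀ = b := hdif v₀ b
        rw [← ha, ← hb, h]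
      · intro x hx
        obtain ⟨-, hx0⟩ := Finset.mem_filter.mp hx
        have he : dif v₀ (T x v₀) = x := (hdifu v₀ (T x v₀) x rfl).symm
        refine ⟨T x v₀, Finset.mem_filter.mpr ⟨Finset.mem_univ _, ?_⟩, he⟩
        rw [hρ_dif x]
        exact hx0
    by_cases hS2 : ∀ t ∈ S, p2 t = 0
    · -- the parity descends to the quotient
      set χ : (ZMod N ⧸ S) → ZMod 2 := fun q => p2 q.out with hχ
      have hχ_mk : ∀ x : ZMod N, χ (QuotientAddGroup.mk x) = p2 x := by
        intro x
        show p2 (QuotientAddGroup.mk (s := S) x).out = p2 x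
        have hout : ((QuotientAddGroup.mk (s := S) x).out) - x ∈ S :=
          (hπ_eq _ _).mp (hπ_out _)
        have h := hS2 _ hout
        rw [map_sub] at h
        exact sub_eq_zero.mp h
      set Af := univ.filter (fun q : ZMod N ⧸ S => χ (μQ q) = χ q) with hAfd
      set A0 := univ.filter (fun q : ZMod N ⧸ S => χ q = 0 ∧ χ (μQ q) = 0) with hA0d
      set A1 := univ.filter (fun q : ZMod N ⧸ S => χ q = 1 ∧ χ (μQ q) = 1) with hA1d
      set B01 := univ.filter (fun q : ZMod N ⧸ S => χ q = 0 ∧ χ (μQ q) = 1) with hB01d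
      set B10 := univ.filter (fun q : ZMod N ⧸ S => χ q = 1 ∧ χ (μQ q) = 0) with hB10d
      have hsplitAf : Af.card = A0.card + A1.card := by
        have h := Finset.card_filter_add_card_filter_not (s := Af)
          (p := fun q => χ q = 0)
        have e0 : Af.filter (fun q => χ q = 0) = A0 := by
          ext q
          simp only [hAfd, hA0d, Finset.mem_filter, Finset.mem_univ, true_and]
          constructor
          · rintro ⟨hf, h0⟩
            exact ⟨h0, hf.trans h0⟩
          · rintro ⟨h0, hm⟩
            exact ⟨hm.trans h0.symm, h0⟩
        have e1 : Af.filter (fun q => ¬ χ q = 0) = A1 := by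
          ext q
          simp only [hAfd, hA1d, Finset.mem_filter, Finset.mem_univ, true_and]
          constructor
          · rintro ⟨hf, h0⟩
            have h1 : χ q = 1 := (hZ2' _).mp h0
            exact ⟨h1, hf.trans h1⟩
          · rintro ⟨h0, hm⟩
            exact ⟨hm.trans h0.symm, (hZ2' _).mpr h0⟩
        rw [e0, e1] at h
        omega
      have h2A0 : 2 ∣ A0.card := by
        apply two_dvd_card_of_fpf A0 μQ
        · intro q hq
          obtain ⟨-, h0, hm⟩ := Finset.mem_filter.mp hq
          refine Finset.mem_filter.mpr ⟨Finset.mem_univ _, hm, ?_⟩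
          rw [hμQ_invol]
          exact h0
        · intro q _
          exact hμQ_invol q
        · intro q _
          exact hμQ_ne q
      have hBeq : B01.card = B10.card := by
        apply Finset.card_bij (i := fun q _ => μQ q)
        · intro q hq
          obtain ⟨-, h0, hm⟩ := Finset.mem_filter.mp hq
          refine Finset.mem_filter.mpr ⟨Finset.mem_univ _, hm, ?_⟩
          rw [hμQ_invol]
          exact h0
        · intro a _ b _ h
          have := congrArg μQ h
          rwa [hμQ_invol, hμQ_invol] at this
        · intro q hq
          obtain ⟨-, h0, hm⟩ := Finset.mem_filter.mp hq
          refine ⟨μQ q, Finset.mem_filter.mpr ⟨Finset.mem_univ _, hm, ?_⟩, hμQ_invol q⟩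
          rw [hμQ_invol]
          exact h0
      have hadd1 : ∀ q : ZMod N ⧸ S,
          χ (q + QuotientAddGroup.mk 1) = χ q + 1 := by
        intro q
        obtain ⟨x, rfl⟩ := hπsurj q
        have hsum : (QuotientAddGroup.mk x + QuotientAddGroup.mk 1 : ZMod N ⧸ S)
            = QuotientAddGroup.mk (x + 1) := rfl
        rw [hsum, hχ_mk, hχ_mk, map_add, map_one]
      have hfib01Q : (univ.filter (fun q : ZMod N ⧸ S => χ q = 0)).card
          = (univ.filter (fun q : ZMod N ⧸ S => χ q = 1)).card := by
        apply Finset.card_bij (i := fun q _ => q + QuotientAddGroup.mk 1)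
        · intro q hq
          obtain ⟨-, h0⟩ := Finset.mem_filter.mp hq
          refine Finset.mem_filter.mpr ⟨Finset.mem_univ _, ?_⟩
          rw [hadd1, h0, zero_add]
        · intro a _ b _ h
          exact add_right_cancel h
        · intro q' hq'
          obtain ⟨-, h1⟩ := Finset.mem_filter.mp hq'
          refine ⟨q' - QuotientAddGroup.mk 1,
            Finset.mem_filter.mpr ⟨Finset.mem_univ _, ?_⟩, by rw [sub_add_cancel]⟩
          have h := hadd1 (q' - QuotientAddGroup.mk 1)
          rw [sub_add_cancel, h1] at h
          have hz : ∀ b : ZMod 2, 1 = b + 1 → b = 0 := by decide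
          exact hz _ h
      have hsplit0Q : (univ.filter (fun q : ZMod N ⧸ S => χ q = 0)).card
          = A0.card + B01.card := by
        have h := Finset.card_filter_add_card_filter_not
          (s := univ.filter (fun q : ZMod N ⧸ S => χ q = 0)) (p := fun q => χ (μQ q) = 0)
        have e0 : (univ.filter (fun q : ZMod N ⧸ S => χ q = 0)).filter
            (fun q => χ (μQ q) = 0) = A0 := by
          rw [Finset.filter_filter]
        have e1 : (univ.filter (fun q : ZMod N ⧸ S => χ q = 0)).filter
            (fun q => ¬ χ (μQ q) = 0) = B01 := by
          rw [Finset.filter_filter]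
          apply Finset.filter_congr
          intro q _
          constructor
          · rintro ⟨h0, hm⟩
            exact ⟨h0, (hZ2' _).mp hm⟩
          · rintro ⟨h0, hm⟩
            exact ⟨h0, (hZ2' _).mpr hm⟩
        rw [e0, e1] at h
        omega
      have hsplit1Q : (univ.filter (fun q : ZMod N ⧸ S => χ q = 1)).card
          = A1.card + B10.card := by
        have h := Finset.card_filter_add_card_filter_not
          (s := univ.filter (fun q : ZMod N ⧸ S => χ q = 1)) (p := fun q => χ (μQ q) = 1)
        have e0 : (univ.filter (fun q : ZMod N ⧸ S => χ q = 1)).filter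
            (fun q => χ (μQ q) = 1) = A1 := by
          rw [Finset.filter_filter]
        have e1 : (univ.filter (fun q : ZMod N ⧸ S => χ q = 1)).filter
            (fun q => ¬ χ (μQ q) = 1) = B10 := by
          rw [Finset.filter_filter]
          apply Finset.filter_congr
          intro q _
          constructor
          · rintro ⟨h0, hm⟩
            rcases hZ2 (χ (μQ q)) with h | h
            · exact ⟨h0, h⟩
            · exact absurd h hm
          · rintro ⟨h0, hm⟩
            refine ⟨h0, ?_⟩
            rw [hm]
            decide
        rw [e0, e1] at h
        omega
      have h4Af : 4 ∣ Af.card := by omega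
      have hVQ : VC M = sc * Af.card := by
        rw [hVW]
        have hpred : ∀ x : ZMod N, (p2 (ρ x - x) = 0)
            ↔ (χ (μQ (QuotientAddGroup.mk x)) = χ (QuotientAddGroup.mk x)) := by
          intro x
          rw [hμQ_mk, hχ_mk, hχ_mk, map_sub]
          exact sub_eq_zero
        rw [Finset.filter_congr (fun x _ => hpred x)]
        exact card_filter_comp (fun x : ZMod N => (QuotientAddGroup.mk x : ZMod N ⧸ S))
          sc hπfib (fun q => χ (μQ q) = χ q)
      obtain ⟨k, hk⟩ := h4Af
      refine ⟨k, ?_⟩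
      rw [hVQ, hk]
      calc (univ.image (fun g : ZMod N => act g M)).card * (sc * (4 * k))
          = ((univ.image (fun g : ZMod N => act g M)).card * sc) * (4 * k) := by ring
        _ = N * (4 * k) := by rw [horbcard]
        _ = 4 * N * k := by ring
    · exfalso
      push_neg at hS2
      obtain ⟨t, htS, htne⟩ := hS2
      have ht1 : p2 t = 1 := (hZ2' _).mp htne
      have hto := hodd_order t ht1
      have htdvd : addOrderOf t ∣ sc := by
        have h1 : addOrderOf (⟨t, htS⟩ : S) ∣ Fintype.card S := addOrderOf_dvd_card
        rwa [AddSubgroup.addOrderOf_mk] at h1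
      have h2s : 2 ^ (v + 1) ∣ sc := hto.trans htdvd
      obtain ⟨u, hu⟩ := h2s
      have hq : rc * u = d * d' := by
        have h1 : rc * (2 ^ (v + 1) * u) = 2 ^ (v + 1) * (d * d') := by
          rw [← hu, hrs, hN]
        have hp : 0 < 2 ^ (v + 1) := by positivity
        apply Nat.eq_of_mul_eq_mul_left hp
        rw [← h1]
        ring
      have h2r : 2 ∣ rc := by
        have h := two_dvd_card_of_fpf (univ : Finset (ZMod N ⧸ S)) μQ
          (fun a _ => Finset.mem_univ _) (fun a _ => hμQ_invol a) (fun a _ => hμQ_ne a)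
        rwa [Finset.card_univ] at h
      have h2dd : 2 ∣ d * d' := h2r.trans ⟨u, hq.symm⟩
      have hodd : Odd (d * d') := hd.mul hd'
      rw [Nat.odd_iff] at hodd
      omega

  -- orbit decomposition
  set orb : Set (Sym2 V) → Finset (Set (Sym2 V)) :=
    fun M => univ.image (fun g : ZMod N => act g M) with horb
  have horb_self : ∀ M, M ∈ orb M :=
    fun M => Finset.mem_image.mpr ⟨0, Finset.mem_univ _, hact0 M⟩
  have horb_eq : ∀ M (g : ZMod N), orb (act g M) = orb M := by
    intro M g
    apply Finset.ext
    intro M'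
    simp only [horb, Finset.mem_image]
    constructor
    · rintro ⟨g', -, rfl⟩
      exact ⟨g' + g, Finset.mem_univ _, hactadd g' g M⟩
    · rintro ⟨g', -, rfl⟩
      refine ⟨g' - g, Finset.mem_univ _, ?_⟩
      rw [← hactadd, sub_add_cancel]
  have hVconst : ∀ M ∈ F, ∀ g : ZMod N, VC (act g M) = VC M := by
    intro M hM g
    have hbij : (univ.filter (fun u : V => p2 (dif u (pa M u)) = 0)).card
        = (univ.filter (fun u : V => p2 (dif u (pa (act g M) u)) = 0)).card := by
      apply Finset.card_bij (i := fun u _ => T g u)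
      · intro u hu
        obtain ⟨-, hu0⟩ := Finset.mem_filter.mp hu
        refine Finset.mem_filter.mpr ⟨Finset.mem_univ _, ?_⟩
        rw [hpa_equiv M hM g u, hdif_inv]
        exact hu0
      · intro a _ b _ h
        exact hTcancel g a b h
      · intro u' hu'
        obtain ⟨-, hu0⟩ := Finset.mem_filter.mp hu'
        have hTg : T g (T (-g) u') = u' := by
          rw [← hTadd, add_neg_cancel, hT0]
        refine ⟨T (-g) u', Finset.mem_filter.mpr ⟨Finset.mem_univ _, ?_⟩, hTg⟩
        rw [← hTg] at hu0
        rw [hpa_equiv M hM g (T (-g) u'), hdif_inv] at hu0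
        exact hu0
    exact hbij.symm
  have hfibs := Finset.sum_fiberwise_of_maps_to
    (g := orb) (t := FF.image orb) (fun M hM => Finset.mem_image_of_mem orb hM) VC
  have hOdvd : ∀ O ∈ FF.image orb, (4 * N) ∣ ∑ M ∈ FF.filter (fun M => orb M = O), VC M := by
    intro O hO
    obtain ⟨M₀, hM₀FF, rfl⟩ := Finset.mem_image.mp hO
    have hM₀ : M₀ ∈ F := (hFFmem _).mp hM₀FF
    have hfil : FF.filter (fun M => orb M = orb M₀) = orb M₀ := by
      ext M'
      simp only [Finset.mem_filter]
      constructor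
      · rintro ⟨hFF', he⟩
        rw [← he]
        exact horb_self M'
      · intro h
        obtain ⟨g, -, rfl⟩ := Finset.mem_image.mp h
        exact ⟨(hFFmem _).mpr (hactF g M₀ hM₀), horb_eq M₀ g⟩
    rw [hfil]
    have hconst : ∀ M' ∈ orb M₀, VC M' = VC M₀ := by
      intro M' h
      obtain ⟨g, -, rfl⟩ := Finset.mem_image.mp h
      exact hVconst M₀ hM₀ g
    rw [Finset.sum_congr rfl hconst, Finset.sum_const, smul_eq_mul]
    obtain ⟨k, hk⟩ := hkey M₀ hM₀
    exact ⟨k, hk⟩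
  have h4N : (4 * N) ∣ N * cs.card := by
    rw [← hsumI, ← hfibs]
    exact Finset.dvd_sum hOdvd
  have h4c : 4 ∣ cs.card := by
    rcases h4N with ⟨t, ht⟩
    refine ⟨t, ?_⟩
    apply Nat.eq_of_mul_eq_mul_left (Nat.pos_of_ne_zero hN0)
    rw [ht]; ring
  have h4N2 : 4 ∣ N2 := by
    obtain ⟨w, hw⟩ : ∃ w, v = w + 2 := ⟨v - 2, by omega⟩
    refine ⟨2 ^ w * (d * d'), ?_⟩
    rw [hN2def, hw, pow_add]
    ring
  obtain ⟨k2, hk2⟩ := hd'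
  omega

end Helpers

/-- If `m = 2^v d` and `n = 2 d'` with `d, d'` odd and `v ≥ 2`, there is no cyclic
1-factorization of `K_{m×n}`. -/
theorem no_cyclic_oneFactorization_of_two_pow (v d d' : ℕ)
    (hv : 2 ≤ v) (hd : Odd d) (hd' : Odd d') :
    ¬ HasRegularOneFactorization (completeMultipartite (2 ^ v * d) (2 * d'))
        (Multiplicative (ZMod ((2 ^ v * d) * (2 * d')))) := by
  classical
  rintro ⟨φ, F, ⟨⟨hfac, hedge⟩, hadj, hmapF, hsharp⟩⟩
  have hd0 : 0 < d := hd.pos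
  have hd'0 : 0 < d' := hd'.pos
  have hN0 : (2 ^ v * d) * (2 * d') ≠ 0 := by positivity
  haveI : NeZero ((2 ^ v * d) * (2 * d')) := ⟨hN0⟩
  set Γ := completeMultipartite (2 ^ v * d) (2 * d') with hΓ
  set T : ZMod ((2 ^ v * d) * (2 * d')) → (Fin (2 ^ v * d) × Fin (2 * d')) → (Fin (2 ^ v * d) × Fin (2 * d')) :=
    fun x u => φ (Multiplicative.ofAdd x) u with hT
  have hT0 : ∀ u, T 0 u = u := by
    intro u
    show φ (Multiplicative.ofAdd (0 : ZMod ((2 ^ v * d) * (2 * d')))) u = u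
    rw [ofAdd_zero, map_one]
    rfl
  have hTadd : ∀ (x y : ZMod ((2 ^ v * d) * (2 * d'))) u, T (x + y) u = T x (T y u) := by
    intro x y u
    show φ (Multiplicative.ofAdd (x + y)) u = φ (Multiplicative.ofAdd x) (φ (Multiplicative.ofAdd y) u)
    rw [ofAdd_add, map_mul]
    rfl
  have hsharp' : ∀ u w, ∃! x : ZMod ((2 ^ v * d) * (2 * d')), T x u = w := by
    intro u w
    obtain ⟨a, ha, hau⟩ := hsharp u w
    refine ⟨Multiplicative.toAdd a, ?_, ?_⟩
    · show φ (Multiplicative.ofAdd (Multiplicative.toAdd a)) u = w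
      rwa [ofAdd_toAdd]
    · intro y hy
      have h := hau (Multiplicative.ofAdd y) hy
      have := congrArg Multiplicative.toAdd h
      rwa [toAdd_ofAdd] at this
  have hv₀1 : 0 < 2 ^ v * d := by positivity
  have hv₀2 : 0 < 2 * d' := by positivity
  set v₀ : Fin (2 ^ v * d) × Fin (2 * d') := (⟨0, hv₀1⟩, ⟨0, hv₀2⟩) with hv₀
  -- cardinality of the stabilizer "part" subgroup
  have hHcard : Nat.card {x : ZMod ((2 ^ v * d) * (2 * d')) // ¬ Γ.Adj (T x v₀) v₀} = 2 * d' := by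
    have hbij : Function.Bijective
        (fun x : {x : ZMod ((2 ^ v * d) * (2 * d')) // ¬ Γ.Adj (T x v₀) v₀} =>
          (⟨T x.1 v₀, not_not.mp x.2⟩ : {u : Fin (2 ^ v * d) × Fin (2 * d') // u.1 = v₀.1})) := by
      constructor
      · rintro ⟨x, hx⟩ ⟨y, hy⟩ h
        have h1 : T x v₀ = T y v₀ := congrArg Subtype.val h
        obtain ⟨a, -, hau⟩ := hsharp' v₀ (T y v₀)
        have e1 := hau x h1
        have e2 := hau y rfl
        exact Subtype.ext (e1.trans e2.symm)
      · rintro ⟨u, hu⟩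
        obtain ⟨x, hx, -⟩ := hsharp' v₀ u
        refine ⟨⟨x, ?_⟩, ?_⟩
        · show ¬ (T x v₀).1 ≠ v₀.1
          rw [hx, hu]
          exact fun h => h rfl
        · exact Subtype.ext hx
    rw [Nat.card_congr (Equiv.ofBijective _ hbij)]
    have he2 : {u : Fin (2 ^ v * d) × Fin (2 * d') // u.1 = v₀.1} ≃ Fin (2 * d') := by
      refine ⟨fun u => u.1.2, fun j => ⟨(v₀.1, j), rfl⟩, ?_, ?_⟩
      · rintro ⟨⟨a, b⟩, h⟩
        simp only at h
        subst h
        rfl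
      · intro j
        rfl
    rw [Nat.card_congr he2, Nat.card_eq_fintype_card, Fintype.card_fin]
  exact core (v := v) (d := d) (d' := d')
    (by ring) hv hd hd'
    (by rw [Fintype.card_prod, Fintype.card_fin, Fintype.card_fin])
    Γ
    (by
      intro a b c hab hbc
      show ¬ a.1 ≠ c.1
      have h1 : a.1 = b.1 := not_not.mp hab
      have h2 : b.1 = c.1 := not_not.mp hbc
      rw [h1, h2]
      exact fun h => h rfl)
    T hT0 hTadd hsharp'
    (fun g u w => hadj (Multiplicative.ofAdd g) u w)
    F hfac hedge
    (fun g M hM => hmapF (Multiplicative.ofAdd g) M hM)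
    v₀ hHcard
end

section
/- If m = p^v where p is a prime with p ≡ 1 (mod 4) and v ≥ 1, then there is no 1-factorization of the complete multipartite graph K_{m×2} admitting a cyclic group of automorphisms acting sharply transitively on the vertex set. -/
open SimpleGraph

/-- A fixed-point-free involution on an odd finite set is impossible. -/
lemma aux_invol {m : ℕ} (hm : Odd m) (σ : Fin m → Fin m)
    (h1 : ∀ i, σ (σ i) = i) (h2 : ∀ i, σ i ≠ i) : False := by
  classical
  have key : (Finset.univ : Finset (Fin m)).card =
      ∑ e ∈ Finset.univ.image (fun i : Fin m => s(i, σ i)),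
        (Finset.univ.filter (fun j : Fin m => s(j, σ j) = e)).card :=
    Finset.card_eq_sum_card_fiberwise
      (fun x _ => Finset.mem_image_of_mem _ (Finset.mem_univ x))
  have hfib : ∀ e ∈ Finset.univ.image (fun i : Fin m => s(i, σ i)),
      (Finset.univ.filter (fun j : Fin m => s(j, σ j) = e)).card = 2 := by
    intro e he
    obtain ⟨i, -, rfl⟩ := Finset.mem_image.mp he
    have hset : Finset.univ.filter (fun j : Fin m => s(j, σ j) = s(i, σ i)) = {i, σ i} := by
      ext j
      simp only [Finset.mem_filter, Finset.mem_univ, true_and, Finset.mem_insert,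
        Finset.mem_singleton, Sym2.eq_iff]
      constructor
      · rintro (⟨hj, -⟩ | ⟨hj, -⟩)
        · exact Or.inl hj
        · exact Or.inr hj
      · rintro (rfl | rfl)
        · exact Or.inl ⟨rfl, rfl⟩
        · exact Or.inr ⟨rfl, h1 i⟩
    rw [hset, Finset.card_pair (fun h => h2 i h.symm)]
  rw [Finset.sum_congr rfl hfib, Finset.sum_const, smul_eq_mul] at key
  have : Even m := by
    refine ⟨(Finset.univ.image (fun i : Fin m => s(i, σ i))).card, ?_⟩
    simpa [two_mul, mul_comm] using key
  exact (Nat.not_even_iff_odd.mpr hm) this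

/-- In `ZMod (p^v * 2)` the only element of additive order two is `p^v`. -/
lemma aux_two {p v : ℕ} (hp2 : 2 ≤ p) (x : ZMod (p ^ v * 2)) (hx : x ≠ 0)
    (h2 : x + x = 0) : x = ((p ^ v : ℕ) : ZMod (p ^ v * 2)) := by
  have hpv : 0 < p ^ v := pow_pos (by omega) v
  haveI : NeZero (p ^ v * 2) := ⟨by positivity⟩
  have hxv : ((x.val : ℕ) : ZMod (p ^ v * 2)) = x := ZMod.natCast_rightInverse x
  have hcast : ((x.val + x.val : ℕ) : ZMod (p ^ v * 2)) = 0 := by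
    push_cast [hxv]; exact h2
  have hdvd : (p ^ v * 2) ∣ (x.val + x.val) :=
    (ZMod.natCast_eq_zero_iff _ _).mp hcast
  have hlt : x.val < p ^ v * 2 := ZMod.val_lt x
  have hx0 : x.val ≠ 0 := fun h => hx (by rw [← hxv, h]; simp)
  obtain ⟨k, hk⟩ := hdvd
  have hbound : p ^ v * 2 * k < p ^ v * 2 * 2 := by omega
  have hk2 : k < 2 := Nat.lt_of_mul_lt_mul_left hbound
  have hk1 : k ≠ 0 := by rintro rfl; omega
  have hval : x.val = p ^ v := by
    have : k = 1 := by omega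
    subst this; omega
  rw [← hxv, hval]

/-- Any element of additive order `p` in `ZMod (p^v * 2)` generates the subgroup
containing `2 * p^(v-1)`. -/
lemma aux_p {p v : ℕ} (hp : p.Prime) (hv : 1 ≤ v) (x : ZMod (p ^ v * 2)) (hx : x ≠ 0)
    (hpx : ((p * x.val : ℕ) : ZMod (p ^ v * 2)) = 0) :
    ∃ k' : ℕ, k' • x = ((2 * p ^ (v - 1) : ℕ) : ZMod (p ^ v * 2)) := by
  have hp2 : 2 ≤ p := hp.two_le
  have hq : 0 < p ^ (v - 1) := pow_pos (by omega) _
  have hsplit : p ^ v = p ^ (v - 1) * p := by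
    rw [← pow_succ]; congr 1; omega
  haveI : NeZero (p ^ v * 2) := ⟨by positivity⟩
  have hxv : ((x.val : ℕ) : ZMod (p ^ v * 2)) = x := ZMod.natCast_rightInverse x
  have hdvd : (p ^ v * 2) ∣ p * x.val := (ZMod.natCast_eq_zero_iff _ _).mp hpx
  have hdvd2 : (2 * p ^ (v - 1)) ∣ x.val := by
    obtain ⟨c, hc⟩ := hdvd
    refine ⟨c, ?_⟩
    have h' : p * x.val = p * (2 * p ^ (v - 1) * c) := by rw [hc, hsplit]; ring
    exact Nat.eq_of_mul_eq_mul_left (by omega) h'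
  obtain ⟨k, hk⟩ := hdvd2
  have hlt : x.val < p ^ v * 2 := ZMod.val_lt x
  have hkp : k < p := by
    by_contra hge
    push_neg at hge
    have : p ^ v * 2 ≤ x.val := by
      calc p ^ v * 2 = 2 * p ^ (v - 1) * p := by rw [hsplit]; ring
      _ ≤ 2 * p ^ (v - 1) * k := by exact Nat.mul_le_mul_left _ hge
      _ = x.val := hk.symm
    omega
  have hk0 : k ≠ 0 := by
    intro h; apply hx; rw [← hxv, hk, h, Nat.mul_zero]; simp
  have hcop : Nat.Coprime k p :=
    Nat.Coprime.symm (hp.coprime_iff_not_dvd.mpr (fun hd => by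
      have := Nat.le_of_dvd (Nat.pos_of_ne_zero hk0) hd; omega))
  obtain ⟨k', -, hk'⟩ := Nat.exists_mul_mod_eq_one_of_coprime hcop hp.one_lt
  refine ⟨k', ?_⟩
  have hdm := Nat.div_add_mod (k * k') p
  set s := k * k' / p with hs_def
  have hs : k * k' = p * s + 1 := by omega
  calc k' • x = ((k' * x.val : ℕ) : ZMod (p ^ v * 2)) := by
        rw [nsmul_eq_mul]
        conv_lhs => rw [← hxv]
        push_cast
        ring
    _ = ((2 * p ^ (v - 1) * (k * k') : ℕ) : ZMod (p ^ v * 2)) := by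
        rw [hk]; congr 1; ring
    _ = ((2 * p ^ (v - 1) + (p ^ v * 2) * s : ℕ) : ZMod (p ^ v * 2)) := by
        rw [hs]; congr 1; rw [hsplit]; ring
    _ = ((2 * p ^ (v - 1) : ℕ) : ZMod (p ^ v * 2)) := by
        rw [Nat.cast_add, Nat.cast_mul (p ^ v * 2) s, ZMod.natCast_self, zero_mul, add_zero]









set_option maxHeartbeats 1000000 in
theorem no_cyclic_oneFactorization_of_prime_pow' (p v : ℕ)
    (hp : p.Prime) (hp4 : p % 4 = 1) (hv : 1 ≤ v)
    (aux_invol : ∀ {m : ℕ}, Odd m → ∀ (σ : Fin m → Fin m),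
      (∀ i, σ (σ i) = i) → (∀ i, σ i ≠ i) → False)
    (aux_two : ∀ (x : ZMod (p ^ v * 2)), x ≠ 0 → x + x = 0 →
      x = ((p ^ v : ℕ) : ZMod (p ^ v * 2)))
    (aux_p : ∀ (x : ZMod (p ^ v * 2)), x ≠ 0 →
      ((p * x.val : ℕ) : ZMod (p ^ v * 2)) = 0 →
      ∃ k' : ℕ, k' • x = ((2 * p ^ (v - 1) : ℕ) : ZMod (p ^ v * 2))) :
    ¬ HasRegularOneFactorization (completeMultipartite (p ^ v) 2)
        (Multiplicative (ZMod (p ^ v * 2))) := by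
  rintro ⟨φ, F, ⟨⟨hfac, hcov⟩, hadj, hmaps, hreg⟩⟩
  classical
  have hp2 : 2 ≤ p := hp.two_le
  have hpodd : p % 2 = 1 := by omega
  have hpv_pos : 0 < p ^ v := pow_pos (by omega) v
  have hq1 : 0 < p ^ (v - 1) := pow_pos (by omega) _
  have hsplit : p ^ v = p ^ (v - 1) * p := by rw [← pow_succ]; congr 1; omega
  haveI : NeZero (p ^ v * 2) := ⟨by positivity⟩
  set Γ := completeMultipartite (p ^ v) 2 with hΓ
  have uniq : ∀ (u : Fin (p ^ v) × Fin 2) (a b : Multiplicative (ZMod (p ^ v * 2))),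
      φ a u = φ b u → a = b := fun u a b hab => (hreg u (φ b u)).unique hab rfl
  have hAdj : ∀ u x : Fin (p ^ v) × Fin 2, Γ.Adj u x ↔ u.1 ≠ x.1 := fun _ _ => by rw [hΓ]; exact Iff.rfl
  set w0 : Fin (p ^ v) × Fin 2 := (⟨0, hpv_pos⟩, 0) with hw0def
  set f : Fin (p ^ v) × Fin 2 → Fin (p ^ v) × Fin 2 := fun u => (u.1, u.2 + 1) with hfdef
  have hfin2 : ∀ b : Fin 2, b + 1 ≠ b := by decide
  have hfin2' : ∀ b : Fin 2, b + 1 + 1 = b := by decide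
  have hfin2'' : ∀ b c : Fin 2, c = b ∨ c = b + 1 := by decide
  have hfne : ∀ u, f u ≠ u := fun u h => hfin2 u.2 (congrArg Prod.snd h)
  have hff : ∀ u, f (f u) = u := fun u => Prod.ext rfl (hfin2' u.2)
  have hnonadj : ∀ u x, ¬ Γ.Adj u x ↔ (x = u ∨ x = f u) := by
    intro u x
    rw [hAdj, not_ne_iff]
    constructor
    · intro h1
      rcases hfin2'' u.2 x.2 with h2 | h2
      · exact Or.inl (Prod.ext h1.symm h2)
      · exact Or.inr (Prod.ext h1.symm h2)
    · rintro (rfl | rfl)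
      · rfl
      · rfl
  -- τ acts as the "partner" map f
  obtain ⟨a0, ha0, -⟩ := hreg w0 (f w0)
  have hcomm : ∀ (a b : Multiplicative (ZMod (p ^ v * 2))) (x : Fin (p ^ v) × Fin 2),
      φ a (φ b x) = φ b (φ a x) := by
    intro a b x
    rw [← Equiv.Perm.mul_apply, ← Equiv.Perm.mul_apply, ← map_mul, ← map_mul, mul_comm a b]
  have hequiv : ∀ b, φ b (f w0) = f (φ b w0) := by
    intro b
    have h1 : ¬ Γ.Adj w0 (f w0) := (hnonadj w0 (f w0)).mpr (Or.inr rfl)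
    have h2 : ¬ Γ.Adj (φ b w0) (φ b (f w0)) := fun h => h1 ((hadj b w0 (f w0)).mp h)
    rcases (hnonadj _ _).mp h2 with h3 | h3
    · exact absurd ((φ b).injective h3) (hfne w0)
    · exact h3
  have hptr : ∀ x, φ a0 x = f x := by
    intro x
    obtain ⟨b, hb, -⟩ := hreg w0 x
    rw [← hb, hcomm a0 b w0, ha0, hequiv b]
  have ha0ne : a0 ≠ 1 := by
    intro h
    have h2 := hptr w0
    rw [h, map_one, Equiv.Perm.one_apply] at h2
    exact hfne w0 h2.symm
  have ha0sq : a0 * a0 = 1 := by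
    apply uniq w0
    rw [map_mul, Equiv.Perm.mul_apply, hptr, hptr, hff, map_one, Equiv.Perm.one_apply]
  set τ : Multiplicative (ZMod (p ^ v * 2)) :=
    Multiplicative.ofAdd ((p ^ v : ℕ) : ZMod (p ^ v * 2)) with hτdef
  have ha0τ : a0 = τ := by
    have hx : a0.toAdd ≠ 0 := fun h => ha0ne (by rw [← ofAdd_toAdd a0, h]; rfl)
    have h2 : a0.toAdd + a0.toAdd = 0 := by
      have h3 := congrArg Multiplicative.toAdd ha0sq
      simpa using h3
    have h4 := aux_two a0.toAdd hx h2
    rw [← ofAdd_toAdd a0, h4, hτdef]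
  have hτ : ∀ x, φ τ x = f x := ha0τ ▸ hptr
  -- the element δ of order p
  set dd : ZMod (p ^ v * 2) := ((2 * p ^ (v - 1) : ℕ) : ZMod (p ^ v * 2)) with hdd
  set δ : Multiplicative (ZMod (p ^ v * 2)) := Multiplicative.ofAdd dd with hδdef
  have hddne : dd ≠ 0 := by
    rw [hdd, Ne, ZMod.natCast_eq_zero_iff]
    intro hdvd
    have hle := Nat.le_of_dvd (by omega) hdvd
    rw [hsplit] at hle
    nlinarith [hq1]
  have hδne1 : δ ≠ 1 := by
    intro h
    have h1 := congrArg Multiplicative.toAdd h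
    simp only [hδdef, toAdd_ofAdd, toAdd_one] at h1
    exact hddne h1
  have hvals : dd.val = 2 * p ^ (v - 1) := by
    rw [hdd]; exact ZMod.val_cast_of_lt (by nlinarith)
  have hδτ : δ ≠ τ := by
    intro h
    have h1 : dd = ((p ^ v : ℕ) : ZMod (p ^ v * 2)) := by
      have h2 := congrArg Multiplicative.toAdd h
      simpa [hδdef, hτdef] using h2
    have h2 := congrArg ZMod.val h1
    rw [hvals, ZMod.val_cast_of_lt (by omega)] at h2
    rw [hsplit] at h2
    have h3 : p = 2 := by
      have h4 : p ^ (v - 1) * 2 = p ^ (v - 1) * p := by linarith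
      have := Nat.eq_of_mul_eq_mul_left hq1 h4
      omega
    omega
  have hδδ : δ * δ ≠ 1 := by
    intro h
    have h1 : dd + dd = 0 := by
      have h2 := congrArg Multiplicative.toAdd h
      simpa [hδdef] using h2
    rw [hdd] at h1
    have h3 : (((2 * p ^ (v - 1)) + (2 * p ^ (v - 1)) : ℕ) : ZMod (p ^ v * 2)) = 0 := by
      push_cast
      exact_mod_cast h1
    have hdvd := (ZMod.natCast_eq_zero_iff _ _).mp h3
    have hle := Nat.le_of_dvd (by omega) hdvd
    have hp3 : 3 ≤ p := by omega
    rw [hsplit] at hle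
    nlinarith [hq1, hp3]
  have hδp : δ ^ p = 1 := by
    have hsm : (p : ℕ) • dd = 0 := by
      rw [hdd, nsmul_eq_mul, ← Nat.cast_mul,
        show p * (2 * p ^ (v - 1)) = p ^ v * 2 by rw [hsplit]; ring, ZMod.natCast_self]
    apply Multiplicative.toAdd.injective
    rw [toAdd_pow]
    simpa [hδdef] using hsm
  -- the edge e0 and its factor M0
  have hadjδ : Γ.Adj w0 (φ δ w0) := by
    by_contra h
    rcases (hnonadj _ _).mp h with h1 | h1
    · exact hδne1 (uniq w0 δ 1 (by rw [h1, map_one, Equiv.Perm.one_apply]))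
    · refine hδτ (uniq w0 δ τ ?_)
      rw [h1, hτ w0]
  have he0 : s(w0, φ δ w0) ∈ Γ.edgeSet := Γ.mem_edgeSet.mpr hadjδ
  obtain ⟨M0, ⟨hM0F, hM0e⟩, -⟩ := hcov _ he0
  -- composition of images
  have himg : ∀ a b : Multiplicative (ZMod (p ^ v * 2)),
      Sym2.map (φ a) '' (Sym2.map (φ b) '' M0) = Sym2.map (φ (a * b)) '' M0 := by
    intro a b
    rw [map_mul, Equiv.Perm.coe_mul, Sym2.map_comp, Set.image_comp]
  have stab_pow : ∀ g : Multiplicative (ZMod (p ^ v * 2)), Sym2.map (φ g) '' M0 = M0 →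
      ∀ k : ℕ, Sym2.map (φ (g ^ k)) '' M0 = M0 := by
    intro g hg k
    induction k with
    | zero => rw [pow_zero, map_one, Equiv.Perm.coe_one, Sym2.map_id, Set.image_id]
    | succ k ih => rw [pow_succ, ← himg, hg, ih]
  -- M0 has a nontrivial stabilizer
  have exist_g : ∃ g : Multiplicative (ZMod (p ^ v * 2)),
      g ≠ 1 ∧ Sym2.map (φ g) '' M0 = M0 := by
    by_contra hno
    push_neg at hno
    have hMa : ∀ a, Sym2.map (φ a) '' M0 ∈ F := fun a => hmaps a M0 hM0F
    have hfa : ∀ a : Multiplicative (ZMod (p ^ v * 2)),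
        ∃ e, e ∈ Sym2.map (φ a) '' M0 ∧ w0 ∈ e := fun a => ((hfac _ (hMa a)).2 w0).exists
    choose E hE1 hE2 using hfa
    set ψ : Multiplicative (ZMod (p ^ v * 2)) → Fin (p ^ v) × Fin 2 :=
      fun a => Sym2.Mem.other' (hE2 a) with hψdef
    have hψe : ∀ a, s(w0, ψ a) = E a := fun a => Sym2.other_spec' (hE2 a)
    have hEedge : ∀ a, E a ∈ Γ.edgeSet := fun a => (hfac _ (hMa a)).1 (hE1 a)
    have hψadj : ∀ a, Γ.Adj w0 (ψ a) := by
      intro a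
      have h1 := hEedge a
      rw [← hψe a] at h1
      exact Γ.mem_edgeSet.mp h1
    have hψinj : Function.Injective ψ := by
      intro a b hab
      have hEab : E a = E b := by rw [← hψe a, ← hψe b, hab]
      have hfact_eq : Sym2.map (φ a) '' M0 = Sym2.map (φ b) '' M0 :=
        (hcov (E a) (hEedge a)).unique ⟨hMa a, hE1 a⟩ ⟨hMa b, by rw [hEab]; exact hE1 b⟩
      have h1 : Sym2.map (φ (a⁻¹ * b)) '' M0 = M0 := by
        rw [← himg, ← hfact_eq, himg, inv_mul_cancel, map_one, Equiv.Perm.coe_one,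
          Sym2.map_id, Set.image_id]
      rcases eq_or_ne (a⁻¹ * b) 1 with he | hne1
      · exact inv_mul_eq_one.mp he
      · exact absurd h1 (hno _ hne1)
    have hβ : Function.Bijective (fun a : Multiplicative (ZMod (p ^ v * 2)) => φ a w0) :=
      ⟨fun a b hab => uniq w0 a b hab, fun x => (hreg w0 x).exists⟩
    have hcard : Fintype.card (Multiplicative (ZMod (p ^ v * 2))) =
        Fintype.card (Fin (p ^ v) × Fin 2) := Fintype.card_of_bijective hβ
    have hw0r : w0 ∉ Set.range ψ := by
      rintro ⟨a, ha⟩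
      exact Γ.loopless.irrefl w0 (ha ▸ hψadj a)
    have hlt := Fintype.card_lt_of_injective_of_notMem ψ hψinj hw0r
    omega
  obtain ⟨g, hg1, hgstab⟩ := exist_g
  -- order analysis
  have hcardG : Fintype.card (Multiplicative (ZMod (p ^ v * 2))) = p ^ v * 2 :=
    (Fintype.card_congr Multiplicative.toAdd).trans (ZMod.card _)
  have hord : orderOf g ∣ p ^ v * 2 := by
    have h1 := orderOf_dvd_card (x := g)
    rwa [hcardG] at h1
  have hn1 : orderOf g ≠ 1 := fun h => hg1 (orderOf_eq_one_iff.mp h)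
  have hn1pos : 0 < orderOf g := orderOf_pos g
  obtain ⟨q, hqdef⟩ : ∃ q, q = (orderOf g).minFac := ⟨_, rfl⟩
  have hqprime : q.Prime := by rw [hqdef]; exact Nat.minFac_prime hn1
  have hqdvd : q ∣ orderOf g := by rw [hqdef]; exact Nat.minFac_dvd _
  obtain ⟨h, hhdef⟩ : ∃ h, h = g ^ (orderOf g / q) := ⟨_, rfl⟩
  have hstabh : ∀ k : ℕ, Sym2.map (φ (h ^ k)) '' M0 = M0 := by
    intro k
    rw [hhdef, ← pow_mul]
    exact stab_pow g hgstab _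
  have hhq : h ^ q = 1 := by
    rw [hhdef, ← pow_mul, Nat.div_mul_cancel hqdvd, pow_orderOf_eq_one]
  have hh1 : h ≠ 1 := by
    intro hcon
    rw [hhdef] at hcon
    have hd := orderOf_dvd_of_pow_eq_one hcon
    have hlt : orderOf g / q < orderOf g := Nat.div_lt_self hn1pos hqprime.one_lt
    have hpos : 0 < orderOf g / q := Nat.div_pos (Nat.le_of_dvd hn1pos hqdvd) hqprime.pos
    exact absurd (Nat.le_of_dvd hpos hd) (by omega)
  have hq2p : q = 2 ∨ q = p := by
    have hqN : q ∣ p ^ v * 2 := hqdvd.trans hord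
    rcases (Nat.Prime.dvd_mul hqprime).mp hqN with h' | h'
    · exact Or.inr ((Nat.prime_dvd_prime_iff_eq hqprime hp).mp (hqprime.dvd_of_dvd_pow h'))
    · exact Or.inl ((Nat.prime_dvd_prime_iff_eq hqprime Nat.prime_two).mp h')
  -- no factor is invariant under τ
  have noτ : Sym2.map (φ τ) '' M0 ≠ M0 := by
    intro hstabτ
    have hM0fac := hfac M0 hM0F
    have hex : ∀ i : Fin (p ^ v),
        ∃ e, e ∈ M0 ∧ ((i, (0 : Fin 2)) : Fin (p ^ v) × Fin 2) ∈ e :=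
      fun i => (hM0fac.2 _).exists
    choose Ed hEd1 hEd2 using hex
    have huniqe : ∀ (x : Fin (p ^ v) × Fin 2) (e e' : Sym2 (Fin (p ^ v) × Fin 2)),
        e ∈ M0 → x ∈ e → e' ∈ M0 → x ∈ e' → e = e' := fun x e e' h1 h2 h3 h4 =>
      (hM0fac.2 x).unique ⟨h1, h2⟩ ⟨h3, h4⟩
    set ot : Fin (p ^ v) → Fin (p ^ v) × Fin 2 := fun i => Sym2.Mem.other' (hEd2 i) with hotdef
    have hot : ∀ i, s(((i, (0 : Fin 2)) : Fin (p ^ v) × Fin 2), ot i) = Ed i :=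
      fun i => Sym2.other_spec' (hEd2 i)
    have hotadj : ∀ i, Γ.Adj (i, (0 : Fin 2)) (ot i) := by
      intro i
      have h1 := hM0fac.1 (hEd1 i)
      rw [← hot i] at h1
      exact Γ.mem_edgeSet.mp h1
    have hotne : ∀ j, ot j ≠ ((j, (0 : Fin 2)) : Fin (p ^ v) × Fin 2) := by
      intro j
      show Sym2.Mem.other' (hEd2 j) ≠ ((j, (0 : Fin 2)) : Fin (p ^ v) × Fin 2)
      rw [← Sym2.other_eq_other']
      exact Sym2.other_ne (Γ.not_isDiag_of_mem_edgeSet (hM0fac.1 (hEd1 j))) (hEd2 j)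
    set σ : Fin (p ^ v) → Fin (p ^ v) := fun i => (ot i).1 with hσdef
    have hσne : ∀ i, σ i ≠ i := by
      intro i hcon
      exact ((hAdj _ _).mp (hotadj i)) hcon.symm
    have hfin2''' : ∀ b : Fin 2, b = 0 ∨ b = 1 := by decide
    have hσσ : ∀ i, σ (σ i) = i := by
      intro i
      rcases hfin2''' (ot i).2 with h0 | h0
      · have hoti : ot i = ((σ i, (0 : Fin 2)) : Fin (p ^ v) × Fin 2) := Prod.ext rfl h0
        have hm : ot i ∈ Ed i := by rw [← hot i]; exact Sym2.mem_mk_right _ _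
        have hEd_eq : Ed (σ i) = Ed i :=
          huniqe (σ i, 0) _ _ (hEd1 (σ i)) (hEd2 (σ i)) (hEd1 i) (hoti ▸ hm)
        have hmem2 : ot (σ i) ∈ Ed i := by
          rw [← hEd_eq, ← hot (σ i)]
          exact Sym2.mem_mk_right _ _
        rw [← hot i, hoti, Sym2.mem_iff] at hmem2
        rcases hmem2 with h' | h'
        · show (ot (σ i)).1 = i
          rw [h']
        · exact absurd h' (hotne (σ i))
      · have hoti : ot i = ((σ i, (1 : Fin 2)) : Fin (p ^ v) × Fin 2) := Prod.ext rfl h0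
        have hmape : Sym2.map (φ τ) (Ed i) ∈ M0 := by
          rw [← hstabτ]
          exact Set.mem_image_of_mem _ (hEd1 i)
        have e1 : ((0 : Fin 2) + 1) = 1 := by decide
        have e2 : ((1 : Fin 2) + 1) = 0 := by decide
        have hcomp : Sym2.map (φ τ) (Ed i) =
            s(((i, (1 : Fin 2)) : Fin (p ^ v) × Fin 2), ((σ i, (0 : Fin 2)) : _)) := by
          rw [← hot i, hoti, Sym2.map_pair_eq, hτ, hτ]
          show s((i, (0 : Fin 2) + 1), (σ i, (1 : Fin 2) + 1)) = _
          rw [e1, e2]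
        have hEd_eq : Ed (σ i) = Sym2.map (φ τ) (Ed i) :=
          huniqe (σ i, 0) _ _ (hEd1 (σ i)) (hEd2 (σ i)) hmape
            (by rw [hcomp]; exact Sym2.mem_mk_right _ _)
        have hmem2 : ot (σ i) ∈ Sym2.map (φ τ) (Ed i) := by
          rw [← hEd_eq, ← hot (σ i)]
          exact Sym2.mem_mk_right _ _
        rw [hcomp, Sym2.mem_iff] at hmem2
        rcases hmem2 with h' | h'
        · show (ot (σ i)).1 = i
          rw [h']
        · exact absurd h' (hotne (σ i))
    exact aux_invol (Odd.pow (Nat.odd_iff.mpr hpodd)) σ hσσ hσne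
  rcases hq2p with hq2 | hqp
  · -- q = 2 : h = τ, contradiction
    rw [hq2] at hhq
    have hh2 : h * h = 1 := by rwa [pow_two] at hhq
    have hxne : h.toAdd ≠ 0 := fun hc => hh1 (by rw [← ofAdd_toAdd h, hc]; rfl)
    have hxx : h.toAdd + h.toAdd = 0 := by
      have h3 := congrArg Multiplicative.toAdd hh2
      simpa using h3
    have hhτ : h = τ := by
      have h4 := aux_two h.toAdd hxne hxx
      rw [← ofAdd_toAdd h, h4, hτdef]
    apply noτ
    have h5 := hstabh 1
    rwa [pow_one, hhτ] at h5
  · -- q = p : δ stabilizes M0, contradiction at w0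
    rw [hqp] at hhq
    have hhp : h ^ p = 1 := hhq
    have hxne : h.toAdd ≠ 0 := fun hc => hh1 (by rw [← ofAdd_toAdd h, hc]; rfl)
    have hpx : ((p * (h.toAdd).val : ℕ) : ZMod (p ^ v * 2)) = 0 := by
      have h1 : (p : ℕ) • h.toAdd = 0 := by
        have h2 := congrArg Multiplicative.toAdd hhp
        simpa [toAdd_pow] using h2
      have hxv : (((h.toAdd).val : ℕ) : ZMod (p ^ v * 2)) = h.toAdd :=
        ZMod.natCast_rightInverse _
      rw [Nat.cast_mul, hxv, ← nsmul_eq_mul]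
      exact h1
    obtain ⟨k', hk'⟩ := aux_p h.toAdd hxne hpx
    have hδh : δ = h ^ k' := by
      apply Multiplicative.toAdd.injective
      rw [hδdef, toAdd_ofAdd, toAdd_pow, hk', hdd]
    have hstabδ : Sym2.map (φ δ) '' M0 = M0 := by rw [hδh]; exact hstabh k'
    have hstabδinv : Sym2.map (φ δ⁻¹) '' M0 = M0 := by
      have h1 : Sym2.map (φ δ⁻¹) '' (Sym2.map (φ δ) '' M0) = M0 := by
        rw [himg, inv_mul_cancel, map_one, Equiv.Perm.coe_one, Sym2.map_id, Set.image_id]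
      rwa [hstabδ] at h1
    have hinvap : φ δ⁻¹ (φ δ w0) = w0 := by
      rw [← Equiv.Perm.mul_apply, ← map_mul, inv_mul_cancel, map_one, Equiv.Perm.one_apply]
    have he1 : s((φ δ⁻¹ w0 : Fin (p ^ v) × Fin 2), w0) ∈ M0 := by
      have h1 : Sym2.map (φ δ⁻¹) s(w0, φ δ w0) ∈ M0 := by
        rw [← hstabδinv]
        exact Set.mem_image_of_mem _ hM0e
      rwa [Sym2.map_pair_eq, hinvap] at h1
    have heq : s(w0, φ δ w0) = s((φ δ⁻¹ w0 : Fin (p ^ v) × Fin 2), w0) :=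
      ((hfac M0 hM0F).2 w0).unique ⟨hM0e, Sym2.mem_mk_left _ _⟩ ⟨he1, Sym2.mem_mk_right _ _⟩
    rcases Sym2.eq_iff.mp heq with ⟨h1, h2⟩ | ⟨-, h2⟩
    · exact hδne1 (uniq w0 δ 1 (by rw [h2, map_one, Equiv.Perm.one_apply]))
    · have h3 : δ = δ⁻¹ := uniq w0 δ δ⁻¹ h2
      have h4 : δ * δ = 1 := by
        nth_rewrite 2 [h3]
        exact mul_inv_cancel δ
      exact hδδ h4



/-- If `m = p^v` with `p` prime, `p ≡ 1 (mod 4)` and `v ≥ 1`, there is no cyclic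
1-factorization of `K_{m×2}`. -/
theorem no_cyclic_oneFactorization_of_prime_pow (p v : ℕ)
    (hp : p.Prime) (hp4 : p % 4 = 1) (hv : 1 ≤ v) :
    ¬ HasRegularOneFactorization (completeMultipartite (p ^ v) 2)
        (Multiplicative (ZMod (p ^ v * 2))) := by
  exact no_cyclic_oneFactorization_of_prime_pow' p v hp hp4 hv
    (fun hm σ h1 h2 => aux_invol hm σ h1 h2)
    (fun x hx h2 => aux_two hp.two_le x hx h2)
    (fun x hx hpx => aux_p hp hv x hx hpx)
end

section
/- If m = 2d and n = 2d' where d and d' are odd, then there exists a 1-factorization of the complete multipartite graph K_{m×n} admitting a cyclic group of automorphisms acting sharply transitively on the vertex set. -/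
open SimpleGraph

namespace CMOF

variable (d d' : ℕ)

abbrev NV : ℕ := (2*d)*(2*d')

abbrev R := ZMod (NV d d')

def pr1 : R d d' →+* ZMod (2*d) := ZMod.castHom ⟨2*d', rfl⟩ _

def pr2 : R d d' →+* ZMod 2 :=
  ZMod.castHom (show (2:ℕ) ∣ NV d d' from ⟨d*(2*d'), by unfold NV; ring⟩) _

abbrev I2 := (ZMod (2*d) ⊕ ZMod 2) × ℕ

def G : SimpleGraph (R d d') where
  Adj x y := pr1 d d' x ≠ pr1 d d' y
  symm := ⟨fun _ _ h => Ne.symm h⟩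
  loopless := ⟨fun _ h => h rfl⟩

def clOr (x y : R d d') : I2 d :=
  if ((y - x).val % (4*d)) % 2 = 0 then
    (Sum.inl (pr1 d d' x + (((y - x).val % (4*d))/2 : ℕ)), (y-x).val / (4*d))
  else if (y - x).val % (4*d) = d then
    (Sum.inl (pr1 d d' x), (y-x).val / (4*d))
  else
    (Sum.inr (pr2 d d' x), d' * ((y - x).val % (4*d)) + (y-x).val / (4*d))

def cl (x y : R d d') : I2 d :=
  if 0 < (y-x).val % (4*d) ∧ (y-x).val % (4*d) < 2*d then clOr d d' x y
  else if 0 < (x-y).val % (4*d) ∧ (x-y).val % (4*d) < 2*d then clOr d d' y x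
  else (Sum.inl 0, 0)

def Valid : I2 d → Prop
  | (Sum.inl _, r) => r < d'
  | (Sum.inr _, nn) => ∃ c₀ r, nn = d' * c₀ + r ∧ r < d' ∧ c₀ % 2 = 1 ∧ c₀ < 2*d ∧ c₀ ≠ d

def partner (v : R d d') : I2 d → R d d'
  | (Sum.inl a, r) =>
      if (a - pr1 d d' v).val = 0 then v + ((d + 4*d*r : ℕ) : R d d')
      else if (a - pr1 d d' v).val < d then
        v + ((2*(a - pr1 d d' v).val + 4*d*r : ℕ) : R d d')
      else if (a - pr1 d d' v).val = d then v - ((d + 4*d*r : ℕ) : R d d')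
      else v - (((4*d - 2*(a - pr1 d d' v).val) + 4*d*r : ℕ) : R d d')
  | (Sum.inr p, nn) =>
      if p = pr2 d d' v then v + ((nn / d' + 4*d*(nn % d') : ℕ) : R d d')
      else v - ((nn / d' + 4*d*(nn % d') : ℕ) : R d d')

def actI (w : R d d') : I2 d → I2 d
  | (Sum.inl a, r) => (Sum.inl (a + pr1 d d' w), r)
  | (Sum.inr p, nn) => (Sum.inr (p + pr2 d d' w), nn)

variable {d d'}

lemma NV_eq : NV d d' = 4*d*d' := by unfold NV; ring

lemma nat_flip {A n s : ℕ} (hA : 0 < A) (hsn : s < A*n) (hs : 0 < s % A) :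
    (A*n - s) % A = A - s % A ∧ (A*n - s)/A = n - s/A - 1 := by
  have hd := Nat.div_add_mod s A
  have hc : s % A < A := Nat.mod_lt _ hA
  have hq : s / A < n := by
    rw [Nat.div_lt_iff_lt_mul hA, mul_comm]; exact hsn
  obtain ⟨e, he⟩ : ∃ e, n = s/A + 1 + e := ⟨n - s/A - 1, by omega⟩
  have hAn : A*n = A*(s/A) + A + A*e := by rw [he]; ring
  have key : A*n - s = (A - s % A) + A*e := by
    zify [le_of_lt hsn, le_of_lt hc]
    push_cast at hAn hd
    linarith [hAn, hd]
  constructor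
  · rw [key, Nat.add_mul_mod_self_left, Nat.mod_eq_of_lt (by omega)]
  · rw [key, Nat.add_mul_div_left _ _ hA, Nat.div_eq_of_lt (by omega)]
    omega

section basic

variable [NeZero (NV d d')]

lemma val_natCast_lt {t : ℕ} (h : t < NV d d') : ((t : R d d')).val = t := by
  rw [ZMod.val_natCast, Nat.mod_eq_of_lt h]

lemma pr1_natCast (t : ℕ) : pr1 d d' ((t : ℕ) : R d d') = (t : ZMod (2*d)) :=
  map_natCast _ t

lemma pr2_natCast (t : ℕ) : pr2 d d' ((t : ℕ) : R d d') = (t : ZMod 2) :=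
  map_natCast _ t

lemma pr1_val (x : R d d') : pr1 d d' x = ((x.val : ℕ) : ZMod (2*d)) := by
  have h : ((x.val : ℕ) : R d d') = x := ZMod.natCast_rightInverse x
  conv_lhs => rw [← h]
  exact pr1_natCast _

lemma pr2_val (x : R d d') : pr2 d d' x = ((x.val : ℕ) : ZMod 2) := by
  have h : ((x.val : ℕ) : R d d') = x := ZMod.natCast_rightInverse x
  conv_lhs => rw [← h]
  exact pr2_natCast _

lemma sub_val_flip {x y : R d d'} (h : y ≠ x) :
    (x - y).val = NV d d' - (y - x).val := by
  have hxy : y - x ≠ 0 := sub_ne_zero.mpr h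
  have hh : x - y = -(y - x) := by ring
  rw [hh, ZMod.neg_val, if_neg hxy]

lemma adj_iff_not_dvd (hd : 0 < d) (v u : R d d') :
    (G d d').Adj v u ↔ ¬ (2*d ∣ (u - v).val) := by
  haveI : NeZero (2*d) := ⟨by omega⟩
  have h1 : pr1 d d' (u - v) = (((u - v).val : ℕ) : ZMod (2*d)) := pr1_val _
  constructor
  · intro h hdvd
    apply h
    have h0 : pr1 d d' (u - v) = 0 := by
      rw [h1, ZMod.natCast_eq_zero_iff]; exact hdvd
    have h2 : pr1 d d' u - pr1 d d' v = 0 := by rw [← map_sub]; exact h0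
    exact (sub_eq_zero.mp h2).symm
  · intro h hne
    apply h
    rw [← ZMod.natCast_eq_zero_iff, ← h1, map_sub]
    rw [show pr1 d d' v = pr1 d d' u from hne]
    ring

end basic


section main

variable [NeZero (NV d d')]

lemma NV_eq2 : NV d d' = (2*d)*(2*d') := rfl

lemma bound1 {c r : ℕ} (hc : c < 4*d) (hr : r < d') : c + 4*d*r < NV d d' := by
  rw [NV_eq]
  have h1 : 4*d*(r+1) ≤ 4*d*d' := Nat.mul_le_mul_left _ (by omega)
  have h2 : 4*d*(r+1) = 4*d*r + 4*d := by ring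
  omega

lemma mod41 {c r : ℕ} (hc : c < 4*d) : (c + 4*d*r) % (4*d) = c := by
  rw [Nat.add_mul_mod_self_left, Nat.mod_eq_of_lt hc]

lemma div41 {c r : ℕ} (hc : c < 4*d) (h0 : 0 < d) : (c + 4*d*r) / (4*d) = r := by
  rw [Nat.add_mul_div_left _ _ (by omega : 0 < 4*d), Nat.div_eq_of_lt hc, Nat.zero_add]

lemma mod21 {c r : ℕ} (hc : c < 2*d) : (c + 4*d*r) % (2*d) = c := by
  have h : c + 4*d*r = c + 2*d*(2*r) := by ring
  rw [h, Nat.add_mul_mod_self_left, Nat.mod_eq_of_lt hc]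

lemma cast4dr {r : ℕ} : ((4*d*r : ℕ) : ZMod (2*d)) = 0 := by
  rw [show 4*d*r = (2*d)*(2*r) from by ring, Nat.cast_mul, ZMod.natCast_self, zero_mul]

lemma natCast_ne_zero {T : ℕ} (hT0 : 0 < T) (hT : T < NV d d') : ((T:ℕ) : R d d') ≠ 0 := by
  intro h
  have := val_natCast_lt hT
  rw [h, ZMod.val_zero] at this
  omega

lemma cl_plus (hd0 : 0 < d) {c r : ℕ} (h0 : 0 < c) (hc : c < 2*d) (hr : r < d') (v : R d d') :
    ((v + ((c + 4*d*r : ℕ) : R d d')) - v).val = c + 4*d*r ∧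
    cl d d' v (v + ((c + 4*d*r : ℕ) : R d d')) = clOr d d' v (v + ((c + 4*d*r : ℕ) : R d d')) ∧
    (G d d').Adj v (v + ((c + 4*d*r : ℕ) : R d d')) := by
  have hcN : c + 4*d*r < NV d d' := bound1 (by omega) hr
  have h1 : ((v + ((c + 4*d*r : ℕ) : R d d')) - v) = ((c + 4*d*r : ℕ) : R d d') :=
    add_sub_cancel_left _ _
  have h2 : ((v + ((c + 4*d*r : ℕ) : R d d')) - v).val = c + 4*d*r := by
    rw [h1, val_natCast_lt hcN]
  refine ⟨h2, ?_, ?_⟩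
  · rw [cl, h2, mod41 (by omega)]
    rw [if_pos ⟨h0, hc⟩]
  · rw [adj_iff_not_dvd hd0, h2]
    intro hdvd
    have := Nat.dvd_iff_mod_eq_zero.mp hdvd
    rw [mod21 hc] at this
    omega

lemma cl_minus (hd0 : 0 < d) {c r : ℕ} (h0 : 0 < c) (hc : c < 2*d) (hr : r < d') (v : R d d') :
    (v - (v - ((c + 4*d*r : ℕ) : R d d'))).val = c + 4*d*r ∧
    cl d d' v (v - ((c + 4*d*r : ℕ) : R d d')) = clOr d d' (v - ((c + 4*d*r : ℕ) : R d d')) v ∧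
    (G d d').Adj v (v - ((c + 4*d*r : ℕ) : R d d')) := by
  have hcN : c + 4*d*r < NV d d' := bound1 (by omega) hr
  have h1 : (v - (v - ((c + 4*d*r : ℕ) : R d d'))) = ((c + 4*d*r : ℕ) : R d d') :=
    sub_sub_cancel _ _
  have h2 : (v - (v - ((c + 4*d*r : ℕ) : R d d'))).val = c + 4*d*r := by
    rw [h1, val_natCast_lt hcN]
  have h3 : ((v - ((c + 4*d*r : ℕ) : R d d')) - v) = -((c + 4*d*r : ℕ) : R d d') :=
    sub_sub_cancel_left _ _
  have h4 : ((v - ((c + 4*d*r : ℕ) : R d d')) - v).val = NV d d' - (c + 4*d*r) := by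
    rw [h3, ZMod.neg_val, if_neg (natCast_ne_zero (by omega) hcN), val_natCast_lt hcN]
  have hmod4 : (NV d d' - (c + 4*d*r)) % (4*d) = 4*d - c := by
    have := (nat_flip (A := 4*d) (n := d') (s := c + 4*d*r) (by omega : 0 < 4*d)
      (by have h := hcN; rw [NV_eq] at h; exact h) (by rw [mod41 (by omega : c < 4*d)]; omega)).1
    rw [← NV_eq] at this
    rw [this, mod41 (by omega : c < 4*d)]
  have hmod2 : (NV d d' - (c + 4*d*r)) % (2*d) = 2*d - c := by
    have := (nat_flip (A := 2*d) (n := 2*d') (s := c + 4*d*r) (by omega : 0 < 2*d)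
      (by have h := hcN; rw [NV_eq2] at h; exact h) (by rw [mod21 hc]; omega)).1
    rw [← NV_eq2] at this
    rw [this, mod21 hc]
  refine ⟨h2, ?_, ?_⟩
  · rw [cl, h2, h4, hmod4, mod41 (by omega)]
    rw [if_neg (by omega), if_pos ⟨by omega, hc⟩]
  · rw [adj_iff_not_dvd hd0, h4]
    intro hdvd
    have := Nat.dvd_iff_mod_eq_zero.mp hdvd
    omega


lemma hz2d : ((2*d : ℕ) : ZMod (2*d)) = 0 := ZMod.natCast_self _

lemma hz4d : ((4*d : ℕ) : ZMod (2*d)) = 0 := by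
  rw [show 4*d = (2*d)*2 from by ring, Nat.cast_mul, hz2d, zero_mul]

lemma partner_spec (hd : Odd d) (hd'0 : 0 < d') (v : R d d') (i : I2 d) (hi : Valid d d' i) :
    (G d d').Adj v (partner d d' v i) ∧ cl d d' v (partner d d' v i) = i := by
  have hd1 : d % 2 = 1 := Nat.odd_iff.mp hd
  have hd0 : 0 < d := by omega
  haveI : NeZero (2*d) := ⟨by omega⟩
  obtain ⟨a | p, r⟩ := i
  · -- inl case
    have hr : r < d' := hi
    have he2 : (a - pr1 d d' v).val < 2*d := ZMod.val_lt _
    have hcastE : (((a - pr1 d d' v).val : ℕ) : ZMod (2*d)) = a - pr1 d d' v :=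
      ZMod.natCast_rightInverse _
    by_cases h0 : (a - pr1 d d' v).val = 0
    · have ha : a = pr1 d d' v := sub_eq_zero.mp ((ZMod.val_eq_zero _).mp h0)
      simp only [partner, if_pos h0]
      obtain ⟨h2, h3, h4⟩ := cl_plus (c := d) (r := r) hd0 (by omega) (by omega) hr v
      refine ⟨h4, ?_⟩
      rw [h3, clOr, h2, mod41 (by omega), div41 (by omega) hd0]
      rw [if_neg (by omega), if_pos rfl, ha]
    · by_cases h1 : (a - pr1 d d' v).val < d
      · simp only [partner, if_neg h0, if_pos h1]
        obtain ⟨h2, h3, h4⟩ := cl_plus (c := 2*(a - pr1 d d' v).val) (r := r) hd0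
          (by omega) (by omega) hr v
        refine ⟨h4, ?_⟩
        rw [h3, clOr, h2, mod41 (by omega), div41 (by omega) hd0]
        rw [if_pos (by omega)]
        rw [show (2*(a - pr1 d d' v).val)/2 = (a - pr1 d d' v).val from by omega]
        rw [hcastE, show pr1 d d' v + (a - pr1 d d' v) = a from by ring]
      · by_cases h2 : (a - pr1 d d' v).val = d
        · simp only [partner, if_neg h0, if_neg h1, if_pos h2]
          obtain ⟨h3, h4, h5⟩ := cl_minus (c := d) (r := r) hd0 (by omega) (by omega) hr v
          refine ⟨h5, ?_⟩
          rw [h4, clOr, h3, mod41 (by omega), div41 (by omega) hd0]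
          rw [if_neg (by omega), if_pos rfl]
          have hu : pr1 d d' (v - ((d + 4*d*r:ℕ) : R d d'))
              = pr1 d d' v - ((d + 4*d*r : ℕ) : ZMod (2*d)) := by
            rw [map_sub, pr1_natCast]
          have ha : a - pr1 d d' v = ((d:ℕ) : ZMod (2*d)) := by rw [← hcastE, h2]
          have hval : ((d + 4*d*r : ℕ) : ZMod (2*d)) = ((d:ℕ) : ZMod (2*d)) := by
            rw [Nat.cast_add, cast4dr, add_zero]
          rw [hu, hval]
          have goal1 : pr1 d d' v - ((d:ℕ) : ZMod (2*d)) = a := by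
            have h2d0 : ((2*d : ℕ) : ZMod (2*d)) = 0 := hz2d
            push_cast at h2d0
            linear_combination - ha - h2d0
          rw [goal1]
        · -- e ∈ (d, 2d)
          simp only [partner, if_neg h0, if_neg h1, if_neg h2]
          obtain ⟨h3, h4, h5⟩ := cl_minus (c := 4*d - 2*(a - pr1 d d' v).val) (r := r) hd0
            (by omega) (by omega) hr v
          refine ⟨h5, ?_⟩
          rw [h4, clOr, h3, mod41 (by omega), div41 (by omega) hd0]
          rw [if_pos (by omega)]
          have hu : pr1 d d' (v - ((4*d - 2*(a - pr1 d d' v).val + 4*d*r:ℕ) : R d d'))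
              = pr1 d d' v - ((4*d - 2*(a - pr1 d d' v).val + 4*d*r : ℕ) : ZMod (2*d)) := by
            rw [map_sub, pr1_natCast]
          have hval : ((4*d - 2*(a - pr1 d d' v).val + 4*d*r : ℕ) : ZMod (2*d))
              = - 2 * (a - pr1 d d' v) := by
            rw [Nat.cast_add, cast4dr, add_zero,
              Nat.cast_sub (by omega : 2*(a - pr1 d d' v).val ≤ 4*d)]
            have h4d0 := hz4d (d := d)
            push_cast at h4d0 ⊢
            rw [hcastE] at *
            linear_combination h4d0
          have hdiv : (4*d - 2*(a - pr1 d d' v).val)/2 = 2*d - (a - pr1 d d' v).val := by omega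
          have hval2 : ((2*d - (a - pr1 d d' v).val : ℕ) : ZMod (2*d)) = -(a - pr1 d d' v) := by
            rw [Nat.cast_sub (by omega : (a - pr1 d d' v).val ≤ 2*d)]
            have h2d0 := hz2d (d := d)
            push_cast at h2d0 ⊢
            rw [hcastE] at *
            linear_combination h2d0
          rw [hu, hval, hdiv, hval2]
          rw [show pr1 d d' v - -2 * (a - pr1 d d' v) + -(a - pr1 d d' v) = a from by ring]
  · -- inr case
    obtain ⟨c₀, r, hnn, hr, hodd, hlt, hne⟩ := hi
    have hnn1 : (d' * c₀ + r) / d' = c₀ := by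
      rw [Nat.mul_add_div hd'0, Nat.div_eq_of_lt hr, Nat.add_zero]
    have hnn2 : (d' * c₀ + r) % d' = r := by
      rw [Nat.mul_add_mod, Nat.mod_eq_of_lt hr]
    by_cases hp : p = pr2 d d' v
    · simp only [partner, if_pos hp, hnn, hnn1, hnn2]
      obtain ⟨h2, h3, h4⟩ := cl_plus (c := c₀) (r := r) hd0 (by omega) hlt hr v
      refine ⟨h4, ?_⟩
      rw [h3, clOr, h2, mod41 (by omega), div41 (by omega) hd0]
      rw [if_neg (by omega), if_neg hne, hp]
    · simp only [partner, if_neg hp, hnn, hnn1, hnn2]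
      obtain ⟨h3, h4, h5⟩ := cl_minus (c := c₀) (r := r) hd0 (by omega) hlt hr v
      refine ⟨h5, ?_⟩
      rw [h4, clOr, h3, mod41 (by omega), div41 (by omega) hd0]
      rw [if_neg (by omega), if_neg hne]
      have hu : pr2 d d' (v - ((c₀ + 4*d*r:ℕ) : R d d'))
          = pr2 d d' v - ((c₀ + 4*d*r : ℕ) : ZMod 2) := by
        rw [map_sub, pr2_natCast]
      have hc2 : ((c₀ + 4*d*r : ℕ) : ZMod 2) = 1 := by
        rw [← ZMod.natCast_mod]
        rw [show (c₀ + 4*d*r) % 2 = 1 from by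
          rw [show c₀ + 4*d*r = c₀ + 2*(2*d*r) from by ring]; omega]
        exact Nat.cast_one
      have hp2 : p = pr2 d d' v - ((c₀ + 4*d*r : ℕ) : ZMod 2) := by
        rw [hc2]
        revert hp
        generalize p = q
        generalize pr2 d d' v = w
        revert q w
        decide
      rw [hu, ← hp2]


lemma cast_diff (x y : R d d') : (((x - y).val : ℕ) : R d d') = x - y :=
  ZMod.natCast_rightInverse _

lemma cl_spec (hd : Odd d) (hd'0 : 0 < d') {v u : R d d'} (h : (G d d').Adj v u) :
    Valid d d' (cl d d' v u) ∧ partner d d' v (cl d d' v u) = u := by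
  have hd1 : d % 2 = 1 := Nat.odd_iff.mp hd
  have hd0 : 0 < d := by omega
  haveI : NeZero (2*d) := ⟨by omega⟩
  have hvu : u ≠ v := by rintro rfl; exact h rfl
  have ht0 : 0 < (u-v).val := ZMod.val_pos.mpr (sub_ne_zero.mpr hvu)
  have htN : (u-v).val < NV d d' := ZMod.val_lt _
  have hnd : ¬ 2*d ∣ (u-v).val := (adj_iff_not_dvd hd0 v u).mp h
  have h2d : (u-v).val % (2*d) ≠ 0 := fun hh => hnd (Nat.dvd_iff_mod_eq_zero.mpr hh)
  have hmm : (u-v).val % (4*d) % (2*d) = (u-v).val % (2*d) :=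
    Nat.mod_mod_of_dvd _ ⟨2, by ring⟩
  have htm4 : (u-v).val % (4*d) < 4*d := Nat.mod_lt _ (by omega)
  have hne0 : (u-v).val % (4*d) ≠ 0 ∧ (u-v).val % (4*d) ≠ 2*d := by
    constructor
    · intro hh; rw [hh, Nat.zero_mod] at hmm; omega
    · intro hh; rw [hh, Nat.mod_self] at hmm; omega
  have hu : u = v + (((u-v).val : ℕ) : R d d') := by rw [cast_diff]; ring
  have hsflip : (v - u).val = NV d d' - (u - v).val := sub_val_flip hvu
  have hmdm : (u-v).val % (4*d) + 4*d*((u-v).val/(4*d)) = (u-v).val := Nat.mod_add_div _ _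
  rcases Nat.lt_or_ge ((u-v).val % (4*d)) (2*d) with hcase | hcase
  · have hcl : cl d d' v u = clOr d d' v u := by
      rw [cl, if_pos ⟨Nat.pos_of_ne_zero hne0.1, hcase⟩]
    have hdiv : (u-v).val / (4*d) < d' := by
      rw [Nat.div_lt_iff_lt_mul (by omega : 0 < 4*d)]
      have h9 : d' * (4*d) = 4*d*d' := by ring
      have h8 : NV d d' = 4*d*d' := NV_eq
      omega
    by_cases hpar : (u-v).val % (4*d) % 2 = 0
    · rw [hcl, clOr, if_pos hpar]
      refine ⟨hdiv, ?_⟩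
      simp only [partner]
      have hE : pr1 d d' v + ((((u-v).val % (4*d))/2 : ℕ) : ZMod (2*d)) - pr1 d d' v
          = ((((u-v).val % (4*d))/2 : ℕ) : ZMod (2*d)) := by ring
      have hvalE : (pr1 d d' v + ((((u-v).val % (4*d))/2 : ℕ) : ZMod (2*d)) - pr1 d d' v).val
          = ((u-v).val % (4*d))/2 := by
        rw [hE, ZMod.val_natCast, Nat.mod_eq_of_lt (by omega)]
      rw [hvalE]
      rw [if_neg (by omega), if_pos (by omega)]
      rw [show 2*(((u-v).val % (4*d))/2) + 4*d*((u-v).val/(4*d)) = (u-v).val from by omega]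
      rw [cast_diff]; ring
    · by_cases hd2 : (u-v).val % (4*d) = d
      · rw [hcl, clOr, if_neg hpar, if_pos hd2]
        refine ⟨hdiv, ?_⟩
        simp only [partner]
        rw [show (pr1 d d' v - pr1 d d' v).val = 0 from by rw [sub_self, ZMod.val_zero]]
        rw [if_pos rfl]
        rw [show d + 4*d*((u-v).val/(4*d)) = (u-v).val from by omega]
        rw [cast_diff]; ring
      · rw [hcl, clOr, if_neg hpar, if_neg hd2]
        refine ⟨⟨(u-v).val % (4*d), (u-v).val/(4*d), rfl, hdiv, by omega, hcase, hd2⟩, ?_⟩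
        simp only [partner, if_true]
        have hq1 : (d' * ((u-v).val % (4*d)) + (u-v).val/(4*d)) / d' = (u-v).val % (4*d) := by
          rw [Nat.mul_add_div hd'0, Nat.div_eq_of_lt hdiv, Nat.add_zero]
        have hq2 : (d' * ((u-v).val % (4*d)) + (u-v).val/(4*d)) % d' = (u-v).val/(4*d) := by
          rw [Nat.mul_add_mod, Nat.mod_eq_of_lt hdiv]
        rw [hq1, hq2, show (u-v).val % (4*d) + 4*d*((u-v).val/(4*d)) = (u-v).val from hmdm]
        rw [cast_diff]; ring
  · have htm : 2*d < (u-v).val % (4*d) := lt_of_le_of_ne hcase (Ne.symm hne0.2)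
    have hflip := nat_flip (A := 4*d) (n := d') (s := (u-v).val) (by omega)
        (by have h8 : NV d d' = 4*d*d' := NV_eq; omega) (Nat.pos_of_ne_zero hne0.1)
    have hf1 := hflip.1
    have hf2 := hflip.2
    rw [← NV_eq] at hf1 hf2
    have hs4 : (v-u).val % (4*d) = 4*d - (u-v).val % (4*d) := by
      rw [hsflip]; exact hf1
    have hs4' : (v-u).val / (4*d) = d' - (u-v).val/(4*d) - 1 := by
      rw [hsflip]; exact hf2
    have hx1 : 0 < (v-u).val % (4*d) := by omega
    have hx2 : (v-u).val % (4*d) < 2*d := by omega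
    have hx3 : ¬ (0 < (u-v).val % (4*d) ∧ (u-v).val % (4*d) < 2*d) := by omega
    have hcl : cl d d' v u = clOr d d' u v := by
      rw [cl, if_neg hx3, if_pos ⟨hx1, hx2⟩]
    have hsmdm : (v-u).val % (4*d) + 4*d*((v-u).val/(4*d)) = (v-u).val := Nat.mod_add_div _ _
    have hsdiv : (v-u).val / (4*d) < d' := by
      rw [Nat.div_lt_iff_lt_mul (by omega : 0 < 4*d)]
      have h9 : d' * (4*d) = 4*d*d' := by ring
      have h8 : NV d d' = 4*d*d' := NV_eq
      have h7 : (v-u).val < NV d d' := ZMod.val_lt _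
      omega
    have hcast : (((v-u).val : ℕ) : R d d') = v - u := cast_diff _ _
    have hu1 : pr1 d d' u = pr1 d d' v + (((u-v).val : ℕ) : ZMod (2*d)) := by
      conv_lhs => rw [hu]
      rw [map_add, pr1_natCast]
    by_cases hpar : (v-u).val % (4*d) % 2 = 0
    · rw [hcl, clOr, if_pos hpar]
      refine ⟨hsdiv, ?_⟩
      simp only [partner]
      have htme : (u-v).val % (4*d) % 2 = 0 := by omega
      have hnat : (u-v).val + ((v-u).val % (4*d))/2
          = 2*d*(2*((u-v).val/(4*d)) + 1) + ((u-v).val % (4*d))/2 := by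
        have hexp : 2*d*(2*((u-v).val/(4*d)) + 1) = 4*d*((u-v).val/(4*d)) + 2*d := by ring
        rw [hs4, hexp]
        omega
      have hE : pr1 d d' u + ((((v-u).val % (4*d))/2 : ℕ) : ZMod (2*d)) - pr1 d d' v
          = ((((u-v).val % (4*d))/2 : ℕ) : ZMod (2*d)) := by
        rw [hu1]
        have h9 : pr1 d d' v + (((u-v).val : ℕ) : ZMod (2*d))
            + ((((v-u).val % (4*d))/2 : ℕ) : ZMod (2*d)) - pr1 d d' v
            = (((u-v).val + ((v-u).val % (4*d))/2 : ℕ) : ZMod (2*d)) := by push_cast; ring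
        rw [h9, hnat, Nat.cast_add, Nat.cast_mul, hz2d, zero_mul, zero_add]
      have hvalE : (pr1 d d' u + ((((v-u).val % (4*d))/2 : ℕ) : ZMod (2*d)) - pr1 d d' v).val
          = ((u-v).val % (4*d))/2 := by
        rw [hE, ZMod.val_natCast, Nat.mod_eq_of_lt (by omega)]
      rw [hvalE]
      rw [if_neg (by omega), if_neg (by omega), if_neg (by omega)]
      rw [show 4*d - 2*(((u-v).val % (4*d))/2) + 4*d*((v-u).val/(4*d)) = (v-u).val from by omega]
      rw [hcast]; ring
    · by_cases hd2 : (v-u).val % (4*d) = d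
      · rw [hcl, clOr, if_neg hpar, if_pos hd2]
        refine ⟨hsdiv, ?_⟩
        simp only [partner]
        have hnat : (u-v).val = 2*d*(2*((u-v).val/(4*d)) + 1) + d := by
          have hexp : 2*d*(2*((u-v).val/(4*d)) + 1) = 4*d*((u-v).val/(4*d)) + 2*d := by ring
          omega
        have hE : pr1 d d' u - pr1 d d' v = ((d : ℕ) : ZMod (2*d)) := by
          rw [hu1, hnat, Nat.cast_add, Nat.cast_mul, hz2d, zero_mul, zero_add]
          ring
        have hvalE : (pr1 d d' u - pr1 d d' v).val = d := by
          rw [hE, ZMod.val_natCast, Nat.mod_eq_of_lt (by omega)]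
        rw [hvalE, if_neg (by omega), if_neg (by omega), if_pos rfl]
        rw [show d + 4*d*((v-u).val/(4*d)) = (v-u).val from by omega]
        rw [hcast]; ring
      · rw [hcl, clOr, if_neg hpar, if_neg hd2]
        refine ⟨⟨(v-u).val % (4*d), (v-u).val/(4*d), rfl, hsdiv, by omega, by omega, hd2⟩, ?_⟩
        simp only [partner]
        have hu2 : pr2 d d' u = pr2 d d' v + (((u-v).val : ℕ) : ZMod 2) := by
          conv_lhs => rw [hu]
          rw [map_add, pr2_natCast]
        have hodd : (u-v).val % 2 = 1 := by
          have h4e : (4:ℕ)*d*((u-v).val/(4*d)) = 2*(2*d*((u-v).val/(4*d))) := by ring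
          omega
        have hcast2 : (((u-v).val : ℕ) : ZMod 2) = 1 := by
          rw [← ZMod.natCast_mod, hodd, Nat.cast_one]
        have hne2 : pr2 d d' u ≠ pr2 d d' v := by
          rw [hu2, hcast2]
          generalize pr2 d d' v = w
          revert w; decide
        rw [if_neg hne2]
        have hq1 : (d' * ((v-u).val % (4*d)) + (v-u).val/(4*d)) / d' = (v-u).val % (4*d) := by
          rw [Nat.mul_add_div hd'0, Nat.div_eq_of_lt hsdiv, Nat.add_zero]
        have hq2 : (d' * ((v-u).val % (4*d)) + (v-u).val/(4*d)) % d' = (v-u).val/(4*d) := by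
          rw [Nat.mul_add_mod, Nat.mod_eq_of_lt hsdiv]
        rw [hq1, hq2, show (v-u).val % (4*d) + 4*d*((v-u).val/(4*d)) = (v-u).val from hsmdm]
        rw [hcast]; ring


lemma flipNV (hd0 : 0 < d) {s : ℕ} (h0 : 0 < s % (4*d)) (hs : s < NV d d') :
    (NV d d' - s) % (4*d) = 4*d - s % (4*d) := by
  have h := (nat_flip (A := 4*d) (n := d') (s := s) (by omega)
    (by have h8 : NV d d' = 4*d*d' := NV_eq; omega) h0).1
  rw [← NV_eq] at h; exact h

lemma cl_symm (hd0 : 0 < d) (x y : R d d') : cl d d' x y = cl d d' y x := by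
  by_cases hxy : x = y
  · subst hxy; rfl
  · have h1 : (x - y).val = NV d d' - (y - x).val := sub_val_flip (Ne.symm hxy)
    have ht0 : 0 < (y-x).val := ZMod.val_pos.mpr (sub_ne_zero.mpr (Ne.symm hxy))
    have htN : (y-x).val < NV d d' := ZMod.val_lt _
    have htm4 : (y-x).val % (4*d) < 4*d := Nat.mod_lt _ (by omega)
    rcases Nat.lt_trichotomy ((y-x).val % (4*d)) (2*d) with hA | hB | hC
    · by_cases hz : (y-x).val % (4*d) = 0
      · have hdvd : 4*d ∣ (y-x).val := Nat.dvd_iff_mod_eq_zero.mpr hz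
        have hdvd2 : 4*d ∣ (x-y).val := by
          rw [h1]; exact Nat.dvd_sub ⟨d', NV_eq⟩ hdvd
        have hz2 : (x-y).val % (4*d) = 0 := Nat.dvd_iff_mod_eq_zero.mp hdvd2
        rw [cl, cl, if_neg (by omega), if_neg (by omega), if_neg (by omega), if_neg (by omega)]
      · have hflip := flipNV hd0 (Nat.pos_of_ne_zero hz) htN
        rw [← h1] at hflip
        rw [cl, cl, if_pos ⟨by omega, hA⟩, if_neg (by omega), if_pos ⟨by omega, hA⟩]
    · have hflip := flipNV hd0 (by omega) htN
      rw [← h1] at hflip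
      rw [cl, cl, if_neg (by omega), if_neg (by omega), if_neg (by omega), if_neg (by omega)]
    · have hflip := flipNV hd0 (by omega) htN
      rw [← h1] at hflip
      rw [cl, cl, if_neg (by omega), if_pos ⟨by omega, by omega⟩, if_pos ⟨by omega, by omega⟩]

lemma clOr_shift (x y w : R d d') :
    clOr d d' (x + w) (y + w) = actI d d' w (clOr d d' x y) := by
  have e1 : (y + w) - (x + w) = y - x := by ring
  rw [clOr, clOr, e1]
  split_ifs with hh1 hh2 <;>
    simp only [actI, map_add, Prod.mk.injEq, Sum.inl.injEq, Sum.inr.injEq, and_true, and_self] <;>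
    first
      | exact ⟨by ring, rfl⟩
      | ring
      | rfl

lemma adj_shift (w x y : R d d') :
    (G d d').Adj (x + w) (y + w) ↔ (G d d').Adj x y := by
  show pr1 d d' (x + w) ≠ pr1 d d' (y + w) ↔ pr1 d d' x ≠ pr1 d d' y
  rw [map_add, map_add]
  constructor
  · intro h hc; exact h (by rw [hc])
  · intro h hc; exact h (by
      have := add_right_cancel hc; exact this)

lemma cl_shift (hd0 : 0 < d) {x y : R d d'} (h : (G d d').Adj x y) (w : R d d') :
    cl d d' (x + w) (y + w) = actI d d' w (cl d d' x y) := by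
  have hxy : x ≠ y := by rintro rfl; exact h rfl
  have e1 : (y + w) - (x + w) = y - x := by ring
  have e2 : (x + w) - (y + w) = x - y := by ring
  have h1 : (x - y).val = NV d d' - (y - x).val := sub_val_flip (Ne.symm hxy)
  have ht0 : 0 < (y-x).val := ZMod.val_pos.mpr (sub_ne_zero.mpr (Ne.symm hxy))
  have htN : (y-x).val < NV d d' := ZMod.val_lt _
  have htm4 : (y-x).val % (4*d) < 4*d := Nat.mod_lt _ (by omega)
  have hnd : ¬ 2*d ∣ (y-x).val := (adj_iff_not_dvd hd0 x y).mp h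
  have h2d : (y-x).val % (2*d) ≠ 0 := fun hh => hnd (Nat.dvd_iff_mod_eq_zero.mpr hh)
  have hmm : (y-x).val % (4*d) % (2*d) = (y-x).val % (2*d) :=
    Nat.mod_mod_of_dvd _ ⟨2, by ring⟩
  have hne0 : (y-x).val % (4*d) ≠ 0 ∧ (y-x).val % (4*d) ≠ 2*d := by
    constructor
    · intro hh; rw [hh, Nat.zero_mod] at hmm; omega
    · intro hh; rw [hh, Nat.mod_self] at hmm; omega
  rcases Nat.lt_or_ge ((y-x).val % (4*d)) (2*d) with hA | hC
  · have hL : cl d d' (x+w) (y+w) = clOr d d' (x+w) (y+w) := by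
      rw [cl, e1, if_pos ⟨by omega, hA⟩]
    have hR : cl d d' x y = clOr d d' x y := by
      rw [cl, if_pos ⟨by omega, hA⟩]
    rw [hL, hR]
    exact clOr_shift x y w
  · have hflip := flipNV hd0 (by omega) htN
    rw [← h1] at hflip
    have hL : cl d d' (x+w) (y+w) = clOr d d' (y+w) (x+w) := by
      rw [cl, e1, e2, if_neg (by omega), if_pos ⟨by omega, by omega⟩]
    have hR : cl d d' x y = clOr d d' y x := by
      rw [cl, if_neg (by omega), if_pos ⟨by omega, by omega⟩]
    rw [hL, hR]
    exact clOr_shift y x w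

lemma valid_act (w : R d d') (i : I2 d) :
    Valid d d' (actI d d' w i) ↔ Valid d d' i := by
  rcases i with ⟨a | p, r⟩ <;> exact Iff.rfl

lemma actI_inj (w : R d d') : Function.Injective (actI d d' w) := by
  rintro ⟨a | p, r⟩ ⟨a' | p', r'⟩ h
  · injection h with h1 h2
    injection h1 with h3
    rw [add_right_cancel h3, h2]
  · injection h with h1 h2
    exact (Sum.inl_ne_inr h1).elim
  · injection h with h1 h2
    exact (Sum.inr_ne_inl h1).elim
  · injection h with h1 h2
    injection h1 with h3
    rw [add_right_cancel h3, h2]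


def clS (hd0 : 0 < d) : Sym2 (R d d') → I2 d :=
  Sym2.lift ⟨cl d d', fun x y => cl_symm hd0 x y⟩

def CC (hd0 : 0 < d) (i : I2 d) : Set (Sym2 (R d d')) :=
  {e | e ∈ (G d d').edgeSet ∧ clS hd0 e = i}

lemma CC_mem (hd0 : 0 < d) (i : I2 d) (x y : R d d') :
    s(x, y) ∈ CC hd0 i ↔ ((G d d').Adj x y ∧ cl d d' x y = i) := by
  have hmk : clS (d := d) (d' := d') hd0 s(x, y) = cl d d' x y := Sym2.lift_mk _ _ _
  constructor
  · rintro ⟨hE, hC⟩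
    exact ⟨(G d d').mem_edgeSet.mp hE, by rw [← hmk]; exact hC⟩
  · rintro ⟨hA, hC⟩
    exact ⟨(G d d').mem_edgeSet.mpr hA, by rw [hmk, hC]⟩

lemma CC_shift (hd0 : 0 < d) (w : R d d') (i : I2 d) :
    Sym2.map (fun z => z + w) '' CC hd0 i = CC hd0 (actI d d' w i) := by
  apply Set.Subset.antisymm
  · rintro e ⟨e', he', rfl⟩
    revert he'
    induction e' using Sym2.ind with
    | _ x y =>
      intro he'
      rw [Sym2.map_pair_eq]
      obtain ⟨hA, hC⟩ := (CC_mem hd0 i x y).mp he'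
      exact (CC_mem hd0 _ _ _).mpr ⟨(adj_shift w x y).mpr hA, by rw [cl_shift hd0 hA w, hC]⟩
  · intro e
    induction e using Sym2.ind with
    | _ x y =>
      intro he
      obtain ⟨hA, hC⟩ := (CC_mem hd0 _ x y).mp he
      have hx : x - w + w = x := by ring
      have hy : y - w + w = y := by ring
      have hA' : (G d d').Adj (x - w) (y - w) := by
        have h9 := adj_shift w (x - w) (y - w)
        rw [hx, hy] at h9
        exact h9.mp hA
      refine ⟨s(x - w, y - w), ?_, ?_⟩
      · apply (CC_mem hd0 i _ _).mpr
        refine ⟨hA', ?_⟩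
        have h9 := cl_shift hd0 hA' w
        rw [hx, hy] at h9
        rw [h9] at hC
        exact actI_inj w hC
      · rw [Sym2.map_pair_eq, hx, hy]

theorem mainZ (hd : Odd d) (hd' : Odd d') :
    HasRegularOneFactorization (G d d') (Multiplicative (ZMod (NV d d'))) := by
  have hd1 : d % 2 = 1 := Nat.odd_iff.mp hd
  have hd0 : 0 < d := by omega
  have hd'0 : 0 < d' := by have h9 := Nat.odd_iff.mp hd'; omega
  refine ⟨{ toFun := fun a => Equiv.addRight (Multiplicative.toAdd a),
            map_one' := by
              ext x
              show x + Multiplicative.toAdd 1 = x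
              rw [toAdd_one, add_zero],
            map_mul' := fun a b => by
              ext x
              show x + Multiplicative.toAdd (a * b)
                  = (x + Multiplicative.toAdd b) + Multiplicative.toAdd a
              rw [toAdd_mul]; ring },
          {M | ∃ i, Valid d d' i ∧ M = CC hd0 i}, ⟨?_, ?_⟩, ?_, ?_, ?_⟩
  · rintro M ⟨i, hvi, rfl⟩
    constructor
    · exact fun e he => he.1
    · intro v
      obtain ⟨hadj, hcl⟩ := partner_spec hd hd'0 v i hvi
      refine ⟨s(v, partner d d' v i), ⟨(CC_mem hd0 i _ _).mpr ⟨hadj, hcl⟩,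
        Sym2.mem_mk_left _ _⟩, ?_⟩
      rintro e ⟨heM, hve⟩
      obtain ⟨u, rfl⟩ := Sym2.mem_iff_exists.mp hve
      obtain ⟨hA2, hC2⟩ := (CC_mem hd0 i v u).mp heM
      have h9 := (cl_spec hd hd'0 hA2).2
      rw [hC2] at h9
      rw [h9]
  · intro e
    induction e using Sym2.ind with
    | _ x y =>
      intro he
      have hA : (G d d').Adj x y := (G d d').mem_edgeSet.mp he
      refine ⟨CC hd0 (cl d d' x y), ⟨⟨cl d d' x y, (cl_spec hd hd'0 hA).1, rfl⟩,
        (CC_mem hd0 _ x y).mpr ⟨hA, rfl⟩⟩, ?_⟩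
      rintro M ⟨⟨i, hvi, rfl⟩, hin⟩
      obtain ⟨_, hC⟩ := (CC_mem hd0 i x y).mp hin
      rw [hC]
  · intro a u v
    exact adj_shift _ u v
  · rintro a M ⟨i, hvi, rfl⟩
    refine ⟨actI d d' (Multiplicative.toAdd a) i,
      (valid_act _ i).mpr hvi, ?_⟩
    rw [← CC_shift hd0 (Multiplicative.toAdd a) i]
    rfl
  · intro u v
    refine ⟨Multiplicative.ofAdd (v - u), ?_, ?_⟩
    · show u + Multiplicative.toAdd (Multiplicative.ofAdd (v - u)) = v
      rw [toAdd_ofAdd]; ring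
    · intro b hb
      have hb' : u + Multiplicative.toAdd b = v := hb
      have h9 : Multiplicative.toAdd b = v - u := by rw [← hb']; ring
      exact Multiplicative.toAdd.injective (by rw [h9, toAdd_ofAdd])

end main

theorem transport {V W : Type*} {Γ : SimpleGraph V} {Γ' : SimpleGraph W} (e : Γ ≃g Γ')
    {A : Type*} [Group A] (h : HasRegularOneFactorization Γ A) :
    HasRegularOneFactorization Γ' A := by
  obtain ⟨φ, F, ⟨⟨hfac, hcov⟩, hadj, hmap, hsharp⟩⟩ := h
  have hinjV : Function.Injective (⇑e : V → W) := e.toEquiv.injective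
  have hinj : Function.Injective (Sym2.map (⇑e : V → W)) := Sym2.map.injective hinjV
  have hedge : ∀ z : Sym2 V, Sym2.map (⇑e) z ∈ Γ'.edgeSet ↔ z ∈ Γ.edgeSet := by
    intro z
    induction z using Sym2.ind with
    | _ x y =>
      rw [Sym2.map_pair_eq, SimpleGraph.mem_edgeSet, SimpleGraph.mem_edgeSet]
      exact e.map_adj_iff
  have happly : ∀ x : V, e.toEquiv x = e x := fun _ => rfl
  have hsymm_apply : ∀ w : W, e (e.toEquiv.symm w) = w := fun w => e.toEquiv.apply_symm_apply w
  have hsymm_apply2 : ∀ x : V, e.toEquiv.symm (e x) = x := fun x => e.toEquiv.symm_apply_apply x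
  refine ⟨{ toFun := fun a => e.toEquiv.symm.trans ((φ a).trans e.toEquiv),
            map_one' := by
              ext w
              show e ((φ 1) (e.toEquiv.symm w)) = w
              rw [map_one φ]
              exact hsymm_apply w,
            map_mul' := fun a b => by
              ext w
              show e ((φ (a*b)) (e.toEquiv.symm w))
                = e ((φ a) (e.toEquiv.symm (e ((φ b) (e.toEquiv.symm w)))))
              rw [hsymm_apply2, map_mul φ]
              rfl },
        (fun M => Sym2.map (⇑e) '' M) '' F, ⟨?_, ?_⟩, ?_, ?_, ?_⟩
  · rintro M' ⟨M, hM, rfl⟩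
    constructor
    · rintro e' ⟨z, hz, rfl⟩
      exact (hedge z).mpr ((hfac M hM).1 hz)
    · intro w
      obtain ⟨z₀, ⟨hz₀M, hz₀mem⟩, huniq⟩ := (hfac M hM).2 (e.toEquiv.symm w)
      refine ⟨Sym2.map (⇑e) z₀, ⟨⟨z₀, hz₀M, rfl⟩, ?_⟩, ?_⟩
      · exact Sym2.mem_map.mpr ⟨e.toEquiv.symm w, hz₀mem, hsymm_apply w⟩
      · rintro e' ⟨⟨z, hzM, rfl⟩, hwz⟩
        obtain ⟨y, hyz, hyw⟩ := Sym2.mem_map.mp hwz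
        have hy : y = e.toEquiv.symm w := by
          apply hinjV
          rw [hyw, hsymm_apply]
        rw [hy] at hyz
        rw [huniq z ⟨hzM, hyz⟩]
  · intro e' he'
    have hrep : e' = Sym2.map (⇑e) (Sym2.map (⇑e.toEquiv.symm) e') := by
      rw [Sym2.map_map]
      have hcomp : (⇑e : V → W) ∘ (⇑e.toEquiv.symm) = id := by
        funext w; exact hsymm_apply w
      rw [hcomp, Sym2.map_id]
      rfl
    have hz : Sym2.map (⇑e.toEquiv.symm) e' ∈ Γ.edgeSet := by
      rw [← hedge, ← hrep]; exact he'
    obtain ⟨M, ⟨hMF, hzM⟩, hMuniq⟩ := hcov _ hz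
    refine ⟨Sym2.map (⇑e) '' M, ⟨⟨M, hMF, rfl⟩, ⟨_, hzM, hrep.symm⟩⟩, ?_⟩
    rintro M' ⟨⟨Mo, hMo, rfl⟩, he'M⟩
    obtain ⟨z', hz'Mo, hz'e⟩ := he'M
    have hz'' : z' = Sym2.map (⇑e.toEquiv.symm) e' := by
      apply hinj
      rw [hz'e, ← hrep]
    rw [hz''] at hz'Mo
    rw [hMuniq Mo ⟨hMo, hz'Mo⟩]
  · intro a u v
    show Γ'.Adj (e ((φ a) (e.toEquiv.symm u))) (e ((φ a) (e.toEquiv.symm v))) ↔ _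
    rw [e.map_adj_iff, hadj a]
    constructor
    · intro hh
      have := e.map_adj_iff.mpr hh
      rwa [hsymm_apply, hsymm_apply] at this
    · intro hh
      apply e.map_adj_iff.mp
      rwa [hsymm_apply, hsymm_apply]
  · rintro a M' ⟨M, hM, rfl⟩
    refine ⟨Sym2.map (⇑(φ a)) '' M, hmap a M hM, ?_⟩
    show Sym2.map (⇑e) '' (Sym2.map (⇑(φ a)) '' M)
        = Sym2.map (⇑(e.toEquiv.symm.trans ((φ a).trans e.toEquiv))) '' (Sym2.map (⇑e) '' M)
    have hfun : (Sym2.map (⇑e)) ∘ (Sym2.map (⇑(φ a)))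
        = (Sym2.map (⇑(e.toEquiv.symm.trans ((φ a).trans e.toEquiv)))) ∘ (Sym2.map (⇑e)) := by
      funext z
      show Sym2.map (⇑e) (Sym2.map (⇑(φ a)) z)
          = Sym2.map (⇑(e.toEquiv.symm.trans ((φ a).trans e.toEquiv))) (Sym2.map (⇑e) z)
      rw [Sym2.map_map, Sym2.map_map]
      apply congrFun
      apply congrArg
      funext x
      show e ((φ a) x) = e ((φ a) (e.toEquiv.symm (e x)))
      rw [hsymm_apply2]
    rw [← Set.image_comp, ← Set.image_comp, hfun]
  · intro u v
    obtain ⟨a₀, ha₀, hun⟩ := hsharp (e.toEquiv.symm u) (e.toEquiv.symm v)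
    refine ⟨a₀, ?_, ?_⟩
    · show e ((φ a₀) (e.toEquiv.symm u)) = v
      rw [ha₀, hsymm_apply]
    · intro b hb
      apply hun
      have hb' : e ((φ b) (e.toEquiv.symm u)) = v := hb
      have := congrArg e.toEquiv.symm hb'
      rwa [hsymm_apply2] at this

section iso
variable [NeZero (NV d d')]

def bEquiv (hd0 : 0 < d) (hd'0 : 0 < d') : R d d' ≃ Fin (2*d) × Fin (2*d') where
  toFun x := (⟨x.val % (2*d), Nat.mod_lt _ (by omega)⟩,
    ⟨x.val / (2*d), by
      rw [Nat.div_lt_iff_lt_mul (by omega : 0 < 2*d)]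
      have h9 := ZMod.val_lt x
      have h8 : NV d d' = (2*d)*(2*d') := rfl
      have h7 : (2*d')*(2*d) = (2*d)*(2*d') := by ring
      omega⟩)
  invFun p := ((p.1.val + (2*d) * p.2.val : ℕ) : R d d')
  left_inv x := by
    show (((x.val % (2*d)) + (2*d) * (x.val / (2*d)) : ℕ) : R d d') = x
    rw [Nat.mod_add_div]
    exact ZMod.natCast_rightInverse x
  right_inv p := by
    obtain ⟨⟨i, hi⟩, ⟨j, hj⟩⟩ := p
    have hlt : i + (2*d)*j < NV d d' := by
      have h1 : (2*d)*(j+1) ≤ (2*d)*(2*d') := Nat.mul_le_mul_left _ (by omega)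
      have h2 : (2*d)*(j+1) = (2*d)*j + 2*d := by ring
      show i + 2*d*j < (2*d)*(2*d')
      omega
    have hval : ((i + (2*d)*j : ℕ) : R d d').val = i + (2*d)*j := val_natCast_lt hlt
    have hmod : ((i + (2*d)*j : ℕ) : R d d').val % (2*d) = i := by
      rw [hval, Nat.add_mul_mod_self_left, Nat.mod_eq_of_lt hi]
    have hdiv : ((i + (2*d)*j : ℕ) : R d d').val / (2*d) = j := by
      rw [hval, Nat.add_mul_div_left _ _ (by omega : 0 < 2*d), Nat.div_eq_of_lt hi,
        Nat.zero_add]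
    apply Prod.ext
    · exact Fin.ext hmod
    · exact Fin.ext hdiv

lemma pr1_eq_iff (x y : R d d') :
    pr1 d d' x = pr1 d d' y ↔ x.val % (2*d) = y.val % (2*d) := by
  rw [pr1_val, pr1_val, ZMod.natCast_eq_natCast_iff']

def iso (hd0 : 0 < d) (hd'0 : 0 < d') : G d d' ≃g completeMultipartite (2*d) (2*d') where
  toEquiv := bEquiv hd0 hd'0
  map_rel_iff' := by
    intro x y
    show (¬ _) ↔ (¬ _)
    apply not_congr
    constructor
    · intro h
      apply (pr1_eq_iff x y).mpr
      have := congrArg Fin.val h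
      exact this
    · intro h
      exact Fin.ext ((pr1_eq_iff x y).mp h)

end iso
end CMOF

/-- If `m = 2d` and `n = 2d'` with `d, d'` odd, there exists a cyclic 1-factorization
of `K_{m×n}`. -/
theorem cyclic_oneFactorization_of_two_mul_odd (d d' : ℕ) (hd : Odd d) (hd' : Odd d') :
    HasRegularOneFactorization (completeMultipartite (2 * d) (2 * d'))
      (Multiplicative (ZMod ((2 * d) * (2 * d')))) := by
  have hd0 : 0 < d := hd.pos
  have hd'0 : 0 < d' := hd'.pos
  haveI : NeZero (CMOF.NV d d') := ⟨by
    show (2*d)*(2*d') ≠ 0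
    positivity⟩
  exact CMOF.transport (CMOF.iso hd0 hd'0) (CMOF.mainZ hd hd')
end

section
/- If p is a prime with p ≡ 1 (mod 4), then there is no 1-factorization of the complete multipartite graph K_{p×2} admitting an abelian group of automorphisms acting sharply transitively on the vertex set. -/
open SimpleGraph

lemma card_dvd_of_free (G α : Type) [Group G] [Fintype G] [Fintype α] [MulAction G α]
    (h : ∀ (g : G) (v : α), g • v = v → g = 1) : Fintype.card G ∣ Fintype.card α := by
  classical
  have hstab : ∀ v : α, MulAction.stabilizer G v = ⊥ := by
    intro v
    ext g
    simp only [MulAction.mem_stabilizer_iff, Subgroup.mem_bot]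
    exact ⟨h g v, fun hg => by rw [hg, one_smul]⟩
  haveI : Fintype (MulAction.orbitRel.Quotient G α) := Fintype.ofFinite _
  haveI : ∀ b : α, Fintype (MulAction.stabilizer G b) := fun b => Fintype.ofFinite _
  rw [MulAction.card_eq_sum_card_group_div_card_stabilizer G α]
  have key : ∀ ω : MulAction.orbitRel.Quotient G α,
      Fintype.card G / Fintype.card (MulAction.stabilizer G (Quotient.out ω)) =
        Fintype.card G := by
    intro ω
    have h1 : Fintype.card (MulAction.stabilizer G (Quotient.out ω)) = 1 := by
      rw [Fintype.card_eq_one_iff]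
      refine ⟨1, fun y => Subtype.ext ?_⟩
      simpa using h _ _ (MulAction.mem_stabilizer_iff.mp y.2)
    rw [h1, Nat.div_one]
  rw [Finset.sum_congr rfl fun ω _ => key ω, Finset.sum_const, smul_eq_mul]
  exact Dvd.intro_left _ rfl

lemma four_dvd_card {α : Type} [Fintype α] (f g : α → α)
    (hf : ∀ x, f (f x) = x) (hg : ∀ x, g (g x) = x) (hc : ∀ x, f (g x) = g (f x))
    (hf0 : ∀ x, f x ≠ x) (hg0 : ∀ x, g x ≠ x) (hne : ∀ x, f x ≠ g x) :
    4 ∣ Fintype.card α := by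
  classical
  set K := Multiplicative (ZMod 2 × ZMod 2) with hK
  letI : SMul K α :=
    ⟨fun k x => f^[(Multiplicative.toAdd k).1.val] (g^[(Multiplicative.toAdd k).2.val] x)⟩
  have smul_def : ∀ (k : K) (x : α),
      k • x = f^[(Multiplicative.toAdd k).1.val] (g^[(Multiplicative.toAdd k).2.val] x) :=
    fun _ _ => rfl
  letI : MulAction K α := {
    one_smul := by
      intro x
      rw [smul_def]
      simp
    mul_smul := by
      intro a b x
      rw [smul_def, smul_def, smul_def, toAdd_mul, Prod.fst_add, Prod.snd_add,
        ZMod.val_add, ZMod.val_add]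
      have h1 : (Multiplicative.toAdd a).1.val = 0 ∨ (Multiplicative.toAdd a).1.val = 1 := by
        have := (Multiplicative.toAdd a).1.val_lt; omega
      have h2 : (Multiplicative.toAdd a).2.val = 0 ∨ (Multiplicative.toAdd a).2.val = 1 := by
        have := (Multiplicative.toAdd a).2.val_lt; omega
      have h3 : (Multiplicative.toAdd b).1.val = 0 ∨ (Multiplicative.toAdd b).1.val = 1 := by
        have := (Multiplicative.toAdd b).1.val_lt; omega
      have h4 : (Multiplicative.toAdd b).2.val = 0 ∨ (Multiplicative.toAdd b).2.val = 1 := by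
        have := (Multiplicative.toAdd b).2.val_lt; omega
      rcases h1 with h1 | h1 <;> rcases h2 with h2 | h2 <;>
        rcases h3 with h3 | h3 <;> rcases h4 with h4 | h4 <;>
        rw [h1, h2, h3, h4] <;> norm_num <;> simp [hf, hg, hc] }
  have hfree : ∀ (k : K) (v : α), k • v = v → k = 1 := by
    intro k v hkv
    rw [smul_def] at hkv
    have h1 : (Multiplicative.toAdd k).1.val = 0 ∨ (Multiplicative.toAdd k).1.val = 1 := by
      have := (Multiplicative.toAdd k).1.val_lt; omega
    have h2 : (Multiplicative.toAdd k).2.val = 0 ∨ (Multiplicative.toAdd k).2.val = 1 := by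
      have := (Multiplicative.toAdd k).2.val_lt; omega
    have hiz : (Multiplicative.toAdd k).1.val = 0 ∧ (Multiplicative.toAdd k).2.val = 0 := by
      rcases h1 with h1 | h1 <;> rcases h2 with h2 | h2
      · exact ⟨h1, h2⟩
      · rw [h1, h2] at hkv
        simp at hkv
        exact absurd hkv (hg0 v)
      · rw [h1, h2] at hkv
        simp at hkv
        exact absurd hkv (hf0 v)
      · rw [h1, h2] at hkv
        simp at hkv
        have : f (f (g v)) = f v := congrArg f hkv
        rw [hf] at this
        exact absurd this.symm (hne v)
    have h0 : Multiplicative.toAdd k = 0 :=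
      Prod.ext ((ZMod.val_eq_zero _).mp hiz.1) ((ZMod.val_eq_zero _).mp hiz.2)
    rw [← ofAdd_toAdd k, h0, ofAdd_zero]
  have := card_dvd_of_free K α hfree
  simpa [hK] using this

/-- If `p` is a prime with `p ≡ 1 (mod 4)`, there is no 1-factorization of `K_{p×2}`
with an abelian group acting sharply transitively on the vertices. -/
theorem no_abelian_oneFactorization_prime (p : ℕ) (hp : p.Prime) (hp4 : p % 4 = 1) :
    ∀ (A : Type) [CommGroup A],
      ¬ HasRegularOneFactorization (completeMultipartite p 2) A := by
  intro A _ hreg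
  obtain ⟨φ, F, ⟨⟨hfac, huniq⟩, hadj, hinv, htrans⟩⟩ := hreg
  classical
  set Γ := completeMultipartite p 2 with hΓ
  have hp1 : 1 < p := hp.one_lt
  have hp0 : 0 < p := hp.pos
  have hpodd : p % 2 = 1 := by omega
  -- the "partner" involution
  set π : Fin p × Fin 2 → Fin p × Fin 2 := fun v => (v.1, v.2 + 1) with hπdef
  have hfin2a : ∀ i : Fin 2, i + 1 + 1 = i := by decide
  have hfin2b : ∀ i : Fin 2, i + 1 ≠ i := by decide
  have hfin2c : ∀ i j : Fin 2, i ≠ j → j = i + 1 := by decide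
  have πinvol : ∀ v, π (π v) = v := fun v => Prod.ext rfl (hfin2a v.2)
  have πne : ∀ v, π v ≠ v := fun v h => hfin2b v.2 (congrArg Prod.snd h)
  have not_adj_π : ∀ v, ¬ Γ.Adj v (π v) := fun v h => h rfl
  have eq_π_of : ∀ u v : Fin p × Fin 2, ¬ Γ.Adj u v → u ≠ v → v = π u := by
    intro u v hna hne
    have h1 : u.1 = v.1 := not_not.mp hna
    have h2 : v.2 = u.2 + 1 := hfin2c u.2 v.2 (fun h => hne (Prod.ext h1 h))
    exact Prod.ext h1.symm h2
  have adj_of : ∀ u v, v ≠ u → v ≠ π u → Γ.Adj u v := by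
    intro u v h1 h2
    by_contra hna
    exact h2 (eq_π_of u v hna fun h => h1 h.symm)
  -- basic facts about φ
  have φmul : ∀ (a c : A) (x), φ (a * c) x = φ a (φ c x) := by
    intro a c x; rw [map_mul]; rfl
  have φone : ∀ x, φ 1 x = x := by intro x; rw [map_one]; rfl
  have free : ∀ (a : A) x, φ a x = x → a = 1 := by
    intro a x h
    obtain ⟨c, hc, hu⟩ := htrans x x
    rw [hu a h, hu 1 (φone x)]
  have φinj : ∀ a : A, Function.Injective (φ a) := fun a => (φ a).injective
  have φπ : ∀ (a : A) v, φ a (π v) = π (φ a v) := by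
    intro a v
    apply eq_π_of
    · rw [hadj a]
      exact not_adj_π v
    · intro h
      exact πne v (φinj a h.symm)
  -- base point and bijection A ≃ V
  set x₀ : Fin p × Fin 2 := (⟨0, hp0⟩, 0) with hx₀
  have hbij : Function.Bijective (fun a : A => φ a x₀) := by
    constructor
    · intro a c h
      obtain ⟨d, hd, hu⟩ := htrans x₀ (φ c x₀)
      rw [hu a h, hu c rfl]
    · intro v
      obtain ⟨a, ha, -⟩ := htrans x₀ v
      exact ⟨a, ha⟩
  haveI : Finite A := Finite.of_injective _ hbij.injective
  haveI : Fintype A := Fintype.ofFinite A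
  have cardA : Fintype.card A = p * 2 := by
    rw [Fintype.card_of_bijective hbij, Fintype.card_prod, Fintype.card_fin, Fintype.card_fin]
  -- the unique involution s with φ s = π
  obtain ⟨s, hs, hsu⟩ := htrans x₀ (π x₀)
  have φs : ∀ v, φ s v = π v := by
    intro v
    obtain ⟨a, ha, -⟩ := htrans x₀ v
    calc φ s v = φ s (φ a x₀) := by rw [ha]
    _ = φ (s * a) x₀ := (φmul s a x₀).symm
    _ = φ (a * s) x₀ := by rw [mul_comm]
    _ = φ a (φ s x₀) := φmul a s x₀
    _ = φ a (π x₀) := by rw [hs]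
    _ = π (φ a x₀) := φπ a x₀
    _ = π v := by rw [ha]
  have hs1 : s ≠ 1 := by
    intro h
    rw [h, φone] at hs
    exact πne x₀ hs.symm
  have hss : s * s = 1 := by
    apply free _ x₀
    rw [φmul, φs, φs, πinvol]
  -- uniqueness of the involution s
  haveI := Fact.mk Nat.prime_two
  haveI := Fact.mk hp
  have invol_unique : ∀ t : A, t * t = 1 → t ≠ 1 → t = s := by
    intro t htt ht1
    by_contra hts
    set Kg : Subgroup A :=
      { carrier := {x : A | x * x = 1}
        one_mem' := by simp
        mul_mem' := by
          intro a c ha hc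
          simp only [Set.mem_setOf_eq] at *
          rw [mul_mul_mul_comm, ha, hc, one_mul]
        inv_mem' := by
          intro a ha
          simp only [Set.mem_setOf_eq] at *
          rw [← mul_inv_rev, ha, inv_one] } with hKg
    have memKg : ∀ x : A, x ∈ Kg ↔ x * x = 1 := fun x => Iff.rfl
    have hpg : IsPGroup 2 Kg := by
      intro g
      refine ⟨1, ?_⟩
      have hg : (g : A) * (g : A) = 1 := g.2
      ext
      push_cast
      rw [pow_two, hg]
    obtain ⟨n, hn⟩ := IsPGroup.iff_card.mp hpg
    have hdvd : Nat.card Kg ∣ p * 2 := by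
      have := Subgroup.card_subgroup_dvd_card Kg
      rwa [Nat.card_eq_fintype_card (α := A), cardA] at this
    have hle : Nat.card Kg ≤ 2 := by
      rw [hn] at hdvd ⊢
      rcases n with _ | n
      · norm_num
      rcases n with _ | n
      · norm_num
      exfalso
      have h4 : (4 : ℕ) ∣ p * 2 := dvd_trans (by
        have : (2:ℕ)^2 ∣ 2 ^ (n + 1 + 1) := pow_dvd_pow 2 (by omega)
        simpa using this) hdvd
      obtain ⟨c, hc⟩ := h4
      omega
    have h3 : 2 < Nat.card Kg := by
      rw [Nat.card_eq_fintype_card, Fintype.two_lt_card_iff]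
      refine ⟨⟨1, by simp [memKg]⟩, ⟨s, (memKg s).mpr hss⟩, ⟨t, (memKg t).mpr htt⟩, ?_, ?_, ?_⟩
      · intro h
        exact hs1 (congrArg Subtype.val h).symm
      · intro h
        exact ht1 (congrArg Subtype.val h).symm
      · intro h
        exact hts (congrArg Subtype.val h).symm
    omega
  -- element of order p (Cauchy)
  obtain ⟨b, hb⟩ := exists_prime_orderOf_dvd_card p (by rw [cardA]; exact dvd_mul_right p 2)
  have hbp : b ^ p = 1 := by rw [← hb]; exact pow_orderOf_eq_one b
  have hb1 : b ≠ 1 := by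
    intro h
    rw [h, orderOf_one] at hb
    omega
  have hbs : b ≠ s := by
    intro h
    have h2 : b * b = 1 := by rw [h]; exact hss
    have h3 : orderOf b ∣ 2 := orderOf_dvd_of_pow_eq_one (by rwa [pow_two])
    rw [hb] at h3
    have := Nat.le_of_dvd (by norm_num) h3
    omega
  -- the edge {x₀, φ b x₀} and its factor M
  set v₁ := φ b x₀ with hv₁
  have hadj₀ : Γ.Adj x₀ v₁ := by
    apply adj_of
    · intro h
      exact hb1 (free b x₀ h)
    · intro h
      apply hbs
      apply hbij.injective
      show φ b x₀ = φ s x₀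
      rw [hs, ← h]
  have he₀ : s(x₀, v₁) ∈ Γ.edgeSet := Γ.mem_edgeSet.mpr hadj₀
  obtain ⟨M, ⟨hMF, hMe⟩, -⟩ := huniq _ he₀
  -- the action on sets of edges
  have comp : ∀ (a c : A) (N : Set (Sym2 (Fin p × Fin 2))),
      Sym2.map (φ a) '' (Sym2.map (φ c) '' N) = Sym2.map (φ (a * c)) '' N := by
    intro a c N
    rw [Set.image_image]
    apply Set.image_congr'
    intro e
    rw [Sym2.map_map]
    congr 1
    funext x
    exact (φmul a c x).symm
  have mapone : ∀ N : Set (Sym2 (Fin p × Fin 2)), Sym2.map (φ 1) '' N = N := by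
    intro N
    have h1 : (φ 1 : Equiv.Perm (Fin p × Fin 2)) = 1 := map_one φ
    rw [h1]
    have : ⇑(1 : Equiv.Perm (Fin p × Fin 2)) = id := rfl
    rw [this, Sym2.map_id, Set.image_id]
  -- stabilizer of M
  set St : Subgroup A :=
    { carrier := {a : A | Sym2.map (φ a) '' M = M}
      one_mem' := mapone M
      mul_mem' := by
        intro a c ha hc
        simp only [Set.mem_setOf_eq] at *
        rw [← comp, hc, ha]
      inv_mem' := by
        intro a ha
        simp only [Set.mem_setOf_eq] at *
        conv_lhs => rw [← ha]
        rw [comp, inv_mul_cancel, mapone] } with hSt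
  have memSt : ∀ a : A, a ∈ St ↔ Sym2.map (φ a) '' M = M := fun a => Iff.rfl
  -- the stabilizer is nontrivial
  have hNa : ∀ a : A, Sym2.map (φ a) '' M ∈ F := fun a => hinv a M hMF
  have exg : ∀ a : A, ∃ w, s(x₀, w) ∈ Sym2.map (φ a) '' M ∧ Γ.Adj x₀ w := by
    intro a
    obtain ⟨e, ⟨heN, hxe⟩, -⟩ := (hfac _ (hNa a)).2 x₀
    refine ⟨Sym2.Mem.other hxe, ?_, ?_⟩
    · rw [Sym2.other_spec hxe]; exact heN
    · have h1 : e ∈ Γ.edgeSet := (hfac _ (hNa a)).1 heN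
      rw [← Sym2.other_spec hxe] at h1
      exact Γ.mem_edgeSet.mp h1
  choose g hg1 hg2 using exg
  have hStbot : St ≠ ⊥ := by
    intro hbot
    have ginj : Function.Injective g := by
      intro a c h
      have e2 : s(x₀, g a) ∈ Sym2.map (φ c) '' M := by rw [h]; exact hg1 c
      obtain ⟨N, -, hNu⟩ := huniq _ (Γ.mem_edgeSet.mpr (hg2 a))
      have hNN : Sym2.map (φ a) '' M = Sym2.map (φ c) '' M := by
        rw [hNu _ ⟨hNa a, hg1 a⟩, hNu _ ⟨hNa c, e2⟩]
      have hmem : c⁻¹ * a ∈ St := by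
        rw [memSt, ← comp, hNN, comp, inv_mul_cancel, mapone]
      rw [hbot, Subgroup.mem_bot, inv_mul_eq_one] at hmem
      exact hmem.symm
    set ε := Equiv.ofBijective _ hbij
    have finj : Function.Injective (g ∘ ε.symm) := ginj.comp ε.symm.injective
    have fsurj : Function.Surjective (g ∘ ε.symm) := Finite.surjective_of_injective finj
    obtain ⟨u, hu⟩ := fsurj x₀
    exact (hg2 (ε.symm u)).ne' hu
  -- s is not in the stabilizer
  have hsSt : s ∉ St := by
    intro hsM
    have hsM' : Sym2.map (φ s) '' M = M := hsM
    have hM2 := (hfac M hMF).2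
    have exμ : ∀ v, ∃ w, s(v, w) ∈ M := by
      intro v
      obtain ⟨e, ⟨heM, hve⟩, -⟩ := hM2 v
      exact ⟨Sym2.Mem.other hve, by rw [Sym2.other_spec hve]; exact heM⟩
    choose μ hμ using exμ
    have μadj : ∀ v, Γ.Adj v (μ v) := fun v => Γ.mem_edgeSet.mp ((hfac M hMF).1 (hμ v))
    have key : ∀ v w, s(v, w) ∈ M → w = μ v := by
      intro v w h
      obtain ⟨e, -, hu⟩ := hM2 v
      have h1 : s(v, w) = e := hu _ ⟨h, Sym2.mem_mk_left v w⟩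
      have h2 : s(v, μ v) = e := hu _ ⟨hμ v, Sym2.mem_mk_left v (μ v)⟩
      rw [← h2] at h1
      rcases Sym2.eq_iff.mp h1 with ⟨-, h'⟩ | ⟨h', -⟩
      · exact h'
      · exact absurd h' (μadj v).ne
    have μinvol : ∀ v, μ (μ v) = v := by
      intro v
      exact (key (μ v) v (by rw [Sym2.eq_swap]; exact hμ v)).symm
    have μπ : ∀ v, μ (π v) = π (μ v) := by
      intro v
      refine (key (π v) (π (μ v)) ?_).symm
      have h1 : Sym2.map (φ s) s(v, μ v) ∈ Sym2.map (φ s) '' M :=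
        Set.mem_image_of_mem _ (hμ v)
      rw [hsM'] at h1
      rwa [Sym2.map_pair_eq, φs, φs] at h1
    have μne : ∀ v, μ v ≠ v := fun v => (μadj v).ne'
    have μneπ : ∀ v, μ v ≠ π v := by
      intro v h
      exact not_adj_π v (h ▸ μadj v)
    have h4 : (4 : ℕ) ∣ Fintype.card (Fin p × Fin 2) :=
      four_dvd_card μ π μinvol πinvol μπ μne πne μneπ
    rw [Fintype.card_prod, Fintype.card_fin, Fintype.card_fin] at h4
    obtain ⟨c, hc⟩ := h4
    omega
  -- the stabilizer has cardinality p
  have hdvdSt : Nat.card St ∣ p * 2 := by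
    have h1 := Subgroup.card_subgroup_dvd_card St
    rwa [Nat.card_eq_fintype_card (α := A), cardA] at h1
  have hSt1 : Nat.card St ≠ 1 := fun h => hStbot (Subgroup.card_eq_one.mp h)
  have hStodd : ¬ 2 ∣ Nat.card St := by
    intro h2
    haveI : Fintype St := Fintype.ofFinite _
    rw [Nat.card_eq_fintype_card] at h2
    obtain ⟨t, ht⟩ := exists_prime_orderOf_dvd_card 2 h2
    have htA : orderOf (t : A) = 2 := by rw [Subgroup.orderOf_coe]; exact ht
    have htt : (t : A) * (t : A) = 1 := by
      rw [← pow_two, ← htA]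
      exact pow_orderOf_eq_one _
    have ht1 : (t : A) ≠ 1 := by
      intro h
      rw [h, orderOf_one] at htA
      omega
    have hts := invol_unique _ htt ht1
    exact hsSt (hts ▸ t.2)
  have hStp : Nat.card St = p := by
    have hcop : Nat.Coprime (Nat.card St) 2 :=
      ((Nat.Prime.coprime_iff_not_dvd Nat.prime_two).mpr hStodd).symm
    have hdvd_p : Nat.card St ∣ p := hcop.dvd_of_dvd_mul_right hdvdSt
    rcases (Nat.Prime.eq_one_or_self_of_dvd hp _ hdvd_p) with h | h
    · exact absurd h hSt1
    · exact h
  -- b lies in the stabilizer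
  have hbSt : b ∈ St := by
    haveI : St.Normal := inferInstance
    have hqp : Nat.card (A ⧸ St) * p = p * 2 := by
      have h1 := Subgroup.card_eq_card_quotient_mul_card_subgroup St
      rw [hStp, Nat.card_eq_fintype_card (α := A), cardA] at h1
      exact h1.symm
    have hq2 : Nat.card (A ⧸ St) = 2 :=
      Nat.eq_of_mul_eq_mul_right hp0 (by rw [hqp]; ring)
    set q : A ⧸ St := QuotientGroup.mk b with hq
    have hqsq : q * q = 1 := by
      have h1 := pow_card_eq_one' (G := A ⧸ St) (x := q)
      rwa [hq2, pow_two] at h1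
    have hqp' : q ^ p = 1 := by
      have h1 : q ^ p = ((b ^ p : A) : A ⧸ St) := by
        rw [hq]
        exact (QuotientGroup.mk_pow St b p).symm
      rw [h1, hbp]
      rfl
    obtain ⟨k, hk⟩ : ∃ k, p = 2 * k + 1 := ⟨p / 2, by omega⟩
    have hq1 : q = 1 := by
      have h1 : q ^ p = q := by
        rw [hk, pow_succ, pow_mul, pow_two, hqsq, one_pow, one_mul]
      rw [← h1, hqp']
    exact (QuotientGroup.eq_one_iff b).mp hq1
  -- final contradiction
  have hbM : Sym2.map (φ b) '' M = M := hbSt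
  have hme : s(v₁, φ b v₁) ∈ M := by
    have h1 := Set.mem_image_of_mem (Sym2.map (φ b)) hMe
    rw [hbM, Sym2.map_pair_eq] at h1
    exact h1
  obtain ⟨e, -, hu⟩ := (hfac M hMF).2 v₁
  have h1 : s(v₁, φ b v₁) = e := hu _ ⟨hme, Sym2.mem_mk_left _ _⟩
  have h2 : s(x₀, v₁) = e := hu _ ⟨hMe, Sym2.mem_mk_right x₀ v₁⟩
  rw [← h2] at h1
  rcases Sym2.eq_iff.mp h1 with ⟨ha, -⟩ | ⟨-, hbb⟩
  · exact hadj₀.ne ha.symm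
  · have h3 : φ (b * b) x₀ = x₀ := by rw [φmul, ← hv₁, hbb]
    have h4 : b * b = 1 := free _ _ h3
    have h5 : orderOf b ∣ 2 := orderOf_dvd_of_pow_eq_one (by rwa [pow_two])
    rw [hb] at h5
    have := Nat.le_of_dvd (by norm_num) h5
    omega
end

section
/- If m ≡ 3 (mod 4) and d is odd, then there is no 1-factorization of the complete multipartite graph K_{m×2d} admitting an abelian group of automorphisms acting sharply transitively on the vertex set. -/
open SimpleGraph

open Finset

open Classical in
noncomputable def partner {V : Type*} (M : Set (Sym2 V)) (x : V) : V :=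
  if h : ∃ y, s(x, y) ∈ M then h.choose else x

lemma partner_eq {V : Type*} {Γ : SimpleGraph V} {M : Set (Sym2 V)}
    (hM : IsOneFactor Γ M) {x y : V} (h : s(x, y) ∈ M) : partner M x = y := by
  have hex : ∃ z, s(x, z) ∈ M := ⟨y, h⟩
  have h1 : s(x, hex.choose) ∈ M := hex.choose_spec
  obtain ⟨e, -, hu⟩ := hM.2 x
  have e1 := hu _ ⟨h1, Sym2.mem_mk_left x _⟩
  have e2 := hu _ ⟨h, Sym2.mem_mk_left x _⟩
  rw [partner, dif_pos hex]
  exact Sym2.congr_right.mp (e1.trans e2.symm)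

lemma partner_mem {V : Type*} {Γ : SimpleGraph V} {M : Set (Sym2 V)}
    (hM : IsOneFactor Γ M) (x : V) : s(x, partner M x) ∈ M := by
  obtain ⟨e, ⟨he, hx⟩, -⟩ := hM.2 x
  have hs := Sym2.other_spec hx
  have h : s(x, Sym2.Mem.other hx) ∈ M := by rw [hs]; exact he
  rw [partner_eq hM h]; exact h

lemma partner_adj {V : Type*} {Γ : SimpleGraph V} {M : Set (Sym2 V)}
    (hM : IsOneFactor Γ M) (x : V) : Γ.Adj x (partner M x) :=
  (SimpleGraph.mem_edgeSet Γ).mp (hM.1 (partner_mem hM x))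

lemma partner_invol {V : Type*} {Γ : SimpleGraph V} {M : Set (Sym2 V)}
    (hM : IsOneFactor Γ M) (x : V) : partner M (partner M x) = x :=
  partner_eq hM (by rw [Sym2.eq_swap]; exact partner_mem hM x)

lemma even_card_of_free_involution {α : Type*} [DecidableEq α] (u : Finset α) (f : α → α)
    (hmem : ∀ x ∈ u, f x ∈ u) (hinv : ∀ x ∈ u, f (f x) = x) (hne : ∀ x ∈ u, f x ≠ x) :
    Even u.card := by
  induction u using Finset.strongInduction with
  | _ u ih =>
    rcases u.eq_empty_or_nonempty with rfl | ⟨x, hx⟩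
    · simp
    · have hfx : f x ∈ u := hmem x hx
      have hne' : f x ≠ x := hne x hx
      have hfxe : f x ∈ u.erase x := Finset.mem_erase.mpr ⟨hne', hfx⟩
      have hss : (u.erase x).erase (f x) ⊂ u :=
        lt_of_le_of_lt (Finset.erase_subset _ _) (Finset.erase_ssubset hx)
      have hcard : ((u.erase x).erase (f x)).card = u.card - 2 := by
        rw [Finset.card_erase_of_mem hfxe, Finset.card_erase_of_mem hx]; omega
      have h2 : 2 ≤ u.card := by
        have : ({x, f x} : Finset α) ⊆ u := by
          intro y hy; rcases Finset.mem_insert.mp hy with rfl | hy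
          · exact hx
          · rw [Finset.mem_singleton.mp hy]; exact hfx
        have := Finset.card_le_card this
        rwa [Finset.card_pair (Ne.symm hne')] at this
      have hmem' : ∀ y ∈ (u.erase x).erase (f x), y ∈ u := fun y hy =>
        Finset.mem_of_mem_erase (Finset.mem_of_mem_erase hy)
      have heven := ih _ hss
        (fun y hy => by
          have hyu := hmem' y hy
          have hy1 : y ≠ f x := (Finset.mem_erase.mp hy).1
          have hy2 : y ≠ x := (Finset.mem_erase.mp (Finset.mem_of_mem_erase hy)).1
          refine Finset.mem_erase.mpr ⟨?_, Finset.mem_erase.mpr ⟨?_, hmem y hyu⟩⟩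
          · intro h; exact hy2 (by rw [← hinv y hyu, h, hinv x hx])
          · intro h; exact hy1 (by rw [← hinv y hyu, h]))
        (fun y hy => hinv y (hmem' y hy))
        (fun y hy => hne y (hmem' y hy))
      rw [Nat.even_iff] at heven ⊢
      omega

lemma zmod2_aba : ∀ u v : ZMod 2, v + u + v = u := by decide
lemma zmod2_of_one_add_eq_zero : ∀ a : ZMod 2, 1 + a = 0 → a = 1 := by decide
lemma zmod2_shift : ∀ x : ZMod 2, 1 + (x + 1) = x := by decide
lemma zmod2_ne_iff : ∀ x y : ZMod 2, (¬ x = y) ↔ x = y + 1 := by decide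
lemma zmod2_one_add_one : (1 : ZMod 2) + 1 = 0 := by decide
lemma zmod2_eq_one_iff : ∀ x : ZMod 2, x = 1 ↔ ¬ x = 0 := by decide
lemma zmod2_add_left_cancel : ∀ a x y : ZMod 2, a + x = y ↔ x = a + y := by decide

/-- If `m ≡ 3 (mod 4)` and `d` is odd, there is no 1-factorization of `K_{m×2d}` with an
abelian group acting sharply transitively on the vertices. -/
theorem no_abelian_oneFactorization_three_mod_four (m d : ℕ)
    (hm : m % 4 = 3) (hd : Odd d) :
    ∀ (A : Type) [CommGroup A],
      ¬ HasRegularOneFactorization (completeMultipartite m (2 * d)) A := by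
  intro A _ ⟨φ, F, ⟨hfac, hadj, hmap, hreg⟩⟩
  classical
  have hd0 : d ≠ 0 := by rintro rfl; exact (Nat.not_odd_zero) hd
  have hm3 : 3 ≤ m := by omega
  set k : ℕ := m * d with hk
  have hkodd : Odd k := (Nat.odd_iff.mpr (by omega)).mul hd
  set Γ : SimpleGraph (Fin m × Fin (2 * d)) := completeMultipartite m (2 * d) with hΓ
  set v₀ : Fin m × Fin (2 * d) := (⟨0, by omega⟩, ⟨0, by omega⟩) with hv₀
  -- the equivalence A ≃ V
  have hbij : Function.Bijective (fun a : A => φ a v₀) := by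
    constructor
    · intro a b hab
      obtain ⟨c, -, hu⟩ := hreg v₀ (φ b v₀)
      rw [hu a hab, hu b rfl]
    · intro v; exact (hreg v₀ v).exists
  obtain ⟨e, he⟩ : ∃ e : A ≃ (Fin m × Fin (2 * d)), ∀ a, e a = φ a v₀ :=
    ⟨Equiv.ofBijective _ hbij, fun _ => rfl⟩
  haveI : Fintype A := Fintype.ofEquiv _ e.symm
  have hcardV : Fintype.card (Fin m × Fin (2 * d)) = 2 * k := by
    simp only [Fintype.card_prod, Fintype.card_fin, hk]; ring
  have hcardA : Fintype.card A = 2 * k := (Fintype.card_congr e).trans hcardV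
  have hmul : ∀ a b : A, e (a * b) = φ a (e b) := by
    intro a b; rw [he, he, map_mul]; rfl
  have hψ : ∀ x : Fin m × Fin (2 * d), φ (e.symm x) v₀ = x := by
    intro x; rw [← he, Equiv.apply_symm_apply]
  have hφe : ∀ (b : A) (x : Fin m × Fin (2 * d)), e (b * e.symm x) = φ b x := by
    intro b x; rw [hmul, Equiv.apply_symm_apply]
  -- part invariance
  have hpart : ∀ (a : A) (u w : Fin m × Fin (2 * d)), ((φ a u).1 = (φ a w).1) ↔ (u.1 = w.1) :=
    fun a u w => not_iff_not.mp (hadj a u w)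
  have hbase : ∀ (a : A) (x : Fin m × Fin (2 * d)), ((φ a x).1 = x.1) ↔ ((φ a v₀).1 = v₀.1) := by
    intro a x
    obtain ⟨b, rfl⟩ : ∃ b, φ b v₀ = x := ⟨e.symm x, hψ x⟩
    have hcom : φ a (φ b v₀) = φ b (φ a v₀) := by
      rw [← Equiv.Perm.mul_apply, ← map_mul, mul_comm a b, map_mul, Equiv.Perm.mul_apply]
    rw [hcom]
    exact hpart b (φ a v₀) v₀
  -- the subgroup H
  obtain ⟨H, hHmem⟩ : ∃ H : Subgroup A, ∀ a, a ∈ H ↔ (φ a v₀).1 = v₀.1 := by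
    refine ⟨⟨⟨⟨{a | (φ a v₀).1 = v₀.1}, ?_⟩, ?_⟩, ?_⟩, fun a => Iff.rfl⟩
    · rintro a b (ha : _ = _) (hb : _ = _)
      show (φ (a * b) v₀).1 = v₀.1
      rw [map_mul, Equiv.Perm.mul_apply, (hpart a (φ b v₀) v₀).mpr hb]
      exact ha
    · show (φ 1 v₀).1 = v₀.1
      rw [map_one]; rfl
    · rintro a (ha : _ = _)
      show (φ a⁻¹ v₀).1 = v₀.1
      refine (hpart a (φ a⁻¹ v₀) v₀).mp ?_
      rw [← Equiv.Perm.mul_apply, ← map_mul, mul_inv_cancel, map_one]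
      exact ha.symm
  have hHx : ∀ (a : A) (x : Fin m × Fin (2 * d)), a ∈ H ↔ (φ a x).1 = x.1 :=
    fun a x => (hHmem a).trans (hbase a x).symm
  -- cardinality of one part
  have hpartcard : ∀ x : Fin m × Fin (2 * d),
      (univ.filter fun y : Fin m × Fin (2 * d) => y.1 = x.1).card = 2 * d := by
    intro x
    have h2 : (univ.filter fun y : Fin m × Fin (2 * d) => y.1 = x.1).card
        = (univ : Finset (Fin (2 * d))).card := by
      refine Finset.card_bij' (fun y _ => y.2) (fun j _ => (x.1, j)) ?_ ?_ ?_ ?_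
      · intro y _; exact Finset.mem_univ _
      · intro j _
        refine Finset.mem_filter.mpr ⟨Finset.mem_univ _, rfl⟩
      · intro y hy
        have := (Finset.mem_filter.mp hy).2
        exact Prod.ext this.symm rfl
      · intro j _; rfl
    rw [h2, Finset.card_univ, Fintype.card_fin]
  have hcardH : Fintype.card H = 2 * d := by
    have h1 : Fintype.card H = (univ.filter fun a : A => a ∈ H).card :=
      Fintype.card_subtype _
    rw [h1, ← hpartcard v₀]
    refine Finset.card_bij' (fun a _ => e a) (fun y _ => e.symm y) ?_ ?_ ?_ ?_
    · intro a ha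
      refine Finset.mem_filter.mpr ⟨Finset.mem_univ _, ?_⟩
      show (e a).1 = v₀.1
      rw [he]; exact (hHmem a).mp (Finset.mem_filter.mp ha).2
    · intro y hy
      refine Finset.mem_filter.mpr ⟨Finset.mem_univ _, ?_⟩
      show e.symm y ∈ H
      rw [hHmem, ← he, Equiv.apply_symm_apply]
      exact (Finset.mem_filter.mp hy).2
    · intro a _; simp
    · intro y _; simp
  -- the unique involution s
  haveI : Fact (Nat.Prime 2) := ⟨Nat.prime_two⟩
  obtain ⟨s, hs⟩ := exists_prime_orderOf_dvd_card (G := A) 2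
    (by rw [hcardA]; exact dvd_mul_right 2 k)
  have hss : s * s = 1 := by rw [← sq, ← hs]; exact pow_orderOf_eq_one s
  have hs1 : s ≠ 1 := by
    intro h; rw [h, orderOf_one] at hs; omega
  have huniq : ∀ t : A, t * t = 1 → t = 1 ∨ t = s := by
    intro t ht
    by_contra hcon
    push_neg at hcon
    obtain ⟨ht1, hts⟩ := hcon
    obtain ⟨T, hTmem⟩ : ∃ T : Subgroup A, ∀ a, a ∈ T ↔ a * a = 1 := by
      refine ⟨⟨⟨⟨{a | a * a = 1}, ?_⟩, ?_⟩, ?_⟩, fun a => Iff.rfl⟩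
      · rintro a b (ha : _ = _) (hb : _ = _)
        show (a * b) * (a * b) = 1
        rw [mul_mul_mul_comm, ha, hb, one_mul]
      · show (1 : A) * 1 = 1; rw [one_mul]
      · rintro a (ha : _ = _)
        show a⁻¹ * a⁻¹ = 1
        rw [← mul_inv_rev, ha, inv_one]
    have hp : IsPGroup 2 T := by
      intro g
      refine ⟨1, ?_⟩
      have hg := (hTmem (g : A)).mp g.2
      ext
      push_cast
      simpa [pow_two] using hg
    obtain ⟨n, hn⟩ := (IsPGroup.iff_card).mp hp
    have hdvd : Nat.card T ∣ Nat.card A := Subgroup.card_subgroup_dvd_card T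
    rw [hn, Nat.card_eq_fintype_card, hcardA] at hdvd
    have h3 : 3 ≤ Nat.card T := by
      rw [Nat.card_eq_fintype_card]
      have hc : ({(⟨1, T.one_mem⟩ : T), ⟨s, (hTmem s).mpr hss⟩, ⟨t, (hTmem t).mpr ht⟩}
          : Finset T).card = 3 := by
        rw [Finset.card_insert_of_notMem, Finset.card_insert_of_notMem,
          Finset.card_singleton]
        · simp only [Finset.mem_singleton, Subtype.mk.injEq]
          exact fun h => hts (h ▸ rfl) |>.elim
        · simp only [Finset.mem_insert, Finset.mem_singleton, Subtype.mk.injEq]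
          push_neg
          exact ⟨fun h => hs1 h.symm, fun h => ht1 h.symm⟩
      calc 3 = _ := hc.symm
        _ ≤ _ := Finset.card_le_univ _
    rw [hn] at h3
    rcases n with _ | _ | n
    · simp at h3
    · norm_num at h3
    · have h4 : (4 : ℕ) ∣ 2 ^ (n + 2) := ⟨2 ^ n, by ring⟩
      obtain ⟨c, hc⟩ := h4.trans hdvd
      have := Nat.odd_iff.mp hkodd
      omega
  -- the parity homomorphism π
  obtain ⟨π, hπ⟩ : ∃ π : A → ZMod 2, ∀ a, π a = if a ^ k = 1 then 0 else 1 :=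
    ⟨_, fun _ => rfl⟩
  have hsq : ∀ c : A, c ^ k * c ^ k = 1 := by
    intro c
    rw [← pow_add, ← two_mul, ← hcardA]
    exact pow_card_eq_one
  have hπadd : ∀ a b, π (a * b) = π a + π b := by
    intro a b
    have hklemma : ∀ c : A, c ^ k ≠ 1 → c ^ k = s := fun c hc =>
      (huniq _ (hsq c)).resolve_left hc
    rw [hπ, hπ, hπ, mul_pow]
    by_cases ha : a ^ k = 1 <;> by_cases hb : b ^ k = 1
    · simp [ha, hb]
    · simp [ha, hb]
    · simp [ha, hb]
    · rw [hklemma a ha, hklemma b hb, hss]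
      simp [hs1]
      try exact zmod2_one_add_one.symm
  have hπs : π s = 1 := by
    obtain ⟨t, ht⟩ := hkodd
    have hsk : s ^ k = s := by
      rw [ht, pow_add, pow_mul, pow_two, hss, one_pow, pow_one, one_mul]
    rw [hπ, hsk, if_neg hs1]
  -- s lies in H
  have hsH : s ∈ H := by
    obtain ⟨t, ht⟩ := exists_prime_orderOf_dvd_card (G := H) 2
      (by rw [hcardH]; exact dvd_mul_right 2 d)
    have htt : (t : A) * t = 1 := by
      have h2 : t * t = 1 := by rw [← pow_two, ← ht]; exact pow_orderOf_eq_one t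
      exact_mod_cast congrArg (Subtype.val) h2
    have ht1 : (t : A) ≠ 1 := by
      intro h
      have : t = (1 : H) := Subtype.ext h
      rw [this, orderOf_one] at ht
      omega
    rcases huniq t htt with h | h
    · exact absurd h ht1
    · exact h ▸ t.2
  -- fiber counts
  have hfib : ∀ (u : Finset A), (∀ a ∈ u, s * a ∈ u) → ∀ c : ZMod 2,
      (u.filter fun a => π a = c).card * 2 = u.card := by
    intro u hu c
    have hbijc : ∀ c' : ZMod 2,
        (u.filter fun a => π a = c').card = (u.filter fun a => π a = c' + 1).card := by
      intro c'
      refine Finset.card_bij' (fun a _ => s * a) (fun a _ => s * a) ?_ ?_ ?_ ?_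
      · intro a ha
        obtain ⟨hau, hac⟩ := Finset.mem_filter.mp ha
        refine Finset.mem_filter.mpr ⟨hu a hau, ?_⟩
        show π (s * a) = c' + 1
        rw [hπadd, hπs, hac, add_comm]
      · intro a ha
        obtain ⟨hau, hac⟩ := Finset.mem_filter.mp ha
        refine Finset.mem_filter.mpr ⟨hu a hau, ?_⟩
        show π (s * a) = c'
        rw [hπadd, hπs, hac]
        exact zmod2_shift c'
      · intro a _
        show s * (s * a) = a
        rw [← mul_assoc, hss, one_mul]
      · intro a _
        show s * (s * a) = a
        rw [← mul_assoc, hss, one_mul]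
    have hneg : (u.filter fun a => ¬ π a = c).card = (u.filter fun a => π a = c + 1).card := by
      congr 1
      apply Finset.filter_congr
      intro a _
      simp only [zmod2_ne_iff]
    have hsplit : (u.filter fun a => π a = c).card
        + (u.filter fun a => ¬ π a = c).card = u.card :=
      Finset.card_filter_add_card_filter_not _
    rw [hneg, ← hbijc c] at hsplit
    omega
  have hfibA : ∀ c : ZMod 2, (univ.filter fun a : A => π a = c).card = k := by
    intro c
    have h1 := hfib univ (fun a _ => Finset.mem_univ _) c
    rw [Finset.card_univ, hcardA] at h1
    omega
  have hfibH : ∀ c : ZMod 2, (univ.filter fun a : A => a ∈ H ∧ π a = c).card = d := by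
    intro c
    have h1 := hfib (univ.filter fun a : A => a ∈ H)
      (fun a ha => Finset.mem_filter.mpr ⟨Finset.mem_univ _,
        H.mul_mem hsH (Finset.mem_filter.mp ha).2⟩) c
    rw [Finset.filter_filter] at h1
    have h2 : (univ.filter fun a : A => a ∈ H).card = 2 * d := by
      rw [← hcardH]
      exact (Fintype.card_subtype _).symm
    rw [h2] at h1
    omega
  -- the parity function on vertices
  obtain ⟨ε, hε⟩ : ∃ ε : (Fin m × Fin (2 * d)) → ZMod 2, ∀ x, ε x = π (e.symm x) :=
    ⟨_, fun _ => rfl⟩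
  have hεφ : ∀ (b : A) (x : Fin m × Fin (2 * d)), ε (φ b x) = π b + ε x := by
    intro b x
    rw [hε, hε, ← hφe b x, Equiv.symm_apply_apply, hπadd]
  have hfibV : ∀ c : ZMod 2,
      (univ.filter fun x : Fin m × Fin (2 * d) => ε x = c).card = k := by
    intro c
    rw [← hfibA c]
    refine Finset.card_bij' (fun x _ => e.symm x) (fun a _ => e a) ?_ ?_ ?_ ?_
    · intro x hx
      refine Finset.mem_filter.mpr ⟨Finset.mem_univ _, ?_⟩
      show π (e.symm x) = c
      rw [← hε]; exact (Finset.mem_filter.mp hx).2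
    · intro a ha
      refine Finset.mem_filter.mpr ⟨Finset.mem_univ _, ?_⟩
      show ε (e a) = c
      rw [hε, Equiv.symm_apply_apply]; exact (Finset.mem_filter.mp ha).2
    · intro x _; simp
    · intro a _; simp
  have hfibpart : ∀ (x : Fin m × Fin (2 * d)) (c : ZMod 2),
      (univ.filter fun y : Fin m × Fin (2 * d) => ε y = c ∧ y.1 = x.1).card = d := by
    intro x c
    have hcards : (univ.filter fun y : Fin m × Fin (2 * d) => ε y = c ∧ y.1 = x.1).card
        = (univ.filter fun a : A => a ∈ H ∧ π a = ε x + c).card := by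
      refine Finset.card_bij' (fun y _ => e.symm y * (e.symm x)⁻¹)
        (fun b _ => e (b * e.symm x)) ?_ ?_ ?_ ?_
      · intro y hy
        obtain ⟨-, hy1, hy2⟩ := Finset.mem_filter.mp hy
        have hby : e (e.symm y * (e.symm x)⁻¹ * e.symm x) = y := by
          rw [inv_mul_cancel_right, Equiv.apply_symm_apply]
        refine Finset.mem_filter.mpr ⟨Finset.mem_univ _, ?_, ?_⟩
        · show e.symm y * (e.symm x)⁻¹ ∈ H
          rw [hHx _ x, ← hφe, hby]
          exact hy2
        · show π (e.symm y * (e.symm x)⁻¹) = ε x + c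
          have hεy : ε y = π (e.symm y * (e.symm x)⁻¹) + ε x := by
            conv_lhs => rw [← hby]
            rw [hε, Equiv.symm_apply_apply, hπadd, ← hε]
          rw [add_comm] at hεy
          exact (zmod2_add_left_cancel _ _ _).mp (hεy ▸ hy1)
      · intro b hb
        obtain ⟨-, hb1, hb2⟩ := Finset.mem_filter.mp hb
        refine Finset.mem_filter.mpr ⟨Finset.mem_univ _, ?_, ?_⟩
        · show ε (e (b * e.symm x)) = c
          rw [hε, Equiv.symm_apply_apply, hπadd, ← hε, hb2]
          exact zmod2_aba c (ε x)
        · show (e (b * e.symm x)).1 = x.1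
          rw [hφe]
          exact (hHx b x).mp hb1
      · intro y _
        show e (e.symm y * (e.symm x)⁻¹ * e.symm x) = y
        rw [inv_mul_cancel_right, Equiv.apply_symm_apply]
      · intro b _
        show e.symm (e (b * e.symm x)) * (e.symm x)⁻¹ = b
        rw [Equiv.symm_apply_apply, mul_inv_cancel_right]
    rw [hcards]
    exact hfibH _
  have hnbr : ∀ (x : Fin m × Fin (2 * d)) (c : ZMod 2),
      (univ.filter fun y : Fin m × Fin (2 * d) => ε y = c ∧ ¬ y.1 = x.1).card = k - d := by
    intro x c
    have hsp : (((univ.filter fun y : Fin m × Fin (2 * d) => ε y = c)).filter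
          fun y => y.1 = x.1).card
        + (((univ.filter fun y : Fin m × Fin (2 * d) => ε y = c)).filter
          fun y => ¬ y.1 = x.1).card
        = ((univ.filter fun y : Fin m × Fin (2 * d) => ε y = c)).card :=
      Finset.card_filter_add_card_filter_not _
    rw [Finset.filter_filter, Finset.filter_filter, hfibV c, hfibpart x c] at hsp
    omega
  -- factorization machinery
  have hfacM : ∀ M ∈ F, IsOneFactor Γ M := hfac.1
  have hFfin : F.Finite := Set.toFinite F
  obtain ⟨FF, hFF⟩ : ∃ FF : Finset (Set (Sym2 (Fin m × Fin (2 * d)))),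
      ∀ M, M ∈ FF ↔ M ∈ F := ⟨hFfin.toFinset, fun M => Set.Finite.mem_toFinset hFfin⟩
  obtain ⟨fOf, hfOf⟩ : ∃ fOf : Sym2 (Fin m × Fin (2 * d)) → Set (Sym2 (Fin m × Fin (2 * d))),
      ∀ E, E ∈ Γ.edgeSet → fOf E ∈ F ∧ E ∈ fOf E ∧ ∀ N, N ∈ F → E ∈ N → N = fOf E := by
    refine ⟨fun E => if hE : E ∈ Γ.edgeSet then (hfac.2 E hE).choose else ∅, ?_⟩
    intro E hE
    dsimp only
    rw [dif_pos hE]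
    obtain ⟨⟨h1, h2⟩, h3⟩ := (hfac.2 E hE).choose_spec
    exact ⟨h1, h2, fun N hN hEN => h3 N ⟨hN, hEN⟩⟩
  have hs2perm : ∀ x : Fin m × Fin (2 * d), φ s (φ s x) = x := by
    intro x
    rw [← Equiv.Perm.mul_apply, ← map_mul, hss, map_one]
    rfl
  have hsfix1 : ∀ x : Fin m × Fin (2 * d), (φ s x).1 = x.1 := fun x => (hHx s x).mp hsH
  have hpσ : ∀ M, M ∈ F → ∀ x, partner (Sym2.map (φ s) '' M) x
      = φ s (partner M (φ s x)) := by
    intro M hM x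
    refine partner_eq (hfacM _ (hmap s M hM)) ?_
    refine (Set.mem_image _ _ _).mpr ⟨s(φ s x, partner M (φ s x)), partner_mem (hfacM M hM) _, ?_⟩
    rw [Sym2.map_pair_eq, hs2perm]
  obtain ⟨c, hc⟩ : ∃ c : Set (Sym2 (Fin m × Fin (2 * d))) → ℕ, ∀ M, c M =
      (univ.filter fun x => ε x = 1 ∧ ε (partner M x) = 0).card := ⟨_, fun _ => rfl⟩
  -- each factor has an odd crossing count
  have hcodd : ∀ M, M ∈ F → Odd (c M) := by
    intro M hM
    have hp := hfacM M hM
    have heven : Even ((univ.filter fun x => ε x = 1 ∧ ε (partner M x) = 1).card) := by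
      refine even_card_of_free_involution _ (partner M) ?_ ?_ ?_
      · intro x hx
        obtain ⟨-, h1, h2⟩ := Finset.mem_filter.mp hx
        exact Finset.mem_filter.mpr ⟨Finset.mem_univ _, h2,
          by rw [partner_invol hp]; exact h1⟩
      · intro x _; exact partner_invol hp x
      · intro x _
        intro hcon
        have hcon' : partner M x = x := hcon
        have h3 := partner_adj hp x
        rw [hcon'] at h3
        exact Γ.loopless.irrefl x h3
    have hsp : ((univ.filter fun x => ε x = 1).filter fun x => ε (partner M x) = 0).card
        + ((univ.filter fun x => ε x = 1).filter fun x => ¬ ε (partner M x) = 0).card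
        = (univ.filter fun x => ε x = 1).card :=
      Finset.card_filter_add_card_filter_not _
    have hcongr : ((univ.filter fun x => ε x = 1).filter fun x => ¬ ε (partner M x) = 0)
        = ((univ.filter fun x => ε x = 1).filter fun x => ε (partner M x) = 1) := by
      apply Finset.filter_congr
      intro x _
      exact (zmod2_eq_one_iff _).symm
    rw [hcongr, Finset.filter_filter, Finset.filter_filter, hfibV 1] at hsp
    rw [hc, Nat.odd_iff]
    rw [Nat.even_iff] at heven
    have hko := Nat.odd_iff.mp hkodd
    omega
  -- the involution M ↦ sM has no fixed factor
  have hnfix : ∀ M, M ∈ F → Sym2.map (φ s) '' M ≠ M := by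
    intro M hM heq
    have hp := hfacM M hM
    have hcomm : ∀ x, partner M (φ s x) = φ s (partner M x) := by
      intro x
      have h1 := hpσ M hM x
      rw [heq] at h1
      rw [h1, hs2perm]
    have heven : Even ((univ.filter fun x => ε x = 1 ∧ ε (partner M x) = 0).card) := by
      refine even_card_of_free_involution _ (fun x => φ s (partner M x)) ?_ ?_ ?_
      · intro x hx
        obtain ⟨-, h1, h2⟩ := Finset.mem_filter.mp hx
        refine Finset.mem_filter.mpr ⟨Finset.mem_univ _, ?_, ?_⟩
        · show ε (φ s (partner M x)) = 1
          rw [hεφ, hπs, h2, add_zero]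
        · show ε (partner M (φ s (partner M x))) = 0
          rw [hcomm, partner_invol hp, hεφ, hπs, h1]
          exact zmod2_one_add_one
      · intro x _
        show φ s (partner M (φ s (partner M x))) = x
        rw [hcomm, partner_invol hp, hs2perm]
      · intro x _
        intro hcon
        have hcon' : φ s (partner M x) = x := hcon
        have h2 : partner M x = φ s x := by
          have h4 := congrArg (φ s) hcon'
          rwa [hs2perm] at h4
        have h3 := partner_adj hp x
        rw [h2] at h3
        exact h3 (hsfix1 x).symm
    have hodd := hcodd M hM
    rw [hc, Nat.odd_iff] at hodd
    rw [Nat.even_iff] at heven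
    omega
  -- c is invariant under the involution
  have hcσ : ∀ M, M ∈ F → c (Sym2.map (φ s) '' M) = c M := by
    intro M hM
    have hp := hfacM M hM
    rw [hc, hc]
    refine Finset.card_bij' (fun x _ => partner M (φ s x))
      (fun x _ => φ s (partner M x)) ?_ ?_ ?_ ?_
    · intro x hx
      obtain ⟨-, h1, h2⟩ := Finset.mem_filter.mp hx
      rw [hpσ M hM x, hεφ, hπs] at h2
      refine Finset.mem_filter.mpr ⟨Finset.mem_univ _, ?_, ?_⟩
      · exact zmod2_of_one_add_eq_zero _ h2
      · show ε (partner M (partner M (φ s x))) = 0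
        rw [partner_invol hp, hεφ, hπs, h1]
        exact zmod2_one_add_one
    · intro x hx
      obtain ⟨-, h1, h2⟩ := Finset.mem_filter.mp hx
      refine Finset.mem_filter.mpr ⟨Finset.mem_univ _, ?_, ?_⟩
      · show ε (φ s (partner M x)) = 1
        rw [hεφ, hπs, h2, add_zero]
      · show ε (partner (Sym2.map (φ s) '' M) (φ s (partner M x))) = 0
        rw [hpσ M hM, hs2perm, partner_invol hp, hεφ, hπs, h1]
        exact zmod2_one_add_one
    · intro x _
      show φ s (partner M (partner M (φ s x))) = x
      rw [partner_invol hp, hs2perm]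
    · intro x _
      show partner M (φ s (φ s (partner M x))) = x
      rw [hs2perm, partner_invol hp]
  -- the number of factors
  have hFFcard : FF.card = 2 * k - 2 * d := by
    have hsp : ((univ : Finset (Fin m × Fin (2 * d))).filter fun y => y.1 = v₀.1).card
        + ((univ : Finset (Fin m × Fin (2 * d))).filter fun y => ¬ y.1 = v₀.1).card
        = (univ : Finset (Fin m × Fin (2 * d))).card :=
      Finset.card_filter_add_card_filter_not _
    rw [Finset.card_univ, hcardV, hpartcard v₀] at hsp
    have hbj : FF.card = ((univ : Finset (Fin m × Fin (2 * d))).filter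
        fun y => ¬ y.1 = v₀.1).card := by
      refine Finset.card_bij' (fun M _ => partner M v₀) (fun y _ => fOf s(v₀, y)) ?_ ?_ ?_ ?_
      · intro M hM
        refine Finset.mem_filter.mpr ⟨Finset.mem_univ _, ?_⟩
        exact fun h => (partner_adj (hfacM M ((hFF M).mp hM)) v₀) h.symm
      · intro y hy
        have hE : s(v₀, y) ∈ Γ.edgeSet := (SimpleGraph.mem_edgeSet Γ).mpr
          (fun h => (Finset.mem_filter.mp hy).2 h.symm)
        exact (hFF _).mpr (hfOf _ hE).1
      · intro M hM
        have hE : s(v₀, partner M v₀) ∈ Γ.edgeSet :=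
          (SimpleGraph.mem_edgeSet Γ).mpr (partner_adj (hfacM M ((hFF M).mp hM)) v₀)
        exact ((hfOf _ hE).2.2 M ((hFF M).mp hM)
          (partner_mem (hfacM M ((hFF M).mp hM)) v₀)).symm
      · intro y hy
        have hE : s(v₀, y) ∈ Γ.edgeSet := (SimpleGraph.mem_edgeSet Γ).mpr
          (fun h => (Finset.mem_filter.mp hy).2 h.symm)
        exact partner_eq (hfacM _ (hfOf _ hE).1) (hfOf _ hE).2.1
    omega
  -- the total crossing count
  have hT : ∑ M ∈ FF, c M = k * (k - d) := by
    have hstep1 : ∀ M ∈ FF, c M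
        = ∑ x ∈ (univ.filter fun x => ε x = 1), (if ε (partner M x) = 0 then 1 else 0) := by
      intro M _
      rw [hc, ← Finset.filter_filter]
      exact Finset.card_filter _ _
    rw [Finset.sum_congr rfl hstep1, Finset.sum_comm]
    have hinner : ∀ x, (∑ M ∈ FF, if ε (partner M x) = 0 then 1 else 0) = k - d := by
      intro x
      rw [← Finset.card_filter]
      rw [← hnbr x 0]
      refine Finset.card_bij' (fun M _ => partner M x) (fun y _ => fOf s(x, y)) ?_ ?_ ?_ ?_
      · intro M hM
        obtain ⟨hM1, hM2⟩ := Finset.mem_filter.mp hM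
        refine Finset.mem_filter.mpr ⟨Finset.mem_univ _, hM2, ?_⟩
        exact fun h => (partner_adj (hfacM M ((hFF M).mp hM1)) x) h.symm
      · intro y hy
        have hE : s(x, y) ∈ Γ.edgeSet := (SimpleGraph.mem_edgeSet Γ).mpr
          (fun h => (Finset.mem_filter.mp hy).2.2 h.symm)
        refine Finset.mem_filter.mpr ⟨(hFF _).mpr (hfOf _ hE).1, ?_⟩
        show ε (partner (fOf s(x, y)) x) = 0
        rw [partner_eq (hfacM _ (hfOf _ hE).1) (hfOf _ hE).2.1]
        exact (Finset.mem_filter.mp hy).2.1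
      · intro M hM
        obtain ⟨hM1, hM2⟩ := Finset.mem_filter.mp hM
        have hE : s(x, partner M x) ∈ Γ.edgeSet :=
          (SimpleGraph.mem_edgeSet Γ).mpr (partner_adj (hfacM M ((hFF M).mp hM1)) x)
        exact ((hfOf _ hE).2.2 M ((hFF M).mp hM1)
          (partner_mem (hfacM M ((hFF M).mp hM1)) x)).symm
      · intro y hy
        have hE : s(x, y) ∈ Γ.edgeSet := (SimpleGraph.mem_edgeSet Γ).mpr
          (fun h => (Finset.mem_filter.mp hy).2.2 h.symm)
        exact partner_eq (hfacM _ (hfOf _ hE).1) (hfOf _ hE).2.1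
    rw [Finset.sum_congr rfl (fun x _ => hinner x), Finset.sum_const, hfibV 1,
      smul_eq_mul]
  -- the final contradiction
  obtain ⟨i0, hi0⟩ := hd
  obtain ⟨j0, hj0⟩ : ∃ j0, m = 4 * j0 + 3 := ⟨m / 4, by omega⟩
  have hsum0 : ∑ M ∈ FF, ((c M : ZMod 4) - 1) = 0 := by
    refine Finset.sum_involution (fun M _ => Sym2.map (φ s) '' M) ?_ ?_ ?_ ?_
    · intro M hM
      rw [hcσ M ((hFF M).mp hM)]
      obtain ⟨t0, ht0⟩ := hcodd M ((hFF M).mp hM)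
      rw [ht0]
      have h4 : ((2 * t0 + 1 : ℕ) : ZMod 4) - 1 + (((2 * t0 + 1 : ℕ) : ZMod 4) - 1)
          = ((4 : ℕ) : ZMod 4) * (t0 : ZMod 4) := by push_cast; ring
      rw [h4, ZMod.natCast_self, zero_mul]
    · intro M hM _
      exact hnfix M ((hFF M).mp hM)
    · intro M hM
      exact (hFF _).mpr (hmap s M ((hFF M).mp hM))
    · intro M hM
      show Sym2.map (φ s) '' (Sym2.map (φ s) '' M) = M
      have hid : ∀ z : Sym2 (Fin m × Fin (2 * d)),
          Sym2.map (φ s) (Sym2.map (φ s) z) = z := by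
        intro z
        induction z using Sym2.ind with
        | _ a b => rw [Sym2.map_pair_eq, Sym2.map_pair_eq, hs2perm, hs2perm]
      rw [Set.image_image]
      have hfun : (fun z => Sym2.map (φ s) (Sym2.map (φ s) z))
          = (id : Sym2 (Fin m × Fin (2 * d)) → Sym2 (Fin m × Fin (2 * d))) := funext hid
      rw [hfun, Set.image_id]
  have hsum1 : ((∑ M ∈ FF, c M : ℕ) : ZMod 4) = ((FF.card : ℕ) : ZMod 4) := by
    rw [Nat.cast_sum]
    have hrw : ∀ M ∈ FF, ((c M : ℕ) : ZMod 4) = ((c M : ZMod 4) - 1) + 1 :=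
      fun M _ => by ring
    rw [Finset.sum_congr rfl hrw, Finset.sum_add_distrib, hsum0, zero_add,
      Finset.sum_const, nsmul_eq_mul, mul_one]
  rw [hT, hFFcard] at hsum1
  have hmod : k * (k - d) % 4 = (2 * k - 2 * d) % 4 :=
    (ZMod.natCast_eq_natCast_iff _ _ _).mp hsum1
  have e1 : k * (k - d) % 4 = 2 := by
    have hsub : k - d = (m - 1) * d := by rw [hk, Nat.sub_mul, one_mul]
    rw [hsub, hk, hj0, hi0]
    have h31 : 4 * j0 + 3 - 1 = 4 * j0 + 2 := by omega
    rw [h31]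
    have hXeq : (4 * j0 + 3) * (2 * i0 + 1) * ((4 * j0 + 2) * (2 * i0 + 1))
        = 4 * (16 * i0^2 * j0^2 + 20 * i0^2 * j0 + 6 * i0^2 + 16 * i0 * j0^2
          + 20 * i0 * j0 + 6 * i0 + 4 * j0^2 + 5 * j0 + 1) + 2 := by ring
    rw [hXeq]
    omega
  have e2 : (2 * k - 2 * d) % 4 = 0 := by
    have h1 : 2 * k = 4 * ((2 * j0 + 1) * d) + 2 * d := by rw [hk, hj0]; ring
    omega
  omega
end

section
/- If the complete multipartite graph K_{m×n} admits a 1-factorization with the cyclic group Z_{mn} as an automorphism group acting sharply transitively on the vertex set, then the complete multipartite graph K_{m×2n} admits a 1-factorization with the abelian group Z_{mn} × Z_2 as an automorphism group acting sharply transitively on the vertex set. -/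
open SimpleGraph

section Aux

/-- Transport a regular one-factorization along a group isomorphism. -/
lemma regular_of_mulEquiv {V : Type*} {Γ : SimpleGraph V} {A B : Type*} [Group A] [Group B]
    (e : B ≃* A) (h : HasRegularOneFactorization Γ A) :
    HasRegularOneFactorization Γ B := by
  obtain ⟨φ, F, hF, hadj, hmap, hreg⟩ := h
  refine ⟨φ.comp e.toMonoidHom, F, hF, fun a => hadj (e a), fun a => hmap (e a), ?_⟩
  intro u v
  obtain ⟨a, ha, hu⟩ := hreg u v
  refine ⟨e.symm a, by simpa using ha, fun b hb => ?_⟩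
  have hb' : e b = a := hu (e b) hb
  rw [← hb', MulEquiv.symm_apply_apply]

/-- Transport a regular one-factorization along a graph isomorphism. -/
lemma regular_congr {V W : Type*} (e : V ≃ W) {Γ : SimpleGraph V} {Δ : SimpleGraph W}
    (he : ∀ u v, Δ.Adj (e u) (e v) ↔ Γ.Adj u v)
    {A : Type*} [Group A] (h : HasRegularOneFactorization Γ A) :
    HasRegularOneFactorization Δ A := by
  obtain ⟨φ, F, ⟨hfac, hedge⟩, hadj, hmap, hreg⟩ := h
  let φ' : A →* Equiv.Perm W :=
    { toFun := fun a => e.symm.trans ((φ a).trans e)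
      map_one' := by ext w; simp
      map_mul' := fun a b => by ext w; simp [Equiv.Perm.mul_apply] }
  have hφ' : ∀ a w, φ' a w = e (φ a (e.symm w)) := fun a w => rfl
  refine ⟨φ', (fun M => Sym2.map e '' M) '' F, ⟨?_, ?_⟩, ?_, ?_, ?_⟩
  · rintro N ⟨M, hM, rfl⟩
    obtain ⟨hsub, hcov⟩ := hfac M hM
    constructor
    · rintro E' ⟨E0, hE0, rfl⟩
      induction E0 using Sym2.ind with
      | _ u v =>
        rw [Sym2.map_pair_eq, mem_edgeSet, he]
        exact (mem_edgeSet Γ).1 (hsub hE0)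
    · intro w
      obtain ⟨E, ⟨hEM, hvE⟩, hEu⟩ := hcov (e.symm w)
      refine ⟨Sym2.map e E, ⟨⟨E, hEM, rfl⟩, ?_⟩, ?_⟩
      · exact Sym2.mem_map.2 ⟨e.symm w, hvE, e.apply_symm_apply w⟩
      · rintro E' ⟨⟨E0, hE0, rfl⟩, hwE0⟩
        obtain ⟨x, hx, hxw⟩ := Sym2.mem_map.1 hwE0
        have hxe : x = e.symm w := by rw [← hxw]; simp
        subst hxe
        rw [hEu E0 ⟨hE0, hx⟩]
  · intro E hE
    induction E using Sym2.ind with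
    | _ w1 w2 =>
      rw [mem_edgeSet] at hE
      have hΓ : Γ.Adj (e.symm w1) (e.symm w2) := by
        rw [← he]; simpa using hE
      obtain ⟨M, ⟨hMF, hEM⟩, hMu⟩ := hedge s(e.symm w1, e.symm w2) ((mem_edgeSet Γ).2 hΓ)
      have hrepr : s(w1, w2) = Sym2.map e s(e.symm w1, e.symm w2) := by
        rw [Sym2.map_pair_eq]; simp
      refine ⟨Sym2.map e '' M, ⟨⟨M, hMF, rfl⟩, ⟨_, hEM, hrepr.symm⟩⟩, ?_⟩
      rintro N ⟨⟨M0, hM0, rfl⟩, hEN⟩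
      obtain ⟨E0, hE0, hE0eq⟩ := hEN
      have hinj : Function.Injective (Sym2.map e) := Sym2.map.injective e.injective
      have hEq : E0 = s(e.symm w1, e.symm w2) := hinj (by rw [hE0eq, ← hrepr])
      subst hEq
      rw [hMu M0 ⟨hM0, hE0⟩]
  · intro a u v
    rw [hφ', hφ', he, hadj, ← he]
    simp
  · rintro a N ⟨M, hM, rfl⟩
    refine ⟨Sym2.map (φ a) '' M, hmap a M hM, ?_⟩
    have key : ∀ E : Sym2 V,
        Sym2.map ⇑e (Sym2.map (⇑(φ a)) E) = Sym2.map (⇑(φ' a)) (Sym2.map (⇑e) E) := by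
      intro E
      induction E using Sym2.ind with
      | _ x y => simp [hφ', Sym2.map_pair_eq]
    show Sym2.map ⇑e '' (Sym2.map ⇑(φ a) '' M) = Sym2.map ⇑(φ' a) '' (Sym2.map ⇑e '' M)
    rw [Set.image_image, Set.image_image]
    exact Set.image_congr' key
  · intro u v
    obtain ⟨a, ha, hu⟩ := hreg (e.symm u) (e.symm v)
    refine ⟨a, ?_, fun b hb => ?_⟩
    · show φ' a u = v
      rw [hφ', ha]; simp
    · have hb2 : φ' b u = v := hb
      refine hu b ?_
      show φ b (e.symm u) = e.symm v
      rw [hφ'] at hb2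
      simpa using congrArg e.symm hb2

/-- The "double" of a graph: two copies of each vertex; adjacency only depends on
the underlying vertices. -/
def double {V : Type*} (Γ : SimpleGraph V) : SimpleGraph (V × ZMod 2) where
  Adj u v := Γ.Adj u.1 v.1
  symm := ⟨fun _ _ h => Γ.adj_symm h⟩
  loopless := ⟨fun u h => Γ.irrefl h⟩

/-- Lift of a set of edges to the double: `c = 0` gives parallel edges,
`c = 1` gives crossed edges. -/
def liftFactor {V : Type*} (c : ZMod 2) (M : Set (Sym2 V)) : Set (Sym2 (V × ZMod 2)) :=
  {E | ∃ u v i, s(u, v) ∈ M ∧ E = s((u, i), (v, i + c))}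

lemma regular_double {V : Type*} {Γ : SimpleGraph V} {A : Type*} [Group A]
    (h : HasRegularOneFactorization Γ A) :
    HasRegularOneFactorization (double Γ) (A × Multiplicative (ZMod 2)) := by
  classical
  obtain ⟨φ, F, ⟨hfac, hedge⟩, hadj, hmap, hreg⟩ := h
  have hz1 : ∀ x c : ZMod 2, x + c + c = x := by decide
  have hz2 : ∀ i j : ZMod 2, i + (i + j) = j := by decide
  have hz3 : ∀ x t c : ZMod 2, x + t + c + t = x + c := by decide
  have hz4 : ∀ i j : ZMod 2, i + (j - i) = j := by decide
  have hz5 : ∀ i t : ZMod 2, i + t - i = t := by decide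
  have hz6 : ∀ j c : ZMod 2, j + c + j = c := by decide
  let ψ : A × Multiplicative (ZMod 2) →* Equiv.Perm (V × ZMod 2) :=
    { toFun := fun g => Equiv.prodCongr (φ g.1) (Equiv.addRight g.2.toAdd)
      map_one' := by ext x <;> simp
      map_mul' := fun g h => by
        ext x <;>
          simp [Equiv.Perm.mul_apply, add_comm, add_left_comm, add_assoc] }
  have hψ : ∀ g x, ψ g x = (φ g.1 x.1, x.2 + g.2.toAdd) := fun g x => rfl
  refine ⟨ψ, {N | ∃ c M, M ∈ F ∧ N = liftFactor c M}, ⟨?_, ?_⟩, ?_, ?_, ?_⟩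
  · rintro N ⟨c, M, hM, rfl⟩
    obtain ⟨hsub, hcov⟩ := hfac M hM
    constructor
    · rintro E ⟨u, v, i, huv, rfl⟩
      rw [mem_edgeSet]
      exact (mem_edgeSet Γ).1 (hsub huv)
    · rintro ⟨w, k⟩
      obtain ⟨E, ⟨hEM, hwE⟩, hEu⟩ := hcov w
      set z := Sym2.Mem.other hwE with hzdef
      have hspec : s(w, z) = E := Sym2.other_spec hwE
      have hwz : w ≠ z := by
        intro hzz
        have hE' : E ∈ Γ.edgeSet := hsub hEM
        rw [← hspec, ← hzz] at hE'
        exact Γ.irrefl ((mem_edgeSet Γ).1 hE')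
      refine ⟨s((w, k), (z, k + c)),
        ⟨⟨w, z, k, by rw [hspec]; exact hEM, rfl⟩, Sym2.mem_mk_left _ _⟩, ?_⟩
      rintro E' ⟨⟨u, v, i, huv, rfl⟩, hmem⟩
      rw [Sym2.mem_iff] at hmem
      rcases hmem with h1 | h2
      · rw [Prod.mk.injEq] at h1
        obtain ⟨h1a, h1b⟩ := h1
        subst h1a; subst h1b
        have huvE : s(w, v) = E := hEu s(w, v) ⟨huv, Sym2.mem_mk_left _ _⟩
        rw [← hspec, Sym2.eq_iff] at huvE
        rcases huvE with ⟨-, rfl⟩ | ⟨hwz', rfl⟩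
        · rfl
        · exact absurd hwz' hwz
      · rw [Prod.mk.injEq] at h2
        obtain ⟨h2a, h2b⟩ := h2
        subst h2a
        have hik : i = k + c := by rw [h2b, hz1]
        subst hik
        have huvE : s(u, w) = E := hEu s(u, w) ⟨huv, Sym2.mem_mk_right _ _⟩
        rw [← hspec, Sym2.eq_iff] at huvE
        rcases huvE with ⟨rfl, hwz'⟩ | ⟨rfl, -⟩
        · exact absurd hwz' hwz
        · rw [hz1]
          exact Sym2.eq_swap
  · intro E hE
    induction E using Sym2.ind with
    | _ x y =>
      obtain ⟨u, i⟩ := x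
      obtain ⟨v, j⟩ := y
      rw [mem_edgeSet] at hE
      have hΓ : Γ.Adj u v := hE
      obtain ⟨M, ⟨hMF, hEM⟩, hMu⟩ := hedge s(u, v) ((mem_edgeSet Γ).2 hΓ)
      refine ⟨liftFactor (i + j) M,
        ⟨⟨i + j, M, hMF, rfl⟩, ⟨u, v, i, hEM, by rw [hz2]⟩⟩, ?_⟩
      rintro N ⟨⟨c, M', hM', rfl⟩, ⟨u', v', i', hu'v', hEeq⟩⟩
      rw [Sym2.eq_iff] at hEeq
      rcases hEeq with ⟨h1, h2⟩ | ⟨h1, h2⟩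
      · rw [Prod.mk.injEq] at h1 h2
        obtain ⟨h1a, h1b⟩ := h1
        obtain ⟨h2a, h2b⟩ := h2
        subst h1a; subst h1b; subst h2a
        have hc : i + j = c := by rw [h2b, hz2]
        rw [hMu M' ⟨hM', hu'v'⟩, ← hc]
      · rw [Prod.mk.injEq] at h1 h2
        obtain ⟨h1a, h1b⟩ := h1
        obtain ⟨h2a, h2b⟩ := h2
        subst h1a; subst h2a; subst h2b
        have hM'M : M' = M := hMu M' ⟨hM', by rw [Sym2.eq_swap]; exact hu'v'⟩
        have hc : i + j = c := by rw [h1b, hz6]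
        rw [hM'M, ← hc]
  · intro g u v
    exact hadj g.1 u.1 v.1
  · rintro g N ⟨c, M, hM, rfl⟩
    refine ⟨c, Sym2.map (φ g.1) '' M, hmap g.1 M hM, ?_⟩
    ext E
    constructor
    · rintro ⟨E0, ⟨u, v, i, huv, rfl⟩, rfl⟩
      refine ⟨φ g.1 u, φ g.1 v, i + g.2.toAdd,
        ⟨s(u, v), huv, Sym2.map_pair_eq _ _ _⟩, ?_⟩
      rw [Sym2.map_pair_eq, hψ, hψ]
      simp [add_comm, add_left_comm, add_assoc]
    · rintro ⟨u', v', i', ⟨E0, hE0M, hmapE0⟩, rfl⟩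
      induction E0 using Sym2.ind with
      | _ p q =>
        rw [Sym2.map_pair_eq, Sym2.eq_iff] at hmapE0
        rcases hmapE0 with ⟨hu, hv⟩ | ⟨hu, hv⟩
        · refine ⟨s((p, i' + g.2.toAdd), (q, i' + g.2.toAdd + c)),
            ⟨p, q, i' + g.2.toAdd, hE0M, rfl⟩, ?_⟩
          rw [Sym2.map_pair_eq, hψ, hψ, hu, hv]
          rw [hz1, hz3]
        · refine ⟨s((q, i' + g.2.toAdd), (p, i' + g.2.toAdd + c)),
            ⟨q, p, i' + g.2.toAdd, by rw [Sym2.eq_swap]; exact hE0M, rfl⟩, ?_⟩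
          rw [Sym2.map_pair_eq, hψ, hψ, hu, hv]
          rw [hz1, hz3]
  · rintro ⟨u, i⟩ ⟨v, j⟩
    obtain ⟨a, ha, hau⟩ := hreg u v
    refine ⟨(a, Multiplicative.ofAdd (j - i)), ?_, ?_⟩
    · show (φ a u, i + (j - i)) = (v, j)
      rw [ha, hz4]
    · rintro ⟨b, t⟩ hb
      rw [hψ] at hb
      rw [Prod.mk.injEq] at hb
      obtain ⟨hb1, hb2⟩ := hb
      have hba : b = a := hau b hb1
      subst hba
      have ht : t.toAdd = j - i := by rw [← hb2, hz5]
      rw [Prod.mk.injEq]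
      exact ⟨rfl, Multiplicative.toAdd.injective (by simpa using ht)⟩

end Aux

/-- If `K_{m×n}` has a 1-factorization with `Z_{mn}` acting sharply transitively on the
vertices, then `K_{m×2n}` has a 1-factorization with `Z_{mn} × Z_2` acting sharply
transitively on the vertices. -/
theorem doubling_oneFactorization (m n : ℕ) (hn : 2 ≤ n)
    (h : HasRegularOneFactorization (completeMultipartite m n)
        (Multiplicative (ZMod (m * n)))) :
    HasRegularOneFactorization (completeMultipartite m (2 * n))
      (Multiplicative (ZMod (m * n) × ZMod 2)) := by
  have h2 := regular_double h
  have h3 := regular_of_mulEquiv (MulEquiv.prodMultiplicative (G := ZMod (m * n)) (H := ZMod 2)) h2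
  let e2 : Fin n × ZMod 2 ≃ Fin (2 * n) :=
    (Equiv.prodComm (Fin n) (ZMod 2)).trans
      (finProdFinEquiv : Fin 2 × Fin n ≃ Fin (2 * n))
  let E : (Fin m × Fin n) × ZMod 2 ≃ Fin m × Fin (2 * n) :=
    (Equiv.prodAssoc (Fin m) (Fin n) (ZMod 2)).trans
      ((Equiv.refl (Fin m)).prodCongr e2)
  apply regular_congr E ?_ h3
  intro u v
  show (E u).1 ≠ (E v).1 ↔ u.1.1 ≠ v.1.1
  have hfst : ∀ w : (Fin m × Fin n) × ZMod 2, (E w).1 = w.1.1 := fun w => rfl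
  rw [hfst, hfst]
end
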